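/- arXiv:math/0401304 — 4 statements merged into one kernel-verified Lean document; each statement's English description precedes it below -/
import Mathlib

section
/- If Ω is an infinite set and (G_i)_{i∈I} is a chain of subgroups of Sym(Ω) with ⋃_{i∈I} G_i = Sym(Ω) and |I| ≤ |Ω|, then G_i = Sym(Ω) for some i ∈ I. -/
set_option maxHeartbeats 1000000
open Equiv Cardinal
open scoped commutatorElement
universe u
namespace MN
attribute [local instance] Classical.propDecidable
noncomputable section

variable {I : Type u} {Ω : Type u}

abbrev Cc (Ω : Type u) : Type u := ULift.{u} ℤ × Ω
abbrev Mod (I Ω : Type u) : Type u := Option I × Cc Ω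

/-- fiberwise permutation of `Mod` -/
def fib (F : Option I → Perm (Cc Ω)) : Perm (Mod I Ω) where
  toFun x := (x.1, F x.1 x.2)
  invFun x := (x.1, (F x.1)⁻¹ x.2)
  left_inv x := by simp
  right_inv x := by simp

@[simp] lemma fib_apply (F : Option I → Perm (Cc Ω)) (x : Mod I Ω) :
    fib F x = (x.1, F x.1 x.2) := rfl

lemma fib_mul (F G : Option I → Perm (Cc Ω)) :
    fib F * fib G = fib (fun o => F o * G o) := by
  ext x <;> simp [fib, Perm.mul_apply]

lemma fib_inv (F : Option I → Perm (Cc Ω)) :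
    (fib F)⁻¹ = fib (fun o => (F o)⁻¹) := rfl

lemma fib_congr {F G : Option I → Perm (Cc Ω)} (h : ∀ o, F o = G o) : fib F = fib G := by
  have : F = G := funext h
  rw [this]

/-- swap `none ↔ some i` in the first coordinate -/
def swapo (i : I) : Option I → Option I := fun o =>
  match o with
  | none => some i
  | some j => if j = i then none else some j

lemma swapo_invol (i : I) (o : Option I) : swapo i (swapo i o) = o := by
  match o with
  | none => simp [swapo]
  | some j =>
    by_cases h : j = i <;> simp [swapo, h]

def oswap (i : I) : Equiv.Perm (Option I) :=
  ⟨swapo i, swapo i, swapo_invol i, swapo_invol i⟩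

def pihat (i : I) : Perm (Mod I Ω) := Equiv.prodCongr (oswap i) (Equiv.refl _)

@[simp] lemma pihat_apply (i : I) (x : Mod I Ω) : pihat i x = (swapo i x.1, x.2) := rfl

lemma pihat_conj (i : I) (F : Option I → Perm (Cc Ω)) :
    pihat i * fib F * pihat i = fib (fun o => F (swapo i o)) := by
  ext x <;> simp [Perm.mul_apply, swapo_invol]

def master (z : I → Perm (Cc Ω)) : Perm (Mod I Ω) := fib (fun o => o.elim 1 z)

def mir (i : I) (u : Perm (Cc Ω)) : Perm (Mod I Ω) :=
  fib (fun o => if o = none then u else if o = some i then u⁻¹ else 1)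

def sl (u : Perm (Cc Ω)) : Perm (Mod I Ω) :=
  fib (fun o => if o = none then u else 1)

/-- Extraction identity -/
lemma iden1 (z : I → Perm (Cc Ω)) (i : I) :
    pihat i * master z * pihat i * (master z)⁻¹ = mir i (z i) := by
  rw [master, mir, fib_inv, pihat_conj, fib_mul]
  apply fib_congr
  intro o
  match o with
  | none => simp [swapo]
  | some j =>
    by_cases h : j = i
    · simp [swapo, h]
    · simp [swapo, h, Option.some_inj]

/-- Commutator identity -/
lemma iden2 (i : I) (a b : Perm (Cc Ω)) :
    mir i a * mir i b * (mir i (b * a))⁻¹ = (sl ⁅a, b⁆ : Perm (Mod I Ω)) := by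
  rw [mir, mir, mir, sl, fib_inv, fib_mul, fib_mul]
  apply fib_congr
  intro o
  by_cases h : o = none
  · simp only [h, if_pos rfl]
    simp [commutatorElement_def, mul_inv_rev]
    group
  · by_cases h2 : o = some i
    · subst h2
      simp only [reduceCtorEq, if_false, if_pos rfl, if_true]
      group
    · simp [h, h2]


/-- fiberwise permutation of the cell `Cc Ω` -/
def cfib (F : ULift.{u} ℤ → Perm Ω) : Perm (Cc Ω) where
  toFun c := (c.1, F c.1 c.2)
  invFun c := (c.1, (F c.1)⁻¹ c.2)
  left_inv c := by simp
  right_inv c := by simp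

@[simp] lemma cfib_apply (F : ULift.{u} ℤ → Perm Ω) (n : ULift.{u} ℤ) (x : Ω) :
    cfib F (n, x) = (n, F n x) := rfl

lemma cfib_inv (F : ULift.{u} ℤ → Perm Ω) : (cfib F)⁻¹ = cfib (fun n => (F n)⁻¹) := rfl

def cell0 (u : Perm Ω) : Perm (Cc Ω) := cfib (fun n => if n.down = 0 then u else 1)

@[simp] lemma cell0_apply (u : Perm Ω) (n : ULift.{u} ℤ) (x : Ω) :
    cell0 u (n, x) = (n, if n.down = 0 then u x else x) := by
  rw [cell0, cfib_apply, apply_ite (fun (p : Perm Ω) => p x)]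
  rfl

def shiftZ : Perm (ULift.{u} ℤ) where
  toFun n := ⟨n.down + 1⟩
  invFun n := ⟨n.down - 1⟩
  left_inv n := by simp
  right_inv n := by simp

def shiftC : Perm (Cc Ω) := Equiv.prodCongr shiftZ (Equiv.refl _)

@[simp] lemma shiftC_apply (n : ULift.{u} ℤ) (x : Ω) : (shiftC (n, x) : Cc Ω) = (⟨n.down + 1⟩, x) := rfl
@[simp] lemma shiftC_inv_apply (n : ULift.{u} ℤ) (x : Ω) :
    ((shiftC⁻¹ : Perm (Cc Ω)) (n, x) : Cc Ω) = (⟨n.down - 1⟩, x) := rfl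

/-- the infinite swindle: every `cell0 u` is a commutator -/
lemma swindle (u : Perm Ω) :
    ∃ a b : Perm (Cc Ω), ⁅a, b⁆ = cell0 u := by
  refine ⟨cfib (fun n => if 0 ≤ n.down then u else 1), shiftC, ?_⟩
  apply Equiv.ext
  rintro ⟨n, x⟩
  rw [commutatorElement_def]
  simp only [Perm.mul_apply, cfib_inv, shiftC_inv_apply, cfib_apply, shiftC_apply, cell0_apply]
  have e1 : n.down - 1 + 1 = n.down := by omega
  by_cases h0 : n.down = 0
  · have h1 : ¬ (0 ≤ n.down - 1) := by omega
    simp only [h0, h1, e1, if_false, if_pos (le_refl (0:ℤ)), if_pos rfl]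
    have h3 : n = (⟨0⟩ : ULift.{u} ℤ) := ULift.down_injective h0
    subst h3
    simp
  · by_cases h1 : 0 ≤ n.down - 1
    · have h2 : 0 ≤ n.down := by omega
      simp [h1, h2, e1, h0, (by omega : 1 ≤ n.down)]
    · have h2 : ¬ (0 ≤ n.down) := by omega
      simp [h1, h2, e1, h0, (by simp only [eq_iff_iff, iff_false]; omega : (1 ≤ n.down) = False)]

@[simp] lemma sl_apply_pair (u : Perm (Cc Ω)) (o : Option I) (c : Cc Ω) :
    (sl u : Perm (Mod I Ω)) (o, c) = (o, if o = none then u c else c) := by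
  rw [sl, fib_apply, apply_ite (fun (p : Perm (Cc Ω)) => p c)]
  rfl

def Lam (I Ω : Type u) : Set (Mod I Ω) := {x | x.1 = none ∧ x.2.1.down = 0}

/-- extraction: a permutation supported in `Lam` is `sl (cell0 u)` -/
lemma extract_lam (g : Perm (Mod I Ω)) (hg : ∀ x ∉ Lam I Ω, g x = x) :
    ∃ u : Perm Ω, g = sl (cell0 u) := by
  have hginv : ∀ x ∉ Lam I Ω, g⁻¹ x = x := by
    intro x hx
    have := hg x hx
    conv_lhs => rw [← this]
    simp
  have claim : ∀ (h : Perm (Mod I Ω)), (∀ x ∉ Lam I Ω, h x = x) →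
      ∀ w : Ω, h (none, ⟨0⟩, w) = (none, ⟨0⟩, (h (none, ⟨0⟩, w)).2.2) := by
    intro h hh w
    by_cases hy : h (none, ⟨0⟩, w) ∈ Lam I Ω
    · obtain ⟨h1, h2⟩ := hy
      have h3 : (h (none, ⟨0⟩, w)).2.1 = (⟨0⟩ : ULift.{u} ℤ) := ULift.down_injective h2
      calc h (none, ⟨0⟩, w)
          = ((h (none, ⟨0⟩, w)).1, (h (none, ⟨0⟩, w)).2.1, (h (none, ⟨0⟩, w)).2.2) := rfl
        _ = (none, ⟨0⟩, (h (none, ⟨0⟩, w)).2.2) := by rw [h1, h3]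
    · exfalso
      have h1 := hh _ hy
      have := h.injective (h1 : h (h (none, ⟨0⟩, w)) = h (none, ⟨0⟩, w))
      rw [this] at hy
      exact hy ⟨rfl, rfl⟩
  refine ⟨⟨fun w => (g (none, ⟨0⟩, w)).2.2, fun w => (g⁻¹ (none, ⟨0⟩, w)).2.2, ?_, ?_⟩, ?_⟩
  · intro w
    simp only
    conv_lhs => rw [← claim g hg w]
    rw [Perm.inv_def, Equiv.symm_apply_apply]
  · intro w
    simp only
    conv_lhs => rw [← claim g⁻¹ hginv w]
    rw [Perm.inv_def, Equiv.apply_symm_apply]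
  · apply Equiv.ext
    rintro ⟨o, n, x⟩
    rw [show ((o, n, x) : Mod I Ω) = (o, ((n, x) : Cc Ω)) from rfl, sl_apply_pair]
    by_cases h1 : o = none
    · subst h1
      rw [if_pos rfl, cell0_apply]
      by_cases h2 : n.down = 0
      · have h3 : n = (⟨0⟩ : ULift.{u} ℤ) := ULift.down_injective h2
        subst h3
        rw [claim g hg x, if_pos h2]
        rfl
      · rw [if_neg h2, hg (none, n, x) (by rintro ⟨-, hc⟩; exact h2 hc)]
    · rw [if_neg h1, hg (o, n, x) (by rintro ⟨hc, -⟩; exact h1 hc)]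

section SetHelpers
variable {X : Type u}

/-- a permutation carrying `P` exactly onto `Q` -/
lemma perm_between {P Q : Set X} (h1 : #P = #Q) (h2 : #(Pᶜ : Set X) = #(Qᶜ : Set X)) :
    ∃ v : Perm X, ∀ x, x ∈ P ↔ v x ∈ Q := by
  obtain ⟨e⟩ := Cardinal.eq.mp h1
  obtain ⟨e'⟩ := Cardinal.eq.mp h2
  refine ⟨(Equiv.Set.sumCompl P).symm.trans ((e.sumCongr e').trans (Equiv.Set.sumCompl Q)), ?_⟩
  intro x
  by_cases hx : x ∈ P
  · simp only [Equiv.trans_apply, Equiv.Set.sumCompl_symm_apply_of_mem hx,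
      Equiv.sumCongr_apply, Sum.map_inl, Equiv.Set.sumCompl_apply_inl]
    exact ⟨fun _ => (e ⟨x, hx⟩).2, fun _ => hx⟩
  · simp only [Equiv.trans_apply, Equiv.Set.sumCompl_symm_apply_of_notMem hx,
      Equiv.sumCongr_apply, Sum.map_inr, Equiv.Set.sumCompl_apply_inr]
    exact ⟨fun h => absurd h hx, fun h => absurd h (e' ⟨x, hx⟩).2⟩

/-- a permutation supported on `A` carrying `P` exactly onto `Q` -/
lemma perm_on {A P Q : Set X} (hPA : P ⊆ A) (hQA : Q ⊆ A)
    (h1 : #P = #Q) (h2 : #(A \ P : Set X) = #(A \ Q : Set X)) :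
    ∃ v : Perm X, (∀ x, x ∉ A → v x = x) ∧ (∀ x, x ∈ P ↔ v x ∈ Q) := by
  classical
  set P' : Set (↥A) := {a | (a : X) ∈ P} with hP'
  set Q' : Set (↥A) := {a | (a : X) ∈ Q} with hQ'
  have eP : #P' = #P := by
    apply Cardinal.mk_congr
    exact ⟨fun a => ⟨a.1.1, a.2⟩, fun x => ⟨⟨x.1, hPA x.2⟩, x.2⟩,
      fun a => by ext; rfl, fun x => by ext; rfl⟩
  have eQ : #Q' = #Q := by
    apply Cardinal.mk_congr
    exact ⟨fun a => ⟨a.1.1, a.2⟩, fun x => ⟨⟨x.1, hQA x.2⟩, x.2⟩,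
      fun a => by ext; rfl, fun x => by ext; rfl⟩
  have e18 : #(P'ᶜ : Set ↥A) = #(A \ P : Set X) := by
    apply Cardinal.mk_congr
    exact ⟨fun a => ⟨a.1.1, a.1.2, a.2⟩, fun x => ⟨⟨x.1, x.2.1⟩, x.2.2⟩,
      fun a => by ext; rfl, fun x => by ext; rfl⟩
  have eQc : #(Q'ᶜ : Set ↥A) = #(A \ Q : Set X) := by
    apply Cardinal.mk_congr
    exact ⟨fun a => ⟨a.1.1, a.1.2, a.2⟩, fun x => ⟨⟨x.1, x.2.1⟩, x.2.2⟩,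
      fun a => by ext; rfl, fun x => by ext; rfl⟩
  obtain ⟨w, hw⟩ := perm_between (P := P') (Q := Q')
    (by rw [eP, eQ, h1]) (by rw [e18, eQc, h2])
  refine ⟨w.extendDomain (Equiv.refl ↥A), ?_, ?_⟩
  · intro x hx
    exact Perm.extendDomain_apply_not_subtype w (Equiv.refl ↥A) hx
  · intro x
    by_cases hx : x ∈ A
    · rw [Perm.extendDomain_apply_subtype w (Equiv.refl ↥A) hx]
      exact hw ⟨x, hx⟩
    · rw [Perm.extendDomain_apply_not_subtype w (Equiv.refl ↥A) hx]
      exact ⟨fun h => absurd (hPA h) hx, fun h => absurd (hQA h) hx⟩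

/-- split an infinite set into two pieces of full size -/
lemma split_set (s : Set X) (hκ : ℵ₀ ≤ #s) :
    ∃ s₁ s₂ : Set X, s₁ ⊆ s ∧ s₂ ⊆ s ∧ (∀ x, x ∈ s₁ → x ∈ s₂ → False) ∧
      (#s₁) = #s ∧ #s₂ = #s := by
  classical
  have h2s : #(Bool × ↥s) = #(↥s) := by
    have e1 : #(Bool × ↥s) = #(↥s ⊕ ↥s) := Cardinal.mk_congr (Equiv.boolProdEquivSum _)
    rw [e1, Cardinal.mk_sum, Cardinal.lift_id]
    exact Cardinal.add_eq_self hκ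
  obtain ⟨φ⟩ := Cardinal.eq.mp h2s.symm
  refine ⟨Subtype.val '' {a : ↥s | (φ a).1 = true}, Subtype.val '' {a : ↥s | (φ a).1 = false},
    ?_, ?_, ?_, ?_, ?_⟩
  · rintro x ⟨a, -, rfl⟩; exact a.2
  · rintro x ⟨a, -, rfl⟩; exact a.2
  · rintro x ⟨a, ha, rfl⟩ ⟨b, hb, hba⟩
    have hba' : b = a := Subtype.ext hba
    subst hba'
    have ha' : (φ b).1 = true := ha
    have hb' : (φ b).1 = false := hb
    rw [ha'] at hb'
    exact Bool.noConfusion hb'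
  · rw [Cardinal.mk_image_eq Subtype.val_injective]
    apply Cardinal.mk_congr
    exact Equiv.trans
      (Equiv.subtypeEquiv (p := fun a => (φ a).1 = true)
        (q := fun p : Bool × ↥s => p.1 = true) φ (fun a => Iff.rfl))
      ⟨fun p => p.1.2, fun y => ⟨(true, y), rfl⟩,
        fun p => by rcases p with ⟨⟨b, y⟩, hb⟩; simp only at hb; subst hb; rfl,
        fun y => rfl⟩
  · rw [Cardinal.mk_image_eq Subtype.val_injective]
    apply Cardinal.mk_congr
    exact Equiv.trans
      (Equiv.subtypeEquiv (p := fun a => (φ a).1 = false)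
        (q := fun p : Bool × ↥s => p.1 = false) φ (fun a => Iff.rfl))
      ⟨fun p => p.1.2, fun y => ⟨(false, y), rfl⟩,
        fun p => by rcases p with ⟨⟨b, y⟩, hb⟩; simp only at hb; subst hb; rfl,
        fun y => rfl⟩

lemma mk_between {s t : Set X} {κ : Cardinal} (hsub : s ⊆ t) (hs : κ ≤ #s) (ht : #t ≤ κ) :
    (#t) = κ :=
  le_antisymm ht (le_trans hs (Cardinal.mk_le_mk_of_subset hsub))

end SetHelpers

section ABLemma
variable {X : Type u}

/-- If a subgroup contains all permutations supported on `T₁ ∪ T₂` and all supported on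
`T₂ ∪ T₃`, it is everything. -/
lemma AB [Infinite X] (T₁ T₂ T₃ : Set X)
    (hcov : ∀ x, x ∈ T₁ ∨ x ∈ T₂ ∨ x ∈ T₃)
    (h12 : ∀ x, x ∈ T₁ → x ∈ T₂ → False)
    (h13 : ∀ x, x ∈ T₁ → x ∈ T₃ → False)
    (h23 : ∀ x, x ∈ T₂ → x ∈ T₃ → False)
    (c1 : #T₁ = #X) (c2 : #T₂ = #X) (c3 : #T₃ = #X)
    (K : Subgroup (Perm X))
    (hA : ∀ g : Perm X, (∀ x, x ∈ T₃ → g x = x) → g ∈ K)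
    (hB : ∀ g : Perm X, (∀ x, x ∈ T₁ → g x = x) → g ∈ K) :
    ∀ f : Perm X, f ∈ K := by
  classical
  set κ := #X with hκdef
  have hκ : ℵ₀ ≤ κ := Cardinal.infinite_iff.mp ‹Infinite X›
  set A : Set X := T₁ ∪ T₂ with hAdef
  set B : Set X := T₂ ∪ T₃ with hBdef
  -- membership in A vs T₃
  have hnA : ∀ x, x ∉ A ↔ x ∈ T₃ := by
    intro x
    constructor
    · intro hx
      rcases hcov x with h | h | h
      · exact absurd (Or.inl h) hx
      · exact absurd (Or.inr h) hx
      · exact h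
    · intro hx hA'
      rcases hA' with h | h
      · exact h13 x h hx
      · exact h23 x h hx
  have hnB : ∀ x, x ∉ B ↔ x ∈ T₁ := by
    intro x
    constructor
    · intro hx
      rcases hcov x with h | h | h
      · exact h
      · exact absurd (Or.inl h) hx
      · exact absurd (Or.inr h) hx
    · intro hx hB'
      rcases hB' with h | h
      · exact h12 x hx h
      · exact h13 x hx h
  have hT1A : T₁ ⊆ A := Set.subset_union_left
  have hT2A : T₂ ⊆ A := Set.subset_union_right
  have hT2B : T₂ ⊆ B := Set.subset_union_left
  have hT3B : T₃ ⊆ B := Set.subset_union_right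
  have cA : #A = κ := mk_between hT1A (le_of_eq c1.symm) (Cardinal.mk_set_le A)
  have cB : #B = κ := mk_between hT2B (le_of_eq c2.symm) (Cardinal.mk_set_le B)
  have hAmT1 : A \ T₁ = T₂ := by
    ext x
    constructor
    · rintro ⟨hx1 | hx1, hx2⟩
      · exact absurd hx1 hx2
      · exact hx1
    · intro hx
      exact ⟨Or.inr hx, fun h => h12 x h hx⟩
  have hAmT2 : A \ T₂ = T₁ := by
    ext x
    constructor
    · rintro ⟨hx1 | hx1, hx2⟩
      · exact hx1
      · exact absurd hx1 hx2
    · intro hx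
      exact ⟨Or.inl hx, fun h => h12 x hx h⟩
  have hBmT2 : B \ T₂ = T₃ := by
    ext x
    constructor
    · rintro ⟨hx1 | hx1, hx2⟩
      · exact absurd hx1 hx2
      · exact hx1
    · intro hx
      exact ⟨Or.inr hx, fun h => h23 x h hx⟩
  -- the routing step
  have route : ∀ (Ts : Set X), (Ts = T₁ ∨ Ts = T₂ ∨ Ts = T₃) → ∀ Y : Set X, Y ⊆ Ts →
      (#Y) = κ → ∃ u : Perm X, u ∈ K ∧ ∀ x, x ∈ Y ↔ u x ∈ T₁ := by
    intro Ts hTs Y hYT hYκ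
    have hstep : ∀ (Tsrc : Set X), Tsrc ⊆ A → A \ Tsrc ⊆ A → #(A \ Tsrc : Set X) = κ →
        ∀ Z : Set X, Z ⊆ Tsrc → #Z = κ → (∀ x, x ∈ A \ Z → x ∈ A) →
        #(A \ Z : Set X) = κ →
        ∃ u : Perm X, u ∈ K ∧ ∀ x, x ∈ Z ↔ u x ∈ T₁ := by
      intro Tsrc hsubA _ _ Z hZT hZκ _ hAZ
      obtain ⟨v, hv1, hv2⟩ := perm_on (A := A) (P := Z) (Q := T₁)
        (fun x hx => hsubA (hZT hx)) hT1A (hZκ.trans c1.symm)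
        (by rw [hAmT1, hAZ, c2])
      refine ⟨v, hA v ?_, hv2⟩
      intro x hx
      exact hv1 x (fun hxa => (hnA x).mpr hx hxa)
    rcases hTs with h | h | h
    · rw [h] at hYT
      have hAZ : #(A \ Y : Set X) = κ := by
        apply mk_between (s := T₂) (t := A \ Y)
        · intro x hx
          exact ⟨Or.inr hx, fun hy => h12 x (hYT hy) hx⟩
        · exact le_of_eq c2.symm
        · exact Cardinal.mk_set_le _
      exact hstep T₁ hT1A (Set.diff_subset) (by rw [hAmT1, c2]) Y hYT hYκ
        (fun x hx => hx.1) hAZ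
    · rw [h] at hYT
      have hAZ : #(A \ Y : Set X) = κ := by
        apply mk_between (s := T₁) (t := A \ Y)
        · intro x hx
          exact ⟨Or.inl hx, fun hy => h12 x hx (hYT hy)⟩
        · exact le_of_eq c1.symm
        · exact Cardinal.mk_set_le _
      exact hstep T₂ hT2A (Set.diff_subset) (by rw [hAmT2, c1]) Y hYT hYκ
        (fun x hx => hx.1) hAZ
    · rw [h] at hYT
      -- move into T₂ first using a B-supported permutation
      have hBY : #(B \ Y : Set X) = κ := by
        apply mk_between (s := T₂) (t := B \ Y)
        · intro x hx
          exact ⟨Or.inl hx, fun hy => h23 x hx (hYT hy)⟩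
        · exact le_of_eq c2.symm
        · exact Cardinal.mk_set_le _
      obtain ⟨u₁, hu1fix, hu1⟩ := perm_on (A := B) (P := Y) (Q := T₂)
        (fun x hx => hT3B (hYT hx)) hT2B (hYκ.trans c2.symm)
        (by rw [hBmT2, hBY, c3])
      obtain ⟨u₂, hu2fix, hu2⟩ := perm_on (A := A) (P := T₂) (Q := T₁)
        hT2A hT1A (c2.trans c1.symm) (by rw [hAmT2, hAmT1, c1, c2])
      refine ⟨u₂ * u₁, ?_, ?_⟩
      · have m1 : u₁ ∈ K := hB u₁ (fun x hx => hu1fix x (fun hxb => (hnB x).mpr hx hxb))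
        have m2 : u₂ ∈ K := hA u₂ (fun x hx => hu2fix x (fun hxa => (hnA x).mpr hx hxa))
        exact mul_mem m2 m1
      · intro x
        rw [Perm.mul_apply]
        exact (hu1 x).trans (hu2 (u₁ x))
  -- main argument
  intro f
  -- find a region receiving a full-size piece of A
  have hsplitA : A = (A ∩ f⁻¹' T₁) ∪ ((A ∩ f⁻¹' T₂) ∪ (A ∩ f⁻¹' T₃)) := by
    ext x
    constructor
    · intro hx
      rcases hcov (f x) with h | h | h
      · exact Or.inl ⟨hx, h⟩
      · exact Or.inr (Or.inl ⟨hx, h⟩)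
      · exact Or.inr (Or.inr ⟨hx, h⟩)
    · rintro (h | h | h) <;> exact h.1
  have hex : ∃ Ts : Set X, (Ts = T₁ ∨ Ts = T₂ ∨ Ts = T₃) ∧ #(A ∩ f⁻¹' Ts : Set X) = κ := by
    by_contra hcon
    push_neg at hcon
    have hlt : ∀ Ts : Set X, (Ts = T₁ ∨ Ts = T₂ ∨ Ts = T₃) → #(A ∩ f⁻¹' Ts : Set X) < κ := by
      intro Ts hTs
      exact lt_of_le_of_ne (Cardinal.mk_set_le _) (hcon Ts hTs)
    have h1 := hlt T₁ (Or.inl rfl)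
    have h2 := hlt T₂ (Or.inr (Or.inl rfl))
    have h3 := hlt T₃ (Or.inr (Or.inr rfl))
    have : κ ≤ #(A ∩ f⁻¹' T₁ : Set X) + (#(A ∩ f⁻¹' T₂ : Set X) + #(A ∩ f⁻¹' T₃ : Set X)) := by
      calc κ = #A := cA.symm
      _ = #((A ∩ f⁻¹' T₁) ∪ ((A ∩ f⁻¹' T₂) ∪ (A ∩ f⁻¹' T₃)) : Set X) := by rw [← hsplitA]
      _ ≤ _ := le_trans (Cardinal.mk_union_le _ _)
            (add_le_add_right (Cardinal.mk_union_le _ _) _)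
    exact absurd this (not_le.mpr (Cardinal.add_lt_of_lt hκ h1 (Cardinal.add_lt_of_lt hκ h2 h3)))
  obtain ⟨Ts, hTs, hCκ⟩ := hex
  set C : Set X := A ∩ f⁻¹' Ts with hCdef
  obtain ⟨C', C'', hC'sub, hC''sub, hCdisj, hC'κ, hC''κ⟩ :=
    split_set C (le_trans hκ (le_of_eq hCκ.symm))
  rw [hCκ] at hC'κ hC''κ
  -- v maps T₁ onto S := C'
  have hC'A : C' ⊆ A := fun x hx => (hC'sub hx).1
  have hC''A : C'' ⊆ A := fun x hx => (hC''sub hx).1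
  have hAmC' : #(A \ C' : Set X) = κ := by
    apply mk_between (s := C'') (t := A \ C')
    · intro x hx
      exact ⟨hC''A hx, fun hy => hCdisj x hy hx⟩
    · exact le_of_eq hC''κ.symm
    · exact Cardinal.mk_set_le _
  obtain ⟨v, hvfix, hv⟩ := perm_on (A := A) (P := T₁) (Q := C')
    hT1A hC'A (c1.trans hC'κ.symm) (by rw [hAmT1, hAmC', c2])
  have hvK : v ∈ K := hA v (fun x hx => hvfix x (fun hxa => (hnA x).mpr hx hxa))
  -- Y := f '' C'
  set Y : Set X := f '' C' with hYdef
  have hYT : Y ⊆ Ts := by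
    rintro y ⟨x, hx, rfl⟩
    exact (hC'sub hx).2
  have hYκ : #Y = κ := by
    rw [hYdef, Cardinal.mk_image_eq f.injective]
    exact hC'κ
  obtain ⟨u, huK, hu⟩ := route Ts hTs Y hYT hYκ
  -- w := u * f * v maps T₁ to T₁
  set w : Perm X := u * f * v with hwdef
  have hw : ∀ x, x ∈ T₁ ↔ w x ∈ T₁ := by
    intro x
    have e1 : x ∈ T₁ ↔ v x ∈ C' := hv x
    have e2 : v x ∈ C' ↔ f (v x) ∈ Y := by
      constructor
      · intro h; exact ⟨v x, h, rfl⟩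
      · rintro ⟨z, hz, hze⟩
        rwa [← f.injective hze]
    have e3 : f (v x) ∈ Y ↔ u (f (v x)) ∈ T₁ := hu (f (v x))
    have : w x = u (f (v x)) := rfl
    rw [this]
    exact (e1.trans e2).trans e3
  -- correction: make w fix T₁ pointwise
  have hwinv : ∀ x, x ∈ T₁ ↔ w⁻¹ x ∈ T₁ := by
    intro x
    have := hw (w⁻¹ x)
    rw [Perm.inv_def, Equiv.apply_symm_apply] at this
    exact this.symm
  set what : Perm ↥T₁ :=
    ⟨fun a => ⟨w a, (hw a).mp a.2⟩, fun a => ⟨w⁻¹ a, (hwinv a).mp a.2⟩,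
      fun a => by ext; simp, fun a => by ext; simp⟩ with hwhatdef
  set c : Perm X := Perm.extendDomain what⁻¹ (Equiv.refl ↥T₁) with hcdef
  have hcK : c ∈ K := by
    apply hA
    intro x hx
    exact Perm.extendDomain_apply_not_subtype _ _ (fun h => h13 x h hx)
  have hcw : ∀ x, x ∈ T₁ → (c * w) x = x := by
    intro x hx
    rw [Perm.mul_apply]
    have hwx : w x ∈ T₁ := (hw x).mp hx
    rw [hcdef, Perm.extendDomain_apply_subtype _ _ hwx]
    have : what⁻¹ ⟨w x, hwx⟩ = ⟨x, hx⟩ := by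
      apply what.injective
      rw [Perm.inv_def, Equiv.apply_symm_apply]
      ext
      rfl
    simp only [Equiv.refl_symm, Equiv.refl_apply]
    rw [this]
  have hgK : c * w ∈ K := hB _ hcw
  -- conclude
  have : f = u⁻¹ * (c⁻¹ * ((c * w) * v⁻¹)) := by
    rw [hwdef]
    group
  rw [this]
  exact mul_mem (inv_mem huK) (mul_mem (inv_mem hcK) (mul_mem hgK (inv_mem hvK)))

end ABLemma

section Conj
variable {Y : Type u}

lemma conj_move (L L' : Set Y) (h1 : #L = #L') (h2 : #(Lᶜ : Set Y) = #(L'ᶜ : Set Y)) :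
    ∃ q : Perm Y, ∀ g : Perm Y, (∀ x ∉ L', g x = x) →
      ∃ g' : Perm Y, (∀ x ∉ L, g' x = x) ∧ g = q * g' * q⁻¹ := by
  obtain ⟨q, hq⟩ := perm_between h1 h2
  refine ⟨q, fun g hg => ⟨q⁻¹ * g * q, ?_, by group⟩⟩
  intro x hx
  have hqx : q x ∉ L' := fun h => hx ((hq x).mpr h)
  simp only [Perm.mul_apply]
  rw [hg (q x) hqx, Perm.inv_def, Equiv.symm_apply_apply]

end Conj

section Aux
variable {I Ω : Type u} [Infinite Ω]

lemma mk_mid (α β : Type u) [Nonempty α] [Countable β] [Infinite β] (hα : #α ≤ #Ω) :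
    #(α × β × Ω) = #Ω := by
  have hκ : ℵ₀ ≤ #Ω := Cardinal.infinite_iff.mp ‹Infinite Ω›
  rw [Cardinal.mk_prod, Cardinal.mk_prod, Cardinal.lift_id, Cardinal.lift_id,
    Cardinal.lift_id, Cardinal.lift_id, Cardinal.mk_eq_aleph0 β]
  rw [Cardinal.mul_eq_right hκ hκ Cardinal.aleph0_ne_zero]
  exact Cardinal.mul_eq_right hκ hα (Cardinal.mk_ne_zero α)

lemma mk_opt (hcard : #I ≤ #Ω) : #(Option I) ≤ #Ω := by
  have hκ : ℵ₀ ≤ #Ω := Cardinal.infinite_iff.mp ‹Infinite Ω›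
  rw [Cardinal.mk_option]
  calc #I + 1 ≤ #Ω + #Ω := add_le_add hcard (le_trans (by norm_num) hκ)
    _ = #Ω := Cardinal.add_eq_self hκ

lemma mk_midset (hcard : #I ≤ #Ω) (P : ULift.{u} ℤ → Prop) (hP : Infinite {n : ULift.{u} ℤ // P n}) :
    #({x : Mod I Ω | P x.2.1}) = #Ω := by
  haveI := hP
  have e : {x : Mod I Ω | P x.2.1} ≃ Option I × {n : ULift.{u} ℤ // P n} × Ω :=
    ⟨fun x => (x.1.1, ⟨x.1.2.1, x.2⟩, x.1.2.2), fun y => ⟨(y.1, y.2.1.1, y.2.2), y.2.1.2⟩,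
      fun x => rfl, fun y => rfl⟩
  rw [Cardinal.mk_congr e]
  exact mk_mid _ _ (mk_opt hcard)

lemma inf_of_resid (k : ℤ) (hk : (3 * (0:ℤ) + k) % 3 = k) :
    Infinite {n : ULift.{u} ℤ // n.down % 3 = k} := by
  apply Infinite.of_injective (fun m : ℕ =>
    (⟨⟨3 * (m : ℤ) + k⟩, by show (3 * (m : ℤ) + k) % 3 = k; omega⟩ :
      {n : ULift.{u} ℤ // n.down % 3 = k}))
  intro a b hab
  have h2 : (3 * (a : ℤ) + k) = 3 * (b : ℤ) + k := congrArg (fun t => t.1.down) hab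
  omega

lemma inf_of_nresid (k : ℤ) (hk : ¬ (3 * (0:ℤ) + 1) % 3 = k) :
    Infinite {n : ULift.{u} ℤ // ¬ n.down % 3 = k} := by
  apply Infinite.of_injective (fun m : ℕ =>
    (⟨⟨3 * (m : ℤ) + 1⟩, by show ¬ (3 * (m : ℤ) + 1) % 3 = k; omega⟩ :
      {n : ULift.{u} ℤ // ¬ n.down % 3 = k}))
  intro a b hab
  have h2 : (3 * (a : ℤ) + 1) = 3 * (b : ℤ) + 1 := congrArg (fun t => t.1.down) hab
  omega

lemma mk_lam : #(Lam I Ω) = #Ω := by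
  apply Cardinal.mk_congr
  refine ⟨fun x => x.1.2.2, fun w => ⟨(none, ⟨0⟩, w), ⟨rfl, rfl⟩⟩, ?_, fun w => rfl⟩
  rintro ⟨⟨o, n, w⟩, ⟨h1, h2⟩⟩
  simp only at h1 h2
  subst h1
  have : n = (⟨0⟩ : ULift.{u} ℤ) := ULift.down_injective h2
  subst this
  rfl

lemma mk_lam_compl (hcard : #I ≤ #Ω) : #((Lam I Ω)ᶜ : Set (Mod I Ω)) = #Ω := by
  have hsub : {x : Mod I Ω | x.1 = none ∧ x.2.1.down = 1} ⊆ (Lam I Ω)ᶜ := by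
    rintro ⟨o, n, w⟩ ⟨h1, h2⟩ ⟨h3, h4⟩
    simp only at h2 h4
    omega
  have hW : #({x : Mod I Ω | x.1 = none ∧ x.2.1.down = 1}) = #Ω := by
    apply Cardinal.mk_congr
    refine ⟨fun x => x.1.2.2, fun w => ⟨(none, ⟨1⟩, w), ⟨rfl, rfl⟩⟩, ?_, fun w => rfl⟩
    rintro ⟨⟨o, n, w⟩, ⟨h1, h2⟩⟩
    simp only at h1 h2
    subst h1
    have : n = (⟨1⟩ : ULift.{u} ℤ) := ULift.down_injective h2
    subst this
    rfl
  have hM : #(Mod I Ω) = #Ω := mk_mid _ _ (mk_opt hcard)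
  apply mk_between hsub (le_of_eq hW.symm)
  rw [← hM]
  exact Cardinal.mk_set_le _

theorem aux (hcard : #I ≤ #Ω) (G : I → Subgroup (Perm (Mod I Ω)))
    (hchain : ∀ i j, G i ≤ G j ∨ G j ≤ G i)
    (hcover : ∀ g : Perm (Mod I Ω), ∃ i, g ∈ G i)
    (hproper : ∀ i, G i ≠ ⊤) : False := by
  classical
  have hκ : ℵ₀ ≤ #Ω := Cardinal.infinite_iff.mp ‹Infinite Ω›
  have dom2 : ∀ i j : I, ∃ k, G i ≤ G k ∧ G j ≤ G k := fun i j =>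
    (hchain i j).elim (fun h => ⟨j, h, le_rfl⟩) (fun h => ⟨i, le_rfl, h⟩)
  have hlvmem : ∀ g : Perm (Mod I Ω), g ∈ G ((hcover g).choose) := fun g => (hcover g).choose_spec
  set lv : Perm (Mod I Ω) → I := fun g => (hcover g).choose with hlvdef
  by_cases hdic : ∃ p : I × I, ∀ u : Perm (Cc Ω), (mir p.1 u : Perm (Mod I Ω)) ∈ G p.2
  · -- Case (ii): a single subgroup contains all mirror pairs
    obtain ⟨⟨i₀, e₁⟩, hall⟩ := hdic
    have hcomm : ∀ a b : Perm (Cc Ω), (sl ⁅a, b⁆ : Perm (Mod I Ω)) ∈ G e₁ := by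
      intro a b
      rw [← iden2 i₀ a b]
      exact mul_mem (mul_mem (hall a) (hall b)) (inv_mem (hall (b * a)))
    have hLam : ∀ g : Perm (Mod I Ω), (∀ x ∉ Lam I Ω, g x = x) → g ∈ G e₁ := by
      intro g hg
      obtain ⟨u, rfl⟩ := extract_lam g hg
      obtain ⟨a, b, hab⟩ := swindle u
      rw [← hab]
      exact hcomm a b
    -- regions
    set T1 : Set (Mod I Ω) := {x | x.2.1.down % 3 = 0} with hT1def
    set T2 : Set (Mod I Ω) := {x | x.2.1.down % 3 = 1} with hT2def
    set T3 : Set (Mod I Ω) := {x | x.2.1.down % 3 = 2} with hT3def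
    set SA : Set (Mod I Ω) := {x | ¬ x.2.1.down % 3 = 2} with hSAdef
    set SB : Set (Mod I Ω) := {x | ¬ x.2.1.down % 3 = 0} with hSBdef
    have cM : #(Mod I Ω) = #Ω := mk_mid _ _ (mk_opt hcard)
    have cT1 : #T1 = #Ω := mk_midset hcard _ (inf_of_resid 0 (by norm_num))
    have cT2 : #T2 = #Ω := mk_midset hcard _ (inf_of_resid 1 (by norm_num))
    have cT3 : #T3 = #Ω := mk_midset hcard _ (inf_of_resid 2 (by norm_num))
    have cSA : #SA = #Ω := mk_midset hcard _ (inf_of_nresid 2 (by norm_num))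
    have cSB : #SB = #Ω := mk_midset hcard _ (inf_of_nresid 0 (by norm_num))
    have cSAc : #(SAᶜ : Set (Mod I Ω)) = #Ω := by
      have : (SAᶜ : Set (Mod I Ω)) = T3 := by
        ext x; simp [hSAdef, hT3def]
      rw [this]; exact cT3
    have cSBc : #(SBᶜ : Set (Mod I Ω)) = #Ω := by
      have : (SBᶜ : Set (Mod I Ω)) = T1 := by
        ext x; simp [hSBdef, hT1def]
      rw [this]; exact cT1
    -- transport the Λ-subgroup onto SA and SB
    obtain ⟨qA, hqA⟩ := conj_move (Lam I Ω) SA ((mk_lam).trans cSA.symm)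
      ((mk_lam_compl hcard).trans cSAc.symm)
    obtain ⟨qB, hqB⟩ := conj_move (Lam I Ω) SB ((mk_lam).trans cSB.symm)
      ((mk_lam_compl hcard).trans cSBc.symm)
    obtain ⟨kA, hkA1, hkA2⟩ := dom2 e₁ (lv qA)
    obtain ⟨kB, hkB1, hkB2⟩ := dom2 kA (lv qB)
    have hkB0 : G e₁ ≤ G kB := le_trans hkA1 hkB1
    have hAmem : ∀ g : Perm (Mod I Ω), (∀ x, x ∈ T3 → g x = x) → g ∈ G kB := by
      intro g hg
      obtain ⟨g', hg'fix, rfl⟩ := hqA g (by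
        intro x hx
        apply hg
        simpa [hSAdef, hT3def] using hx)
      have hq : qA ∈ G kB := hkB1 (hkA2 (hlvmem qA))
      exact mul_mem (mul_mem hq (hkB0 (hLam g' hg'fix))) (inv_mem hq)
    have hBmem : ∀ g : Perm (Mod I Ω), (∀ x, x ∈ T1 → g x = x) → g ∈ G kB := by
      intro g hg
      obtain ⟨g', hg'fix, rfl⟩ := hqB g (by
        intro x hx
        apply hg
        simpa [hSBdef, hT1def] using hx)
      have hq : qB ∈ G kB := hkB2 (hlvmem qB)
      exact mul_mem (mul_mem hq (hkB0 (hLam g' hg'fix))) (inv_mem hq)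
    haveI : Infinite (Mod I Ω) := by
      apply Infinite.of_injective (fun w : Ω => ((none : Option I), (⟨0⟩ : ULift.{u} ℤ), w))
      intro a b hab
      exact congrArg (fun p => p.2.2) hab
    have hall' : ∀ f : Perm (Mod I Ω), f ∈ G kB := by
      apply AB T1 T2 T3
      · intro x
        simp only [hT1def, hT2def, hT3def, Set.mem_setOf_eq]
        omega
      · intro x h1 h2
        simp only [hT1def, hT2def, Set.mem_setOf_eq] at h1 h2
        omega
      · intro x h1 h2
        simp only [hT1def, hT3def, Set.mem_setOf_eq] at h1 h2
        omega
      · intro x h1 h2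
        simp only [hT2def, hT3def, Set.mem_setOf_eq] at h1 h2
        omega
      · exact cT1.trans cM.symm
      · exact cT2.trans cM.symm
      · exact cT3.trans cM.symm
      · exact hAmem
      · exact hBmem
    exact hproper kB ((Subgroup.eq_top_iff' _).mpr hall')
  · -- Case (i): witnesses escape everywhere; build the master permutation
    push_neg at hdic
    have hwit : ∀ i e : I, ∃ u : Perm (Cc Ω), (mir i u : Perm (Mod I Ω)) ∉ G e := by
      intro i e
      exact hdic (i, e)
    have he : ∀ i : I, ∃ k, G i ≤ G k ∧ G (lv (pihat i)) ≤ G k := fun i => dom2 i (lv (pihat i))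
    choose e he1 he2 using he
    have hz : ∀ i : I, ∃ u : Perm (Cc Ω), (mir i u : Perm (Mod I Ω)) ∉ G (e i) :=
      fun i => hwit i (e i)
    choose z hzesc using hz
    set h : Perm (Mod I Ω) := master z with hdef
    set istar : I := lv h with histar
    apply hzesc istar
    rw [← iden1 z istar]
    have hp : (pihat istar : Perm (Mod I Ω)) ∈ G (e istar) := he2 istar (hlvmem (pihat istar))
    have hh : h ∈ G (e istar) := he1 istar (hlvmem h)
    exact mul_mem (mul_mem (mul_mem hp hh) hp) (inv_mem hh)

end Aux

end
end MN

theorem stmt4 {Ω : Type u} [Infinite Ω] {I : Type u} (G : I → Subgroup (Equiv.Perm Ω))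
    (hchain : ∀ i j, G i ≤ G j ∨ G j ≤ G i)
    (hcard : Cardinal.mk I ≤ Cardinal.mk Ω)
    (hcover : ∀ f : Equiv.Perm Ω, ∃ i, f ∈ G i) :
    ∃ i : I, G i = ⊤ := by
  classical
  by_contra hcon
  push_neg at hcon
  have cM : Cardinal.mk (MN.Mod I Ω) = Cardinal.mk Ω := MN.mk_mid _ _ (MN.mk_opt hcard)
  obtain ⟨E⟩ := Cardinal.eq.mp cM
  have φmul : ∀ g h : Equiv.Perm (MN.Mod I Ω),
      ((E.symm.trans (g * h)).trans E : Equiv.Perm Ω)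
        = ((E.symm.trans g).trans E) * ((E.symm.trans h).trans E) := by
    intro g h
    ext x
    simp [Equiv.Perm.mul_apply]
  set Φ : Equiv.Perm (MN.Mod I Ω) →* Equiv.Perm Ω :=
    MonoidHom.mk' (fun g => (E.symm.trans g).trans E) φmul with hΦdef
  have hΦapp : ∀ (g : Equiv.Perm (MN.Mod I Ω)) (x : Ω), Φ g x = E (g (E.symm x)) :=
    fun g x => rfl
  set G' : I → Subgroup (Equiv.Perm (MN.Mod I Ω)) := fun i => (G i).comap Φ with hG'def
  apply MN.aux hcard G'
  · intro i j
    rcases hchain i j with h | h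
    · exact Or.inl (Subgroup.comap_mono h)
    · exact Or.inr (Subgroup.comap_mono h)
  · intro g
    obtain ⟨i, hi⟩ := hcover (Φ g)
    exact ⟨i, Subgroup.mem_comap.mpr hi⟩
  · intro i htop
    apply hcon i
    rw [Subgroup.eq_top_iff']
    intro f
    have hmem : (E.trans (f.trans E.symm) : Equiv.Perm (MN.Mod I Ω)) ∈ G' i := by
      rw [htop]; trivial
    have : Φ (E.trans (f.trans E.symm)) = f := by
      ext x
      rw [hΦapp]
      simp
    rw [hG'def] at hmem
    have := Subgroup.mem_comap.mp hmem
    rwa [‹Φ (E.trans (f.trans E.symm)) = f›] at this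
-- axiom check
-- #print axioms stmt4
end

section
/- If Ω is an infinite set and (M_i)_{i∈I} is a chain of submonoids of Sym(Ω) with ⋃_{i∈I} M_i = Sym(Ω) and |I| ≤ |Ω|, then M_i = Sym(Ω) for some i ∈ I. -/
open Equiv Set Cardinal

namespace MN
universe u

variable {α : Type*}

/-- `σ` is supported inside `S`. -/
def Supp (σ : Equiv.Perm α) (S : Set α) : Prop := ∀ x, x ∉ S → σ x = x

lemma Supp.mem_iff {σ : Equiv.Perm α} {S : Set α} (h : Supp σ S) {x : α} :
    σ x ∈ S ↔ x ∈ S := by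
  constructor
  · intro hx
    by_contra hxS
    have := h x hxS
    rw [this] at hx; exact hxS hx
  · intro hx
    by_contra hσ
    have := h (σ x) hσ
    have hxx : σ x = x := σ.injective this
    rw [hxx] at hσ; exact hσ hx

lemma Supp.inv {σ : Equiv.Perm α} {S : Set α} (h : Supp σ S) : Supp σ⁻¹ S := by
  intro x hx
  have : σ x = x := h x hx
  calc σ⁻¹ x = σ⁻¹ (σ x) := by rw [this]
  _ = x := σ.symm_apply_apply x

lemma Supp.one (S : Set α) : Supp (1 : Equiv.Perm α) S := fun _ _ => rfl

lemma Supp.image_of_subset_compl {σ : Equiv.Perm α} {S X : Set α} (h : Supp σ S)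
    (hX : ∀ x ∈ X, x ∉ S) : σ '' X = X := by
  ext y; constructor
  · rintro ⟨x, hx, rfl⟩; rwa [h x (hX x hx)]
  · intro hy; exact ⟨y, hy, h y (hX y hy)⟩

/-- glue a permutation from fiberwise bijections. -/
def glueF {γ : Type*} (c d : α → γ) (e : ∀ k, {x // c x = k} ≃ {x // d x = k}) :
    Equiv.Perm α :=
  ((Equiv.sigmaFiberEquiv c).symm.trans (Equiv.sigmaCongrRight e)).trans
    (Equiv.sigmaFiberEquiv d)

lemma glueF_apply {γ : Type*} (c d : α → γ) (e : ∀ k, {x // c x = k} ≃ {x // d x = k})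
    (x : α) : glueF c d e x = (e (c x) ⟨x, rfl⟩).1 := rfl

lemma glueF_eval {γ : Type*} (c d : α → γ) (e : ∀ k, {x // c x = k} ≃ {x // d x = k})
    {k : γ} (x : α) (h : c x = k) : glueF c d e x = (e k ⟨x, h⟩).1 := by
  subst h; rfl

lemma glueF_class {γ : Type*} (c d : α → γ) (e : ∀ k, {x // c x = k} ≃ {x // d x = k})
    (x : α) : d (glueF c d e x) = c x := (e (c x) ⟨x, rfl⟩).2


/-- A permutation supported in `S` mapping `X` onto `Y`. -/
lemma exists_move (S X Y : Set α) (hX : X ⊆ S) (hY : Y ⊆ S)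
    (h1 : #↥X = #↥Y) (h2 : #↥(S \ X) = #↥(S \ Y)) :
    ∃ π : Equiv.Perm α, Supp π S ∧ π '' X = Y := by
  classical
  set c : α → Option Bool := fun x => if x ∈ X then some true else if x ∈ S then some false else none with hc
  set d : α → Option Bool := fun x => if x ∈ Y then some true else if x ∈ S then some false else none with hd
  have hc0 : ∀ x, c x = some true ↔ x ∈ X := by
    intro x; by_cases hx : x ∈ X
    · simp [hc, hx]
    · by_cases hs : x ∈ S <;> simp [hc, hx, hs]
  have hd0 : ∀ x, d x = some true ↔ x ∈ Y := by
    intro x; by_cases hx : x ∈ Y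
    · simp [hd, hx]
    · by_cases hs : x ∈ S <;> simp [hd, hx, hs]
  have hc1 : ∀ x, c x = some false ↔ x ∈ S \ X := by
    intro x; by_cases hx : x ∈ X
    · simp [hc, hx]
    · by_cases hs : x ∈ S <;> simp [hc, hx, hs]
  have hd1 : ∀ x, d x = some false ↔ x ∈ S \ Y := by
    intro x; by_cases hx : x ∈ Y
    · simp [hd, hx]
    · by_cases hs : x ∈ S <;> simp [hd, hx, hs]
  have hc2 : ∀ x, c x = none ↔ x ∉ S := by
    intro x; by_cases hx : x ∈ X
    · simp [hc, hx, hX hx]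
    · by_cases hs : x ∈ S <;> simp [hc, hx, hs]
  have hd2 : ∀ x, d x = none ↔ x ∉ S := by
    intro x; by_cases hx : x ∈ Y
    · simp [hd, hx, hY hx]
    · by_cases hs : x ∈ S <;> simp [hd, hx, hs]
  obtain ⟨eXY⟩ := Cardinal.eq.mp h1
  obtain ⟨eSS⟩ := Cardinal.eq.mp h2
  let e : ∀ k : Option Bool, {x // c x = k} ≃ {x // d x = k} := fun k =>
    match k with
    | some true => (Equiv.subtypeEquivRight hc0).trans
        (eXY.trans (Equiv.subtypeEquivRight hd0).symm)
    | some false => (Equiv.subtypeEquivRight hc1).trans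
        (eSS.trans (Equiv.subtypeEquivRight hd1).symm)
    | none => (Equiv.subtypeEquivRight hc2).trans (Equiv.subtypeEquivRight hd2).symm
  refine ⟨glueF c d e, ?_, ?_⟩
  · intro x hx
    have h := glueF_eval c d e x ((hc2 x).mpr hx)
    rw [h]; rfl
  · have himgX : ∀ x ∈ X, glueF c d e x ∈ Y := by
      intro x hx
      have := glueF_class c d e x
      rw [(hc0 x).mpr hx] at this
      exact (hd0 _).mp this
    have himgS : ∀ x ∈ S \ X, glueF c d e x ∈ S \ Y := by
      intro x hx
      have := glueF_class c d e x
      rw [(hc1 x).mpr hx] at this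
      exact (hd1 _).mp this
    have hfix : ∀ x, x ∉ S → glueF c d e x = x := by
      intro x hx
      have h := glueF_eval c d e x ((hc2 x).mpr hx)
      rw [h]; rfl
    apply Set.eq_of_subset_of_subset
    · rintro y ⟨x, hx, rfl⟩; exact himgX x hx
    · intro y hy
      set π := glueF c d e
      set x := π.symm y with hxdef
      have hxy : π x = y := π.apply_symm_apply y
      by_cases hx : x ∈ X
      · exact ⟨x, hx, hxy⟩
      · exfalso
        by_cases hs : x ∈ S
        · have := himgS x ⟨hs, hx⟩
          rw [hxy] at this; exact this.2 hy
        · have := hfix x hs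
          rw [hxy] at this
          exact hs (this ▸ hY hy)

lemma comm_key {SS TT RR : Set α}
    (hpart : ∀ x, x ∈ SS ∨ x ∈ TT ∨ x ∈ RR)
    (hST : ∀ x, x ∈ SS → x ∉ TT) (hSR : ∀ x, x ∈ SS → x ∉ RR)
    (hTR : ∀ x, x ∈ TT → x ∉ RR)
    (σ ρ E1 E2 v : Equiv.Perm α)
    (hσ : Supp σ SS) (hρ : Supp ρ SS)
    (hE1S : ∀ x ∈ SS, E1 x = σ x) (hE1T : ∀ x ∈ TT, E1 x = x)
    (hE2S : ∀ x ∈ SS, E2 x = ρ x) (hE2T : ∀ x ∈ TT, E2 x = x)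
    (hv : ∀ x, v (v x) = x) (hvS : ∀ x ∈ SS, v x = x) (hvR : ∀ x ∈ RR, v x ∈ TT) :
    (v*E1*v) * E2 * (v*E1⁻¹*v) * E2⁻¹ = σ*ρ*σ⁻¹*ρ⁻¹ := by
  have key : ∀ (E τ : Equiv.Perm α), Supp τ SS → (∀ x ∈ SS, E x = τ x) →
      (∀ x ∈ TT, E x = x) →
      (∀ x ∈ SS, E⁻¹ x = τ⁻¹ x) ∧ (∀ x ∈ TT, E⁻¹ x = x) ∧
      (∀ x ∈ RR, E x ∈ RR) ∧ (∀ x ∈ RR, E⁻¹ x ∈ RR) := by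
    intro E τ hτ hES hET
    have hSinv : ∀ x ∈ SS, E⁻¹ x = τ⁻¹ x := by
      intro x hx
      have h1 : τ⁻¹ x ∈ SS := (Supp.inv hτ).mem_iff.mpr hx
      have h2 : E (τ⁻¹ x) = x := by rw [hES _ h1]; exact τ.apply_symm_apply x
      calc E⁻¹ x = E⁻¹ (E (τ⁻¹ x)) := by rw [h2]
      _ = τ⁻¹ x := E.symm_apply_apply _
    have hTinv : ∀ x ∈ TT, E⁻¹ x = x := by
      intro x hx
      calc E⁻¹ x = E⁻¹ (E x) := by rw [hET _ hx]
      _ = x := E.symm_apply_apply _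
    refine ⟨hSinv, hTinv, ?_, ?_⟩
    · intro x hx
      rcases hpart (E x) with h | h | h
      · exfalso
        have : x = τ⁻¹ (E x) := by
          have := hSinv _ h
          rw [← this]; exact (E.symm_apply_apply x).symm
        have hxS : x ∈ SS := by rw [this]; exact (Supp.inv hτ).mem_iff.mpr h
        exact hSR _ hxS hx
      · exfalso
        have : x = E x := by
          have := hTinv _ h
          rw [← this]; exact (E.symm_apply_apply x).symm
        exact hTR _ (this ▸ h) hx
      · exact h
    · intro x hx
      rcases hpart (E⁻¹ x) with h | h | h
      · exfalso
        have hx2 : x = E (E⁻¹ x) := (E.apply_symm_apply x).symm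
        have : x = τ (E⁻¹ x) := by
          calc x = E (E⁻¹ x) := hx2
          _ = τ (E⁻¹ x) := hES _ h
        have hxS : x ∈ SS := by rw [this]; exact hτ.mem_iff.mpr h
        exact hSR _ hxS hx
      · exfalso
        have hx2 : x = E (E⁻¹ x) := (E.apply_symm_apply x).symm
        have : x = E⁻¹ x := by
          calc x = E (E⁻¹ x) := hx2
          _ = E⁻¹ x := hET _ h
        exact hTR _ (this ▸ h) hx
      · exact h
  obtain ⟨hE1Sinv, hE1Tinv, hE1R, hE1Rinv⟩ := key E1 σ hσ hE1S hE1T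
  obtain ⟨hE2Sinv, hE2Tinv, hE2R, hE2Rinv⟩ := key E2 ρ hρ hE2S hE2T
  have hTnS : ∀ x, x ∈ TT → x ∉ SS := fun x hx hs => hST x hs hx
  have hRnS : ∀ x, x ∈ RR → x ∉ SS := fun x hx hs => hSR x hs hx
  ext x
  simp only [Equiv.Perm.mul_apply]
  rcases hpart x with hx | hx | hx
  · -- x ∈ SS
    have h1 : E2⁻¹ x = ρ⁻¹ x := hE2Sinv x hx
    have m1 : ρ⁻¹ x ∈ SS := (Supp.inv hρ).mem_iff.mpr hx
    have h2 : v (ρ⁻¹ x) = ρ⁻¹ x := hvS _ m1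
    have h3 : E1⁻¹ (ρ⁻¹ x) = σ⁻¹ (ρ⁻¹ x) := hE1Sinv _ m1
    have m2 : σ⁻¹ (ρ⁻¹ x) ∈ SS := (Supp.inv hσ).mem_iff.mpr m1
    have h4 : v (σ⁻¹ (ρ⁻¹ x)) = _ := hvS _ m2
    have h5 : E2 (σ⁻¹ (ρ⁻¹ x)) = ρ (σ⁻¹ (ρ⁻¹ x)) := hE2S _ m2
    have m3 : ρ (σ⁻¹ (ρ⁻¹ x)) ∈ SS := hρ.mem_iff.mpr m2
    have h6 : v (ρ (σ⁻¹ (ρ⁻¹ x))) = _ := hvS _ m3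
    have h7 : E1 (ρ (σ⁻¹ (ρ⁻¹ x))) = σ (ρ (σ⁻¹ (ρ⁻¹ x))) := hE1S _ m3
    have m4 : σ (ρ (σ⁻¹ (ρ⁻¹ x))) ∈ SS := hσ.mem_iff.mpr m3
    rw [h1, h2, h3, h4, h5, h6, h7, hvS _ m4]
  · -- x ∈ TT
    have h1 : E2⁻¹ x = x := hE2Tinv x hx
    rw [h1]
    have hRHS : σ (ρ (σ⁻¹ (ρ⁻¹ x))) = x := by
      have hxs := hTnS x hx
      rw [(Supp.inv hρ) x hxs, (Supp.inv hσ) x hxs, hρ x hxs, hσ x hxs]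
    rw [hRHS]
    by_cases hvx : v x ∈ RR
    · have h2 : E1⁻¹ (v x) ∈ RR := hE1Rinv _ hvx
      have h3 : v (E1⁻¹ (v x)) ∈ TT := hvR _ h2
      rw [hE2T _ h3, hv (E1⁻¹ (v x))]
      have h4 : E1 (E1⁻¹ (v x)) = v x := E1.apply_symm_apply _
      rw [h4, hv x]
    · have hvT : v x ∈ TT := by
        rcases hpart (v x) with h | h | h
        · exfalso
          have := hvS _ h
          rw [hv x] at this
          exact hTnS x hx (this ▸ h)
        · exact h
        · exact absurd h hvx
      rw [hE1Tinv _ hvT, hv x, hE2T _ hx, hE1T _ hvT, hv x]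
  · -- x ∈ RR
    have hRHS : σ (ρ (σ⁻¹ (ρ⁻¹ x))) = x := by
      have hxs := hRnS x hx
      rw [(Supp.inv hρ) x hxs, (Supp.inv hσ) x hxs, hρ x hxs, hσ x hxs]
    rw [hRHS]
    have h1 : E2⁻¹ x ∈ RR := hE2Rinv x hx
    have h2 : v (E2⁻¹ x) ∈ TT := hvR _ h1
    rw [hE1Tinv _ h2, hv (E2⁻¹ x)]
    have h3 : E2 (E2⁻¹ x) = x := E2.apply_symm_apply x
    rw [h3]
    have h4 : v x ∈ TT := hvR _ hx
    rw [hE1T _ h4, hv x]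

/-! ### The structured model type -/

abbrev KK (I : Type u) : Type u := Option I ⊕ Option I

abbrev OmegaT (I W : Type u) : Type u := (KK I × ℤ) × (Bool × Fin 3 × W)

variable {I W : Type u}

def idx (x : OmegaT I W) : Option I := Sum.elim id (fun _ => none) x.1.1

lemma idx_eq_some_iff {x : OmegaT I W} {i : I} :
    idx x = some i ↔ x.1.1 = Sum.inl (some i) := by
  rcases hx : x.1.1 with o | o <;> simp [idx, hx]

/-- The blocks of the partition indexed by `I`. -/
def SigS (i : I) : Set (OmegaT I W) := {x | idx x = some i}

/-- The "reserve" part of the partition. -/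
def TS : Set (OmegaT I W) := {x | idx x = none}

/-- Step A: some `G i` is rich on its own block. -/
lemma exists_rich (G : I → Subgroup (Equiv.Perm (OmegaT I W)))
    (hcover : ∀ f, ∃ i, f ∈ G i) :
    ∃ i : I, ∀ σ : Equiv.Perm (OmegaT I W), Supp σ (SigS i) →
      ∃ g ∈ G i, (∀ x ∈ SigS i, g x = σ x) ∧ (∀ x ∈ TS, g x = x) := by
  by_contra hno
  push_neg at hno
  choose σf hσsupp hσbad using hno
  have hmemiff : ∀ (i : I) (x : OmegaT I W), idx x = some i ↔ idx (σf i x) = some i := by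
    intro i x
    exact ((hσsupp i).mem_iff (x := x)).symm
  let e : ∀ o : Option I, {x : OmegaT I W // idx x = o} ≃ {x : OmegaT I W // idx x = o} :=
    fun o => match o with
    | none => Equiv.refl _
    | some i => (σf i).subtypePerm (fun x => (hmemiff i x).symm)
  set Pg : Equiv.Perm (OmegaT I W) := glueF idx idx e with hPg
  obtain ⟨m, hm⟩ := hcover Pg
  obtain ⟨x, hx, hne⟩ := hσbad m Pg hm (by
    intro x hx
    have hxi : idx x = some m := hx
    rw [glueF_eval idx idx e x hxi]
    rfl)
  apply hne
  have hxn : idx x = none := hx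
  rw [glueF_eval idx idx e x hxn]
  rfl

/-! ### Cardinality facts -/

lemma card_mul_W [Infinite W] (X Y : Type u) [Nonempty X] (hX : #X ≤ #W)
    (hY : #Y = #W) : #(X × Y) = #W := by
  rw [Cardinal.mk_prod, Cardinal.lift_id, Cardinal.lift_id, hY]
  exact Cardinal.mul_eq_right (Cardinal.aleph0_le_mk W) hX (Cardinal.mk_ne_zero X)

lemma card_fin3W [Infinite W] : #(Fin 3 × W) = #W := by
  rw [Cardinal.mk_prod, Cardinal.lift_uzero, Cardinal.mk_fin]
  have h3 : (Cardinal.lift.{u} ((3:ℕ) : Cardinal.{0})) ≤ #W := by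
    rw [Cardinal.lift_natCast]
    exact le_trans (le_of_lt (Cardinal.nat_lt_aleph0 3)) (Cardinal.aleph0_le_mk W)
  refine Cardinal.mul_eq_right (Cardinal.aleph0_le_mk W) h3 ?_
  rw [Cardinal.lift_natCast]
  exact_mod_cast (by norm_num : ((3:ℕ) : Cardinal.{u}) ≠ 0)

lemma card_fib [Infinite W] : #(Bool × Fin 3 × W) = #W := by
  rw [Cardinal.mk_prod, Cardinal.lift_uzero, card_fin3W]
  have h2 : (Cardinal.lift.{u} (#Bool)) ≤ #W := by
    have : #Bool = ((2:ℕ) : Cardinal.{0}) := by simp [Cardinal.mk_fintype]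
    rw [this, Cardinal.lift_natCast]
    exact le_trans (le_of_lt (Cardinal.nat_lt_aleph0 2)) (Cardinal.aleph0_le_mk W)
  refine Cardinal.mul_eq_right (Cardinal.aleph0_le_mk W) h2 ?_
  simp [Cardinal.mk_fintype]

lemma card_KK_le [Infinite W] (hIW : #I ≤ #W) : #(KK I) ≤ #W := by
  have hW := Cardinal.aleph0_le_mk W
  have hopt : #(Option I) ≤ #W := by
    rw [Cardinal.mk_option]
    calc #I + 1 ≤ #W + #W :=
      add_le_add hIW (le_trans Cardinal.one_le_aleph0 hW)
    _ = #W := Cardinal.add_eq_self hW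
  calc #(KK I) = Cardinal.lift.{u} #(Option I) + Cardinal.lift.{u} #(Option I) :=
        Cardinal.mk_sum _ _
  _ = #(Option I) + #(Option I) := by rw [Cardinal.lift_id]
  _ ≤ #W + #W := add_le_add hopt hopt
  _ = #W := Cardinal.add_eq_self hW

lemma card_base_le [Infinite W] (hIW : #I ≤ #W) : #(KK I × ℤ) ≤ #W := by
  have hW := Cardinal.aleph0_le_mk W
  calc #(KK I × ℤ) = #(KK I) * Cardinal.lift.{u} #ℤ := by
        rw [Cardinal.mk_prod, Cardinal.lift_uzero]
  _ = #(KK I) * ℵ₀ := by rw [Cardinal.mk_int, Cardinal.lift_aleph0]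
  _ ≤ #W * #W := mul_le_mul' (card_KK_le hIW) hW
  _ = #W := Cardinal.mul_eq_self hW

lemma card_OmegaT [Infinite W] (hIW : #I ≤ #W) : #(OmegaT I W) = #W :=
  card_mul_W (KK I × ℤ) (Bool × Fin 3 × W) (card_base_le hIW) card_fib

/-- extracting a subset of prescribed cardinality. -/
lemma exists_subset_card {α : Type u} (S : Set α) (μ : Cardinal.{u}) (h : μ ≤ #↥S) :
    ∃ V, V ⊆ S ∧ #↥V = μ := by
  obtain ⟨p, hp⟩ := Cardinal.le_mk_iff_exists_set.mp h
  refine ⟨Subtype.val '' p, ?_, ?_⟩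
  · rintro x ⟨y, _, rfl⟩; exact y.2
  · rw [Cardinal.mk_image_eq Subtype.val_injective]; exact hp

lemma card_between {α : Type u} {κ : Cardinal.{u}} {X Y : Set α} (hXY : X ⊆ Y)
    (hX : #↥X = κ) (hY : #↥Y ≤ κ) : #↥Y = κ :=
  le_antisymm hY (hX ▸ Cardinal.mk_le_mk_of_subset hXY)

lemma shuffle {α : Type u} {κ : Cardinal.{u}} (hκ : ℵ₀ ≤ κ) (hα : #α = κ)
    (P1 P2 Q1 Q2 A B : Set α)
    (hA : A = P1 ∪ P2) (hB : B = P1ᶜ)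
    (hP12 : ∀ x ∈ P1, x ∉ P2)
    (hQ1P2 : Q1 ⊆ P2) (hQ2P2 : Q2 ⊆ P2) (hQ12 : ∀ x ∈ Q1, x ∉ Q2)
    (hP1 : #↥P1 = κ) (hQ1 : #↥Q1 = κ) (hQ2 : #↥Q2 = κ) (hP3 : #↥Aᶜ = κ)
    (T : Set α) (hT : #↥T = κ) (hTc : #↥Tᶜ = κ) :
    ∃ π₁ π₂ π₃ π₄ : Equiv.Perm α, Supp π₁ B ∧ Supp π₂ A ∧ Supp π₃ B ∧ Supp π₄ A ∧
      π₄ '' (π₃ '' (π₂ '' (π₁ '' T))) = B := by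
  have hsetle : ∀ S : Set α, #↥S ≤ κ := fun S => hα ▸ Cardinal.mk_set_le S
  have hP2 : #↥P2 = κ := card_between hQ1P2 hQ1 (hsetle _)
  have hP2B : P2 ⊆ B := by intro x hx; rw [hB]; exact fun h => hP12 x h hx
  have hP3B : Aᶜ ⊆ B := by
    intro x hx; rw [hB]; intro h; exact hx (hA ▸ Or.inl h)
  have hP1A : P1 ⊆ A := hA ▸ Set.subset_union_left
  have hP2A : P2 ⊆ A := hA ▸ Set.subset_union_right
  have hQ1B : Q1 ⊆ B := hQ1P2.trans hP2B
  have hQ1A : Q1 ⊆ A := hQ1P2.trans hP2A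
  have hQ2B : Q2 ⊆ B := hQ2P2.trans hP2B
  have hQ2A : Q2 ⊆ A := hQ2P2.trans hP2A
  have huniv : ∀ x, x ∈ A ∨ x ∈ B := by
    intro x; by_cases h : x ∈ P1
    · exact Or.inl (hP1A h)
    · right; rw [hB]; exact h
  have himg : ∀ (π : Equiv.Perm α) (S X Y : Set α), Supp π S → π '' (X ∩ S) = Y →
      π '' X = (X \ S) ∪ Y := by
    intro π S X Y hsupp him
    conv_lhs => rw [← Set.diff_union_inter X S]
    rw [Set.image_union, him, Supp.image_of_subset_compl hsupp (fun x hx => hx.2)]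
  -- Phase 1
  obtain ⟨π₁, hπ₁, hT1A, hT1Ac⟩ : ∃ π₁ : Equiv.Perm α, Supp π₁ B ∧
      #↥((π₁ '' T) ∩ A) = κ ∧ #↥(A \ (π₁ '' T)) = κ := by
    by_cases hc : #↥(T ∩ A) = κ ∧ #↥(A \ T) = κ
    · have hid : (1 : Equiv.Perm α) '' T = T := by rw [Equiv.Perm.coe_one, Set.image_id]
      exact ⟨1, Supp.one B, by rw [hid]; exact hc.1, by rw [hid]; exact hc.2⟩
    · have hTB : #↥(T ∩ B) = κ := by
        rcases not_and_or.mp hc with h | h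
        · have hlt : #↥(T ∩ A) < κ := lt_of_le_of_ne (hsetle _) h
          by_contra hne
          have hlt2 : #↥(T ∩ B) < κ := lt_of_le_of_ne (hsetle _) hne
          have hsub : T ⊆ (T ∩ A) ∪ (T ∩ B) := by
            intro x hx; rcases huniv x with h' | h'
            exacts [Or.inl ⟨hx, h'⟩, Or.inr ⟨hx, h'⟩]
          have hge : κ ≤ #↥((T ∩ A) ∪ (T ∩ B)) := hT ▸ Cardinal.mk_le_mk_of_subset hsub
          have hfin := Cardinal.add_lt_of_lt hκ hlt hlt2
          exact absurd (lt_of_le_of_lt (le_trans hge (Cardinal.mk_union_le _ _)) hfin)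
            (lt_irrefl κ)
        · have hlt : #↥(A \ T) < κ := lt_of_le_of_ne (hsetle _) h
          have hP2T : #↥(P2 ∩ T) = κ := by
            by_contra hne
            have hlt2 : #↥(P2 ∩ T) < κ := lt_of_le_of_ne (hsetle _) hne
            have hsub : P2 ⊆ (P2 ∩ T) ∪ (A \ T) := by
              intro x hx; by_cases h' : x ∈ T
              exacts [Or.inl ⟨hx, h'⟩, Or.inr ⟨hP2A hx, h'⟩]
            have hge : κ ≤ #↥((P2 ∩ T) ∪ (A \ T)) := hP2 ▸ Cardinal.mk_le_mk_of_subset hsub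
            have hfin := Cardinal.add_lt_of_lt hκ hlt2 hlt
            exact absurd (lt_of_le_of_lt (le_trans hge (Cardinal.mk_union_le _ _)) hfin)
              (lt_irrefl κ)
          exact card_between (fun x hx => ⟨hx.2, hP2B hx.1⟩) hP2T (hsetle _)
      rcases eq_or_lt_of_le (hsetle (B \ T)) with hνκ | hνlt
      · obtain ⟨π₁, hs, him⟩ := exists_move B (T ∩ B) Q1 Set.inter_subset_right hQ1B
          (hTB.trans hQ1.symm)
          (by
            have e1 : B \ (T ∩ B) = B \ T := by
              ext x; simp only [Set.mem_diff, Set.mem_inter_iff]; tauto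
            have e2 : #↥(B \ Q1) = κ := card_between
              (fun x hx => ⟨hQ2B hx, fun h => hQ12 x h hx⟩) hQ2 (hsetle _)
            rw [e1, hνκ, e2])
        have hTim : π₁ '' T = (T \ B) ∪ Q1 := himg π₁ B T Q1 hs him
        refine ⟨π₁, hs, ?_, ?_⟩
        · rw [hTim]
          exact card_between (fun x hx => ⟨Or.inr hx, hQ1A hx⟩) hQ1 (hsetle _)
        · rw [hTim]
          refine card_between (Y := A \ ((T \ B) ∪ Q1)) ?_ hQ2 (hsetle _)
          intro x hx
          refine ⟨hQ2A hx, ?_⟩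
          rintro (⟨_, hxB⟩ | hxQ1)
          · exact hxB (hQ2B hx)
          · exact hQ12 x hxQ1 hx
      · have hP1T : #↥(P1 \ T) = κ := by
          by_contra hne
          have hlt2 : #↥(P1 \ T) < κ := lt_of_le_of_ne (hsetle _) hne
          have hsub : Tᶜ ⊆ (P1 \ T) ∪ (B \ T) := by
            intro x hx
            by_cases hp : x ∈ P1
            · exact Or.inl ⟨hp, hx⟩
            · exact Or.inr ⟨by rw [hB]; exact hp, hx⟩
          have hge : κ ≤ #↥((P1 \ T) ∪ (B \ T)) := hTc ▸ Cardinal.mk_le_mk_of_subset hsub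
          have hfin := Cardinal.add_lt_of_lt hκ hlt2 hνlt
          exact absurd (lt_of_le_of_lt (le_trans hge (Cardinal.mk_union_le _ _)) hfin)
            (lt_irrefl κ)
        obtain ⟨V, hVsub, hV⟩ := exists_subset_card Aᶜ (#↥(B \ T))
          (by rw [hP3]; exact le_of_lt hνlt)
        obtain ⟨π₁, hs, him⟩ := exists_move B (T ∩ B) (B \ V) Set.inter_subset_right
          Set.diff_subset
          (by
            rw [hTB]
            symm
            refine card_between (X := P2) ?_ hP2 (hsetle _)
            intro x hx; exact ⟨hP2B hx, fun hxV => (hVsub hxV) (hP2A hx)⟩)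
          (by
            have e1 : B \ (T ∩ B) = B \ T := by
              ext x; simp only [Set.mem_diff, Set.mem_inter_iff]; tauto
            have e2 : B \ (B \ V) = V := by
              ext x; constructor
              · rintro ⟨hxB, hxn⟩; by_contra hxV; exact hxn ⟨hxB, hxV⟩
              · intro hxV; exact ⟨hP3B (hVsub hxV), fun h => h.2 hxV⟩
            rw [e1, e2, hV])
        have hTim : π₁ '' T = (T \ B) ∪ (B \ V) := himg π₁ B T _ hs him
        refine ⟨π₁, hs, ?_, ?_⟩
        · rw [hTim]
          refine card_between (X := P2) ?_ hP2 (hsetle _)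
          intro x hx
          exact ⟨Or.inr ⟨hP2B hx, fun hxV => (hVsub hxV) (hP2A hx)⟩, hP2A hx⟩
        · rw [hTim]
          refine card_between (X := P1 \ T) ?_ hP1T (hsetle _)
          rintro x ⟨hxP1, hxT⟩
          refine ⟨hP1A hxP1, ?_⟩
          rintro (⟨hxT', _⟩ | ⟨hxB, _⟩)
          · exact hxT hxT'
          · rw [hB] at hxB; exact hxB hxP1
  -- Phase 2
  set T₁ := π₁ '' T with hT₁def
  obtain ⟨π₂, hπ₂, him2⟩ := exists_move A (T₁ ∩ A) Q1 Set.inter_subset_right hQ1A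
    (hT1A.trans hQ1.symm)
    (by
      have e1 : A \ (T₁ ∩ A) = A \ T₁ := by
        ext x; simp only [Set.mem_diff, Set.mem_inter_iff]; tauto
      have e2 : #↥(A \ Q1) = κ := card_between
        (fun x hx => ⟨hP1A hx, fun h => hP12 x hx (hQ1P2 h)⟩) hP1 (hsetle _)
      rw [e1, hT1Ac, e2])
  have hT2im : π₂ '' T₁ = (T₁ \ A) ∪ Q1 := himg π₂ A T₁ Q1 hπ₂ him2
  set T₂ : Set α := (T₁ \ A) ∪ Q1 with hT₂def
  have hT2B : T₂ ⊆ B := by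
    rintro x (⟨_, hxA⟩ | hxQ)
    exacts [hP3B hxA, hQ1B hxQ]
  have hT2card : #↥T₂ = κ := card_between Set.subset_union_right hQ1 (hsetle _)
  -- Phase 3
  obtain ⟨C, hCsub, hC⟩ := exists_subset_card Q2 (#↥(B \ T₂)) (by rw [hQ2]; exact hsetle _)
  obtain ⟨π₃, hπ₃, him3⟩ := exists_move B (T₂ ∩ B) (Aᶜ ∪ (P2 \ C))
    Set.inter_subset_right
    (by rintro x (h | h); exacts [hP3B h, hP2B h.1])
    (by
      have e1 : T₂ ∩ B = T₂ := Set.inter_eq_self_of_subset_left hT2B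
      have e2 : #↥(Aᶜ ∪ (P2 \ C)) = κ := card_between Set.subset_union_left hP3 (hsetle _)
      rw [e1, hT2card, e2])
    (by
      have e1 : B \ (T₂ ∩ B) = B \ T₂ := by
        ext x; simp only [Set.mem_diff, Set.mem_inter_iff]; tauto
      have e2 : B \ (Aᶜ ∪ (P2 \ C)) = C := by
        ext x; constructor
        · rintro ⟨hxB, hxn⟩
          have hxA : x ∈ A := by by_contra h; exact hxn (Or.inl h)
          have hxP2 : x ∈ P2 := by
            rcases (hA ▸ hxA : x ∈ P1 ∪ P2) with h | h
            · rw [hB] at hxB; exact absurd h hxB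
            · exact h
          by_contra hxC
          exact hxn (Or.inr ⟨hxP2, hxC⟩)
        · intro hxC
          have hxP2 := hQ2P2 (hCsub hxC)
          refine ⟨hP2B hxP2, ?_⟩
          rintro (h | ⟨_, h⟩)
          exacts [h (hP2A hxP2), h hxC]
      rw [e1, e2, hC])
  have hT3im : π₃ '' T₂ = (T₂ \ B) ∪ (Aᶜ ∪ (P2 \ C)) := himg π₃ B T₂ _ hπ₃ him3
  have hT2diff : T₂ \ B = ∅ := Set.diff_eq_empty.mpr hT2B
  set T₃ : Set α := Aᶜ ∪ (P2 \ C) with hT₃def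
  have hT3im' : π₃ '' T₂ = T₃ := by rw [hT3im, hT2diff, Set.empty_union]
  -- Phase 4
  obtain ⟨π₄, hπ₄, him4⟩ := exists_move A (T₃ ∩ A) P2 Set.inter_subset_right hP2A
    (by
      have e1 : T₃ ∩ A = P2 \ C := by
        ext x; constructor
        · rintro ⟨h | h, hxA⟩
          exacts [absurd hxA h, h]
        · intro h; exact ⟨Or.inr h, hP2A h.1⟩
      have e2 : #↥(P2 \ C) = κ := card_between
        (fun x hx => ⟨hQ1P2 hx, fun hC' => hQ12 x hx (hCsub hC')⟩) hQ1 (hsetle _)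
      rw [e1, e2, hP2])
    (by
      have e1 : A \ (T₃ ∩ A) = P1 ∪ C := by
        ext x; constructor
        · rintro ⟨hxA, hxn⟩
          rcases (hA ▸ hxA : x ∈ P1 ∪ P2) with h | h
          · exact Or.inl h
          · right; by_contra hxC
            exact hxn ⟨Or.inr ⟨h, hxC⟩, hxA⟩
        · rintro (h | h)
          · refine ⟨hP1A h, ?_⟩
            rintro ⟨hh | hh, hxA⟩
            · exact hh hxA
            · exact hP12 x h hh.1
          · refine ⟨hP2A (hQ2P2 (hCsub h)), ?_⟩
            rintro ⟨hh | hh, _⟩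
            · exact hh (hP2A (hQ2P2 (hCsub h)))
            · exact hh.2 h
      have e2 : A \ P2 = P1 := by
        ext x; constructor
        · rintro ⟨hxA, hxn⟩
          rcases (hA ▸ hxA : x ∈ P1 ∪ P2) with h | h
          exacts [h, absurd h hxn]
        · intro h; exact ⟨hP1A h, hP12 x h⟩
      have e3 : #↥(P1 ∪ C) = κ := card_between Set.subset_union_left hP1 (hsetle _)
      rw [e1, e2, e3, hP1])
  have hT4im : π₄ '' T₃ = (T₃ \ A) ∪ P2 := himg π₄ A T₃ P2 hπ₄ him4
  have hT3diff : T₃ \ A = Aᶜ := by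
    ext x; constructor
    · rintro ⟨h | h, hxA⟩
      exacts [h, absurd (hP2A h.1) hxA]
    · intro h; exact ⟨Or.inl h, h⟩
  have hfinal : π₄ '' T₃ = B := by
    rw [hT4im, hT3diff, hB]
    ext x; constructor
    · rintro (h | h)
      · exact fun hP => h (hP1A hP)
      · exact fun hP => hP12 x hP h
    · intro hx
      by_cases hxA : x ∈ A
      · rcases (hA ▸ hxA : x ∈ P1 ∪ P2) with h' | h'
        exacts [absurd h' hx, Or.inr h']
      · exact Or.inl hxA
  exact ⟨π₁, π₂, π₃, π₄, hπ₁, hπ₂, hπ₃, hπ₄, by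
    rw [hT2im, hT3im', hfinal]⟩

def fK [DecidableEq I] (i₁ : I) : KK I → KK I := fun k =>
  match k with
  | Sum.inl (some i) => if i = i₁ then Sum.inl (some i) else Sum.inr (some i)
  | Sum.inr (some i) => if i = i₁ then Sum.inr (some i) else Sum.inl (some i)
  | Sum.inl none => Sum.inl none
  | Sum.inr none => Sum.inr none

lemma fK_invol [DecidableEq I] (i₁ : I) : Function.Involutive (fK (I := I) i₁) := by
  intro k
  rcases k with (_ | i) | (_ | i)
  · rfl
  · by_cases h : i = i₁ <;> simp [fK, h]
  · rfl
  · by_cases h : i = i₁ <;> simp [fK, h]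

theorem core [Infinite W] (hIW : #I ≤ #W)
    (G : I → Subgroup (Equiv.Perm (OmegaT I W)))
    (hchain : ∀ i j, G i ≤ G j ∨ G j ≤ G i)
    (hcover : ∀ f, ∃ i, f ∈ G i) :
    ∃ i, ∀ f, f ∈ G i := by
  classical
  have hub : ∀ i j, ∃ k, G i ≤ G k ∧ G j ≤ G k := by
    intro i j; rcases hchain i j with h | h
    · exact ⟨j, h, le_rfl⟩
    · exact ⟨i, le_rfl, h⟩
  obtain ⟨i₁, hrich⟩ := exists_rich G hcover
  set k₁ : KK I := Sum.inl (some i₁) with hk₁def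
  set RR : Set (OmegaT I W) := {x | ∃ j, j ≠ i₁ ∧ idx x = some j} with hRRdef
  have hpart : ∀ x : OmegaT I W, x ∈ SigS i₁ ∨ x ∈ TS ∨ x ∈ RR := by
    intro x
    rcases h : idx x with _ | j
    · exact Or.inr (Or.inl h)
    · by_cases hj : j = i₁
      · exact Or.inl (show idx x = some i₁ by rw [h, hj])
      · exact Or.inr (Or.inr ⟨j, hj, h⟩)
  have hST : ∀ x : OmegaT I W, x ∈ SigS i₁ → x ∉ TS := by
    intro x hx hx'
    have h1 : idx x = some i₁ := hx
    have h2 : idx x = none := hx'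
    rw [h1] at h2; cases h2
  have hSR : ∀ x : OmegaT I W, x ∈ SigS i₁ → x ∉ RR := by
    rintro x hx ⟨j, hj, hj2⟩
    have h1 : idx x = some i₁ := hx
    rw [h1] at hj2
    exact hj (Option.some.inj hj2).symm
  have hTR : ∀ x : OmegaT I W, x ∈ TS → x ∉ RR := by
    rintro x hx ⟨j, hj, hj2⟩
    have h1 : idx x = none := hx
    rw [h1] at hj2; cases hj2
  -- the block swap v
  set vK : Equiv.Perm (KK I) := (fK_invol i₁).toPerm with hvK
  set v : Equiv.Perm (OmegaT I W) :=
    Equiv.prodCongr (Equiv.prodCongr vK (Equiv.refl ℤ)) (Equiv.refl _) with hvdef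
  have hv_apply : ∀ x : OmegaT I W, v x = ((fK i₁ x.1.1, x.1.2), x.2) := by
    rintro ⟨⟨k, n⟩, f⟩; rfl
  have hv_invol : ∀ x, v (v x) = x := by
    rintro ⟨⟨k, n⟩, f⟩
    rw [hv_apply, hv_apply]
    show ((fK i₁ (fK i₁ k), n), f) = ((k, n), f)
    rw [fK_invol i₁ k]
  have hvS : ∀ x ∈ SigS (W := W) i₁, v x = x := by
    rintro ⟨⟨k, n⟩, f⟩ hx
    have hk : k = k₁ := idx_eq_some_iff.mp hx
    subst hk
    rw [hv_apply]
    show ((fK i₁ k₁, n), f) = _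
    have : fK i₁ k₁ = k₁ := by rw [hk₁def]; simp [fK]
    rw [this]
  have hvR : ∀ x ∈ RR, v x ∈ TS (I := I) (W := W) := by
    rintro ⟨⟨k, n⟩, f⟩ ⟨j, hj, hjeq⟩
    have hk : k = Sum.inl (some j) := idx_eq_some_iff.mp hjeq
    subst hk
    rw [hv_apply]
    show idx _ = none
    have : fK i₁ (Sum.inl (some j)) = Sum.inr (some j) := by simp [fK, hj]
    show Sum.elim id (fun _ => none) (fK i₁ (Sum.inl (some j))) = none
    rw [this]; rfl
  obtain ⟨av, hav⟩ := hcover v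
  obtain ⟨i₃, h13, hav3⟩ := hub i₁ av
  have hvmem : v ∈ G i₃ := hav3 hav
  -- commutators of block-supported permutations
  have Hcomm : ∀ σ ρ : Equiv.Perm (OmegaT I W), Supp σ (SigS i₁) → Supp ρ (SigS i₁) →
      σ * ρ * σ⁻¹ * ρ⁻¹ ∈ G i₃ := by
    intro σ ρ hσ hρ
    obtain ⟨E1, hE1mem, hE1S, hE1T⟩ := hrich σ hσ
    obtain ⟨E2, hE2mem, hE2S, hE2T⟩ := hrich ρ hρ
    have hkey := comm_key hpart hST hSR hTR σ ρ E1 E2 v hσ hρ hE1S hE1T hE2S hE2T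
      hv_invol hvS hvR
    rw [← hkey]
    have h1 : E1 ∈ G i₃ := h13 hE1mem
    have h2 : E2 ∈ G i₃ := h13 hE2mem
    exact mul_mem (mul_mem (mul_mem (mul_mem (mul_mem hvmem h1) hvmem) h2)
      (mul_mem (mul_mem hvmem (inv_mem h1)) hvmem)) (inv_mem h2)
  -- Step C : all permutations supported on the 0-block Δ are in G i₃
  have hSA : ∀ τ : Equiv.Perm (OmegaT I W),
      Supp τ {x : OmegaT I W | x.1 = (k₁, (0:ℤ))} → τ ∈ G i₃ := by
    intro τ hτ
    have hbase : ∀ f : Bool × Fin 3 × W, (τ ((k₁, (0:ℤ)), f)).1 = (k₁, 0) :=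
      fun f => hτ.mem_iff.mpr rfl
    have hbase' : ∀ f : Bool × Fin 3 × W, (τ⁻¹ ((k₁, (0:ℤ)), f)).1 = (k₁, 0) :=
      fun f => (Supp.inv hτ).mem_iff.mpr rfl
    let π : Equiv.Perm (Bool × Fin 3 × W) :=
      { toFun := fun f => (τ ((k₁, (0:ℤ)), f)).2
        invFun := fun f => (τ⁻¹ ((k₁, (0:ℤ)), f)).2
        left_inv := by
          intro f
          have h1 : τ ((k₁, (0:ℤ)), f) = ((k₁, (0:ℤ)), (τ ((k₁, (0:ℤ)), f)).2) :=
            Prod.ext (hbase f) rfl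
          show (τ⁻¹ ((k₁, (0:ℤ)), (τ ((k₁, (0:ℤ)), f)).2)).2 = f
          rw [← h1, Equiv.Perm.inv_def, Equiv.symm_apply_apply]
        right_inv := by
          intro f
          have h1 : τ⁻¹ ((k₁, (0:ℤ)), f) = ((k₁, (0:ℤ)), (τ⁻¹ ((k₁, (0:ℤ)), f)).2) :=
            Prod.ext (hbase' f) rfl
          show (τ ((k₁, (0:ℤ)), (τ⁻¹ ((k₁, (0:ℤ)), f)).2)).2 = f
          rw [← h1, Equiv.Perm.inv_def, Equiv.apply_symm_apply] }
    have hπτ : ∀ f, τ ((k₁, (0:ℤ)), f) = ((k₁, (0:ℤ)), π f) :=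
      fun f => Prod.ext (hbase f) rfl
    obtain ⟨t, htf, htb⟩ : ∃ t : Equiv.Perm (OmegaT I W),
        (∀ (k : KK I) (n : ℤ) (f : Bool × Fin 3 × W),
          t ((k, n), f) = ((k, if k = k₁ then n + 1 else n), f)) ∧
        (∀ (k : KK I) (n : ℤ) (f : Bool × Fin 3 × W),
          t⁻¹ ((k, n), f) = ((k, if k = k₁ then n - 1 else n), f)) := by
      refine ⟨{ toFun := fun x => ((x.1.1, if x.1.1 = k₁ then x.1.2 + 1 else x.1.2), x.2),
                invFun := fun x => ((x.1.1, if x.1.1 = k₁ then x.1.2 - 1 else x.1.2), x.2),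
                left_inv := ?_, right_inv := ?_ }, fun k n f => rfl, fun k n f => rfl⟩
      · rintro ⟨⟨k, n⟩, f⟩; by_cases h : k = k₁ <;> simp [h]
      · rintro ⟨⟨k, n⟩, f⟩; by_cases h : k = k₁ <;> simp [h]
    obtain ⟨s, hsf, hsb⟩ : ∃ s : Equiv.Perm (OmegaT I W),
        (∀ (k : KK I) (n : ℤ) (f : Bool × Fin 3 × W),
          s ((k, n), f) = ((k, n), if k = k₁ ∧ 0 ≤ n then π f else f)) ∧
        (∀ (k : KK I) (n : ℤ) (f : Bool × Fin 3 × W),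
          s⁻¹ ((k, n), f) = ((k, n), if k = k₁ ∧ 0 ≤ n then π.symm f else f)) := by
      refine ⟨{ toFun := fun x => (x.1, if x.1.1 = k₁ ∧ 0 ≤ x.1.2 then π x.2 else x.2),
                invFun := fun x => (x.1, if x.1.1 = k₁ ∧ 0 ≤ x.1.2 then π.symm x.2 else x.2),
                left_inv := ?_, right_inv := ?_ }, fun k n f => rfl, fun k n f => rfl⟩
      · rintro ⟨⟨k, n⟩, f⟩; by_cases h : k = k₁ ∧ 0 ≤ n <;> simp [h]
      · rintro ⟨⟨k, n⟩, f⟩; by_cases h : k = k₁ ∧ 0 ≤ n <;> simp [h]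
    have hts : Supp t (SigS i₁) := by
      rintro ⟨⟨k, n⟩, f⟩ hx
      have hk : k ≠ k₁ := by
        intro h
        exact hx (show idx ((k,n),f) = some i₁ from idx_eq_some_iff.mpr h)
      rw [htf, if_neg hk]
    have hss : Supp s (SigS i₁) := by
      rintro ⟨⟨k, n⟩, f⟩ hx
      have hk : k ≠ k₁ := by
        intro h
        exact hx (show idx ((k,n),f) = some i₁ from idx_eq_some_iff.mpr h)
      rw [hsf, if_neg (by tauto)]
    have hcommeq : τ = s * t * s⁻¹ * t⁻¹ := by
      apply Equiv.ext
      rintro ⟨⟨k, n⟩, f⟩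
      simp only [Equiv.Perm.mul_apply]
      by_cases hk : k = k₁
      · subst hk
        by_cases h0 : (0:ℤ) ≤ n - 1
        · have e1 : t⁻¹ ((k₁, n), f) = ((k₁, n - 1), f) := by rw [htb, if_pos rfl]
          have e2 : s⁻¹ ((k₁, n - 1), f) = ((k₁, n - 1), π.symm f) := by
            rw [hsb, if_pos ⟨rfl, h0⟩]
          have e3 : t ((k₁, n - 1), π.symm f) = ((k₁, n), π.symm f) := by
            rw [htf, if_pos rfl]
            have hn1 : n - 1 + 1 = n := by omega
            rw [hn1]
          have e4 : s ((k₁, n), π.symm f) = ((k₁, n), f) := by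
            rw [hsf, if_pos ⟨rfl, by omega⟩]; rw [Equiv.apply_symm_apply]
          have e5 : τ ((k₁, n), f) = ((k₁, n), f) := by
            apply hτ
            intro hmem
            have hn : n = (0:ℤ) :=
              congrArg Prod.snd (show ((k₁:KK I), n) = (k₁, (0:ℤ)) from hmem)
            omega
          rw [e1, e2, e3, e4, e5]
        · by_cases h1 : (0:ℤ) ≤ n
          · have hn0 : n = 0 := by omega
            subst hn0
            have e1 : t⁻¹ ((k₁, (0:ℤ)), f) = ((k₁, (0:ℤ) - 1), f) := by
              rw [htb, if_pos rfl]
            have e2 : s⁻¹ ((k₁, (0:ℤ) - 1), f) = ((k₁, (0:ℤ) - 1), f) := by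
              rw [hsb, if_neg (by simp)]
            have e3 : t ((k₁, (0:ℤ) - 1), f) = ((k₁, (0:ℤ)), f) := by
              rw [htf, if_pos rfl]
              norm_num
            have e4 : s ((k₁, (0:ℤ)), f) = ((k₁, (0:ℤ)), π f) := by
              rw [hsf, if_pos ⟨rfl, le_refl 0⟩]
            rw [e1, e2, e3, e4, hπτ]
          · have e1 : t⁻¹ ((k₁, n), f) = ((k₁, n - 1), f) := by rw [htb, if_pos rfl]
            have e2 : s⁻¹ ((k₁, n - 1), f) = ((k₁, n - 1), f) := by
              rw [hsb, if_neg (by tauto)]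
            have e3 : t ((k₁, n - 1), f) = ((k₁, n), f) := by
              rw [htf, if_pos rfl]
              have hn1 : n - 1 + 1 = n := by omega
              rw [hn1]
            have e4 : s ((k₁, n), f) = ((k₁, n), f) := by
              rw [hsf, if_neg (by tauto)]
            have e5 : τ ((k₁, n), f) = ((k₁, n), f) := by
              apply hτ
              intro hmem
              have hn : n = (0:ℤ) :=
                congrArg Prod.snd (show ((k₁:KK I), n) = (k₁, (0:ℤ)) from hmem)
              omega
            rw [e1, e2, e3, e4, e5]
      · have e1 : t⁻¹ ((k, n), f) = ((k, n), f) := by rw [htb, if_neg hk]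
        have e2 : s⁻¹ ((k, n), f) = ((k, n), f) := by
          rw [hsb, if_neg (by tauto)]
        have e3 : t ((k, n), f) = ((k, n), f) := by rw [htf, if_neg hk]
        have e4 : s ((k, n), f) = ((k, n), f) := by
          rw [hsf, if_neg (by tauto)]
        have e5 : τ ((k, n), f) = ((k, n), f) := by
          apply hτ
          intro hmem
          exact hk (congrArg Prod.fst (show ((k:KK I), n) = (k₁, (0:ℤ)) from hmem))
        rw [e1, e2, e3, e4, e5]
    rw [hcommeq]
    exact Hcomm s t hss hts
  -- Step D
  set A : Set (OmegaT I W) := {x | x.1 = (k₁, (0:ℤ))} with hAdef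
  set P1 : Set (OmegaT I W) := {x | x.1 = (k₁, (0:ℤ)) ∧ x.2.1 = false} with hP1def
  set P2 : Set (OmegaT I W) := {x | x.1 = (k₁, (0:ℤ)) ∧ x.2.1 = true} with hP2def
  set Q1 : Set (OmegaT I W) :=
    {x | x.1 = (k₁, (0:ℤ)) ∧ x.2.1 = true ∧ x.2.2.1 = (0 : Fin 3)} with hQ1def
  set Q2 : Set (OmegaT I W) :=
    {x | x.1 = (k₁, (0:ℤ)) ∧ x.2.1 = true ∧ x.2.2.1 = (1 : Fin 3)} with hQ2def
  set B : Set (OmegaT I W) := P1ᶜ with hBdef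
  have hP1A : P1 ⊆ A := fun x hx => hx.1
  have hAPP : A = P1 ∪ P2 := by
    ext x; constructor
    · intro hx
      cases hb : x.2.1
      · exact Or.inl ⟨hx, hb⟩
      · exact Or.inr ⟨hx, hb⟩
    · rintro (h | h) <;> exact h.1
  have hP12 : ∀ x ∈ P1, x ∉ P2 := by
    rintro x ⟨_, h1⟩ ⟨_, h2⟩
    rw [h1] at h2; cases h2
  have hQ1P2 : Q1 ⊆ P2 := fun x hx => ⟨hx.1, hx.2.1⟩
  have hQ2P2 : Q2 ⊆ P2 := fun x hx => ⟨hx.1, hx.2.1⟩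
  have hQ12 : ∀ x ∈ Q1, x ∉ Q2 := by
    rintro x ⟨_, _, h1⟩ ⟨_, _, h2⟩
    rw [h1] at h2
    exact absurd h2 (by decide)
  -- cardinalities
  have hκΩ : #(OmegaT I W) = #W := card_OmegaT hIW
  have hcardA : #↥A = #W := by
    have eA : ↥A ≃ (Bool × Fin 3 × W) :=
      { toFun := fun x => x.1.2
        invFun := fun f => ⟨((k₁, (0:ℤ)), f), rfl⟩
        left_inv := by rintro ⟨⟨b, f⟩, h⟩; apply Subtype.ext; show ((k₁, (0:ℤ)), f) = (b, f); rw [show b = (k₁, (0:ℤ)) from h]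
        right_inv := fun f => rfl }
    exact (Cardinal.mk_congr eA).trans card_fib
  have hcardP1 : #↥P1 = #W := by
    have eP1 : ↥P1 ≃ (Fin 3 × W) :=
      { toFun := fun x => x.1.2.2
        invFun := fun f => ⟨((k₁, (0:ℤ)), (false, f)), rfl, rfl⟩
        left_inv := by
          rintro ⟨⟨b, c, f⟩, h1, h2⟩
          apply Subtype.ext
          show ((k₁, (0:ℤ)), (false, f)) = (b, (c, f))
          rw [show b = (k₁, (0:ℤ)) from h1, show c = false from h2]
        right_inv := fun f => rfl }
    exact (Cardinal.mk_congr eP1).trans card_fin3W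
  have hcardQ1 : #↥Q1 = #W := by
    have eQ1 : ↥Q1 ≃ W :=
      { toFun := fun x => x.1.2.2.2
        invFun := fun w => ⟨((k₁, (0:ℤ)), (true, ((0 : Fin 3), w))), rfl, rfl, rfl⟩
        left_inv := by
          rintro ⟨⟨b, c, q, w⟩, h1, h2, h3⟩
          apply Subtype.ext
          show ((k₁, (0:ℤ)), (true, ((0 : Fin 3), w))) = (b, (c, (q, w)))
          rw [show b = (k₁, (0:ℤ)) from h1, show c = true from h2, show q = (0 : Fin 3) from h3]
        right_inv := fun w => rfl }
    exact Cardinal.mk_congr eQ1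
  have hcardQ2 : #↥Q2 = #W := by
    have eQ2 : ↥Q2 ≃ W :=
      { toFun := fun x => x.1.2.2.2
        invFun := fun w => ⟨((k₁, (0:ℤ)), (true, ((1 : Fin 3), w))), rfl, rfl, rfl⟩
        left_inv := by
          rintro ⟨⟨b, c, q, w⟩, h1, h2, h3⟩
          apply Subtype.ext
          show ((k₁, (0:ℤ)), (true, ((1 : Fin 3), w))) = (b, (c, (q, w)))
          rw [show b = (k₁, (0:ℤ)) from h1, show c = true from h2, show q = (1 : Fin 3) from h3]
        right_inv := fun w => rfl }
    exact Cardinal.mk_congr eQ2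
  have hcardAc : #↥Aᶜ = #W := by
    have eAc : ↥Aᶜ ≃ ({b : KK I × ℤ // b ≠ (k₁, (0:ℤ))} × (Bool × Fin 3 × W)) :=
      { toFun := fun x => (⟨x.1.1, x.2⟩, x.1.2)
        invFun := fun p => ⟨(p.1.1, p.2), p.1.2⟩
        left_inv := by rintro ⟨⟨b, f⟩, h⟩; rfl
        right_inv := by rintro ⟨⟨b, h⟩, f⟩; rfl }
    have hN : #({b : KK I × ℤ // b ≠ (k₁, (0:ℤ))}) ≤ #W :=
      le_trans (Cardinal.mk_subtype_le _) (card_base_le hIW)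
    haveI : Nonempty {b : KK I × ℤ // b ≠ (k₁, (0:ℤ))} :=
      ⟨⟨(Sum.inr none, 0), by simp [hk₁def]⟩⟩
    exact (Cardinal.mk_congr eAc).trans (card_mul_W _ _ hN card_fib)
  have hcardB : #↥B = #W := by
    refine card_between (Set.compl_subset_compl.mpr hP1A) hcardAc ?_
    rw [← hκΩ]; exact Cardinal.mk_set_le B
  have hcardBc : #↥Bᶜ = #W := by
    rw [hBdef, compl_compl]; exact hcardP1
  -- u
  obtain ⟨eqAB⟩ := Cardinal.eq.mp (hcardA.trans hcardB.symm)
  obtain ⟨eqcc⟩ := Cardinal.eq.mp (hcardAc.trans hcardBc.symm)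
  set cA : OmegaT I W → Bool := fun x => if x ∈ A then true else false with hcAdef
  set dB : OmegaT I W → Bool := fun x => if x ∈ B then true else false with hdBdef
  have hcAt : ∀ x, cA x = true ↔ x ∈ A := by
    intro x; by_cases h : x ∈ A <;> simp [hcAdef, h]
  have hcAf : ∀ x, cA x = false ↔ x ∈ Aᶜ := by
    intro x; by_cases h : x ∈ A <;> simp [hcAdef, h]
  have hdBt : ∀ x, dB x = true ↔ x ∈ B := by
    intro x; by_cases h : x ∈ B <;> simp [hdBdef, h]
  have hdBf : ∀ x, dB x = false ↔ x ∈ Bᶜ := by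
    intro x; by_cases h : x ∈ B <;> simp [hdBdef, h]
  let eu : ∀ b : Bool, {x // cA x = b} ≃ {x // dB x = b} := fun b =>
    match b with
    | true => (Equiv.subtypeEquivRight hcAt).trans (eqAB.trans (Equiv.subtypeEquivRight hdBt).symm)
    | false => (Equiv.subtypeEquivRight hcAf).trans (eqcc.trans (Equiv.subtypeEquivRight hdBf).symm)
  set u : Equiv.Perm (OmegaT I W) := glueF cA dB eu with hudef
  have hu1 : ∀ x ∈ A, u x ∈ B := by
    intro x hx
    have h := glueF_class cA dB eu x
    rw [(hcAt x).mpr hx] at h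
    exact (hdBt _).mp h
  have hu2 : ∀ x, x ∉ A → u x ∉ B := by
    intro x hx
    have h := glueF_class cA dB eu x
    rw [(hcAf x).mpr hx] at h
    exact (hdBf _).mp h
  obtain ⟨au, hau⟩ := hcover u
  obtain ⟨i₄, h34, hau4⟩ := hub i₃ au
  have humem : u ∈ G i₄ := hau4 hau
  have hSA4 : ∀ τ, Supp τ A → τ ∈ G i₄ := fun τ h => h34 (hSA τ h)
  have hSB4 : ∀ β, Supp β B → β ∈ G i₄ := by
    intro β hβ
    have hτ : Supp (u⁻¹ * β * u) A := by
      intro x hx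
      have hu : u x ∉ B := hu2 x hx
      simp only [Equiv.Perm.mul_apply]
      rw [hβ _ hu, Equiv.Perm.inv_def, Equiv.symm_apply_apply]
    have hbeq : β = u * (u⁻¹ * β * u) * u⁻¹ := by group
    rw [hbeq]
    exact mul_mem (mul_mem humem (hSA4 _ hτ)) (inv_mem humem)
  -- final step: every permutation is in G i₄
  refine ⟨i₄, fun g => ?_⟩
  have hTcard : #↥(⇑g '' B) = #W := by
    rw [Cardinal.mk_image_eq g.injective]; exact hcardB
  have hTccard : #↥((⇑g '' B)ᶜ) = #W := by
    rw [← Set.image_compl_eq g.bijective, Cardinal.mk_image_eq g.injective]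
    exact hcardBc
  obtain ⟨π₁, π₂, π₃, π₄, h1, h2, h3, h4, him⟩ :=
    shuffle (κ := #W) (Cardinal.aleph0_le_mk W) hκΩ P1 P2 Q1 Q2 A B
      hAPP hBdef hP12 hQ1P2 hQ2P2 hQ12 hcardP1 hcardQ1 hcardQ2 hcardAc
      (⇑g '' B) hTcard hTccard
  set h : Equiv.Perm (OmegaT I W) := π₄ * π₃ * π₂ * π₁ with hhdef
  set φ : Equiv.Perm (OmegaT I W) := h * g with hφdef
  have himgφ : ⇑φ '' B = B := by
    have : ⇑φ '' B = π₄ '' (π₃ '' (π₂ '' (π₁ '' (⇑g '' B)))) := by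
      rw [hφdef, hhdef]
      rw [Equiv.Perm.coe_mul, Equiv.Perm.coe_mul, Equiv.Perm.coe_mul, Equiv.Perm.coe_mul,
        Set.image_comp, Set.image_comp, Set.image_comp, Set.image_comp]
    rw [this, him]
  have hφB : ∀ x, x ∈ B ↔ φ x ∈ B := by
    intro x; constructor
    · intro hx; rw [← himgφ]; exact ⟨x, hx, rfl⟩
    · intro hx
      rw [← himgφ] at hx
      obtain ⟨y, hy, hxy⟩ := hx
      rwa [← φ.injective hxy]
  have hφP1 : ∀ x, x ∈ P1 ↔ φ x ∈ P1 := by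
    intro x
    have hBc : ∀ y : OmegaT I W, y ∈ P1 ↔ y ∉ B := by
      intro y; rw [hBdef]; simp
    rw [hBc, hBc]
    exact not_congr (hφB x)
  have hdecomp : φ = Equiv.Perm.ofSubtype (φ.subtypePerm (fun x => (hφB x).symm)) *
      Equiv.Perm.ofSubtype (φ.subtypePerm (fun x => (hφP1 x).symm)) := by
    apply Equiv.ext
    intro x
    simp only [Equiv.Perm.mul_apply]
    by_cases hx : x ∈ B
    · have hxP1 : x ∉ P1 := by rw [hBdef] at hx; exact hx
      rw [Equiv.Perm.ofSubtype_apply_of_not_mem (φ.subtypePerm (fun x => (hφP1 x).symm)) hxP1,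
        Equiv.Perm.ofSubtype_apply_of_mem (φ.subtypePerm (fun x => (hφB x).symm)) hx]
      rfl
    · have hxP1 : x ∈ P1 := by rw [hBdef] at hx; exact not_not.mp hx
      rw [Equiv.Perm.ofSubtype_apply_of_mem (φ.subtypePerm (fun x => (hφP1 x).symm)) hxP1]
      have hval : ((φ.subtypePerm (fun x => (hφP1 x).symm)) ⟨x, hxP1⟩ : OmegaT I W) = φ x := rfl
      rw [hval]
      have hφxB : φ x ∉ B := by
        rw [hBdef]
        exact not_not.mpr ((hφP1 x).mp hxP1)
      rw [Equiv.Perm.ofSubtype_apply_of_not_mem (φ.subtypePerm (fun x => (hφB x).symm)) hφxB]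
  have hg : g = h⁻¹ * φ := by rw [hφdef]; group
  have hhmem : h ∈ G i₄ := by
    rw [hhdef]
    exact mul_mem (mul_mem (mul_mem (hSA4 _ h4) (hSB4 _ h3)) (hSA4 _ h2)) (hSB4 _ h1)
  have hbmem : Equiv.Perm.ofSubtype (φ.subtypePerm (fun x => (hφB x).symm)) ∈ G i₄ :=
    hSB4 _ (fun x hx => Equiv.Perm.ofSubtype_apply_of_not_mem _ hx)
  have hamem : Equiv.Perm.ofSubtype (φ.subtypePerm (fun x => (hφP1 x).symm)) ∈ G i₄ := by
    apply hSA4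
    intro x hx
    exact Equiv.Perm.ofSubtype_apply_of_not_mem _ (fun hh => hx (hP1A hh))
  rw [hg, hdecomp]
  exact mul_mem (inv_mem hhmem) (mul_mem hbmem hamem)

def permCongrMul {α β : Type*} (e : α ≃ β) : Equiv.Perm α ≃* Equiv.Perm β :=
  { Equiv.permCongr e with
    map_mul' := by
      intro f g
      apply Equiv.ext
      intro x
      simp [Equiv.permCongr_apply, Equiv.Perm.mul_apply] }

theorem main_subgroup {Ω : Type u} {I : Type u} [Infinite Ω]
    (H : I → Subgroup (Equiv.Perm Ω))
    (hchain : ∀ i j, H i ≤ H j ∨ H j ≤ H i)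
    (hcard : #I ≤ #Ω)
    (hcover : ∀ f, ∃ i, f ∈ H i) :
    ∃ i, ∀ f, f ∈ H i := by
  obtain ⟨e⟩ : Nonempty (OmegaT I Ω ≃ Ω) := Cardinal.eq.mp (card_OmegaT hcard)
  let ψ := permCongrMul e
  let G : I → Subgroup (Equiv.Perm (OmegaT I Ω)) := fun i => (H i).comap ψ.toMonoidHom
  have hchain' : ∀ i j, G i ≤ G j ∨ G j ≤ G i := by
    intro i j; rcases hchain i j with h | h
    · exact Or.inl fun x hx => h hx
    · exact Or.inr fun x hx => h hx
  have hcover' : ∀ f, ∃ i, f ∈ G i := by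
    intro f
    obtain ⟨i, hi⟩ := hcover (ψ f)
    exact ⟨i, hi⟩
  obtain ⟨i, hi⟩ := core hcard G hchain' hcover'
  refine ⟨i, fun f => ?_⟩
  have h2 : ψ (ψ.symm f) ∈ H i := hi (ψ.symm f)
  rwa [MulEquiv.apply_symm_apply] at h2

end MN

theorem stmt5 {Ω : Type u} [Infinite Ω] {I : Type u} (M : I → Submonoid (Equiv.Perm Ω))
    (hchain : ∀ i j, M i ≤ M j ∨ M j ≤ M i)
    (hcard : Cardinal.mk I ≤ Cardinal.mk Ω)
    (hcover : ∀ f : Equiv.Perm Ω, ∃ i, f ∈ M i) :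
    ∃ i : I, M i = ⊤ := by
  classical
  let H : I → Subgroup (Equiv.Perm Ω) := fun i =>
    { carrier := {f | f ∈ M i ∧ f⁻¹ ∈ M i}
      one_mem' := ⟨one_mem _, by rw [inv_one]; exact one_mem _⟩
      mul_mem' := by
        rintro a b ⟨ha1, ha2⟩ ⟨hb1, hb2⟩
        exact ⟨mul_mem ha1 hb1, by rw [mul_inv_rev]; exact mul_mem hb2 ha2⟩
      inv_mem' := by
        rintro a ⟨h1, h2⟩
        exact ⟨h2, by rw [inv_inv]; exact h1⟩ }
  have hchainH : ∀ i j, H i ≤ H j ∨ H j ≤ H i := by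
    intro i j; rcases hchain i j with h | h
    · exact Or.inl (by rintro f ⟨h1, h2⟩; exact ⟨h h1, h h2⟩)
    · exact Or.inr (by rintro f ⟨h1, h2⟩; exact ⟨h h1, h h2⟩)
  have hcoverH : ∀ f : Equiv.Perm Ω, ∃ i, f ∈ H i := by
    intro f
    obtain ⟨a, ha⟩ := hcover f
    obtain ⟨b, hb⟩ := hcover f⁻¹
    rcases hchain a b with h | h
    · exact ⟨b, h ha, hb⟩
    · exact ⟨a, ha, h hb⟩
  obtain ⟨i, hi⟩ := MN.main_subgroup H hchainH hcard hcoverH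
  refine ⟨i, ?_⟩
  rw [eq_top_iff]
  intro f _
  exact (hi f).1
end

section
/- If Ω is an infinite set and U generates Sym(Ω) as a group, then there exists a positive integer n such that every element of Sym(Ω) is a product of at most n elements of U ∪ U⁻¹. -/
namespace Bergman6
open Equiv Set

variable {G : Type*} [Group G]

theorem perm_inv_apply_self {X : Type*} (F : Equiv.Perm X) (x : X) : F⁻¹ (F x) = x :=
  Equiv.Perm.inv_eq_iff_eq.mpr rfl

theorem perm_apply_inv_self {X : Type*} (F : Equiv.Perm X) (x : X) : F (F⁻¹ x) = x :=
  (Equiv.eq_symm_apply F).mp rfl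

/-- Elements expressible as products of at most `n` elements of `V`. -/
def Wn (V : Set G) (n : ℕ) : Set G :=
  {g | ∃ l : List G, l.length ≤ n ∧ (∀ x ∈ l, x ∈ V) ∧ l.prod = g}

theorem Wn_mono {V : Set G} {m n : ℕ} (h : m ≤ n) : Wn V m ⊆ Wn V n := by
  rintro g ⟨l, hl, hm, hp⟩; exact ⟨l, hl.trans h, hm, hp⟩

theorem one_mem_Wn (V : Set G) (n : ℕ) : (1 : G) ∈ Wn V n :=
  ⟨[], by simp, by simp, by simp⟩

theorem mul_mem_Wn {V : Set G} {a b : G} {m n : ℕ} (ha : a ∈ Wn V m) (hb : b ∈ Wn V n) :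
    a * b ∈ Wn V (m + n) := by
  obtain ⟨l₁, h₁, hm₁, hp₁⟩ := ha
  obtain ⟨l₂, h₂, hm₂, hp₂⟩ := hb
  refine ⟨l₁ ++ l₂, ?_, ?_, ?_⟩
  · simp only [List.length_append]; omega
  · intro x hx; rcases List.mem_append.1 hx with h | h
    · exact hm₁ x h
    · exact hm₂ x h
  · rw [List.prod_append, hp₁, hp₂]

theorem inv_mem_Wn {V : Set G} (hV : ∀ x ∈ V, x⁻¹ ∈ V) {a : G} {n : ℕ} (ha : a ∈ Wn V n) :
    a⁻¹ ∈ Wn V n := by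
  obtain ⟨l, hl, hm, hp⟩ := ha
  refine ⟨(l.map (·⁻¹)).reverse, by simp [hl], ?_, ?_⟩
  · intro x hx
    simp only [List.mem_reverse, List.mem_map] at hx
    obtain ⟨y, hy, rfl⟩ := hx
    exact hV y (hm y hy)
  · rw [← hp, List.prod_inv_reverse]

theorem exists_Wn {U : Set G} (hU : Subgroup.closure U = ⊤) (g : G) :
    ∃ n, g ∈ Wn (U ∪ U⁻¹) n := by
  have hg : g ∈ Submonoid.closure (U ∪ U⁻¹) := by
    have : g ∈ (Subgroup.closure U).toSubmonoid := by rw [hU]; trivial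
    rwa [Subgroup.closure_toSubmonoid] at this
  obtain ⟨l, h1, h2⟩ := Submonoid.exists_list_of_mem_closure hg
  exact ⟨l.length, l, le_rfl, h1, h2⟩

theorem V_symm (U : Set G) : ∀ x ∈ U ∪ U⁻¹, x⁻¹ ∈ U ∪ U⁻¹ := by
  rintro x (hx | hx)
  · exact Or.inr (by simpa using hx)
  · exact Or.inl (by simpa using hx)

section Perms
variable {α : Type*}

/-- coordinate-wise permutation of `ℤ × α`. -/
def dd (u : ℤ → Perm α) : Perm (ℤ × α) where
  toFun p := (p.1, u p.1 p.2)
  invFun p := (p.1, (u p.1)⁻¹ p.2)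
  left_inv p := by simp
  right_inv p := by simp

@[simp] theorem dd_apply (u : ℤ → Perm α) (p : ℤ × α) : dd u p = (p.1, u p.1 p.2) := rfl

theorem dd_inv (u : ℤ → Perm α) : (dd u)⁻¹ = dd (fun k => (u k)⁻¹) := by
  ext p <;> rfl

theorem dd_mul (u v : ℤ → Perm α) : dd u * dd v = dd (fun k => u k * v k) := by
  ext p
  · rfl
  · rfl

/-- shift the second coordinate on the row `i₀`. -/
def shiftAt (i₀ : ℤ) : ℤ × ℤ ≃ ℤ × ℤ where
  toFun p := if p.1 = i₀ then (p.1, p.2 + 1) else p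
  invFun p := if p.1 = i₀ then (p.1, p.2 - 1) else p
  left_inv p := by
    by_cases h : p.1 = i₀ <;> simp [h]
    exact Prod.ext_iff.mpr ⟨h.symm, rfl⟩
  right_inv p := by
    by_cases h : p.1 = i₀ <;> simp [h]
    exact Prod.ext_iff.mpr ⟨h.symm, rfl⟩

end Perms

@[simp] theorem shiftAt_apply (i₀ : ℤ) (p : ℤ × ℤ) :
    shiftAt i₀ p = if p.1 = i₀ then (p.1, p.2 + 1) else p := rfl

@[simp] theorem shiftAt_symm_apply (i₀ : ℤ) (p : ℤ × ℤ) :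
    (shiftAt i₀).symm p = if p.1 = i₀ then (p.1, p.2 - 1) else p := rfl

section Diag
variable {α : Type*}

theorem diag_step (U : Set (Perm (ℤ × α))) (hU : Subgroup.closure U = ⊤) (ρ : ℤ ≃ ℤ × ℤ) :
    ∃ (i₀ : ℤ) (n₀ : ℕ), ∀ v : ℤ → Perm α, ∃ u : ℤ → Perm α,
      dd u ∈ Wn (U ∪ U⁻¹) n₀ ∧ ∀ j, u (ρ.symm (i₀, j)) = v j := by
  by_contra h
  push_neg at h
  choose Vb hVb using h
  set u₀ : ℤ → Perm α := fun k =>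
    if 0 ≤ (ρ k).1 then Vb (ρ k).1 ((ρ k).1.toNat) (ρ k).2 else 1 with hu₀
  obtain ⟨N, hN⟩ := exists_Wn hU (dd u₀)
  obtain ⟨j, hj⟩ := hVb (N : ℤ) N u₀ hN
  apply hj
  have h1 : ρ (ρ.symm ((N : ℤ), j)) = ((N : ℤ), j) := ρ.apply_symm_apply _
  rw [hu₀]
  simp only [h1]
  rw [if_pos (Int.natCast_nonneg N)]
  simp

theorem fiber_cheap (U : Set (Perm (ℤ × α))) (hU : Subgroup.closure U = ⊤) :
    ∃ (k₀ : ℤ) (K₁ : ℕ), ∀ w : Perm α,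
      dd (fun k => if k = k₀ then w else 1) ∈ Wn (U ∪ U⁻¹) K₁ := by
  obtain ⟨ρ⟩ : Nonempty (ℤ ≃ ℤ × ℤ) :=
    ⟨(Denumerable.eqv ℤ).trans (Denumerable.eqv (ℤ × ℤ)).symm⟩
  obtain ⟨i₀, n₀, hR⟩ := diag_step U hU ρ
  set σb : ℤ ≃ ℤ := (ρ.trans (shiftAt i₀)).trans ρ.symm with hσb
  set σ : Perm (ℤ × α) := Equiv.prodCongr σb (Equiv.refl α) with hσ
  obtain ⟨m, hm⟩ := exists_Wn hU σ
  refine ⟨ρ.symm (i₀, 0), n₀ + (m + n₀ + m), ?_⟩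
  intro w
  obtain ⟨u, hu, huv⟩ := hR (fun j => if 0 ≤ j then w else 1)
  have hσsymm : ∀ k : ℤ, σb.symm k = ρ.symm ((shiftAt i₀).symm (ρ k)) := by
    intro k; rw [hσb]; rfl
  have hconj : σ * dd u * σ⁻¹ = dd (fun k => u (σb.symm k)) := by
    ext p
    · show (σ (dd u (σ⁻¹ p))).1 = _
      rw [Equiv.Perm.inv_def, hσ]
      simp [dd_apply]
    · show (σ (dd u (σ⁻¹ p))).2 = _
      rw [Equiv.Perm.inv_def, hσ]
      simp [dd_apply]
  have key : dd u * (σ * dd u * σ⁻¹)⁻¹ =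
      dd (fun k => if k = ρ.symm (i₀, 0) then w else 1) := by
    rw [hconj, dd_inv, dd_mul]
    congr 1
    funext k
    by_cases hk : (ρ k).1 = i₀
    · have hρk : ρ k = (i₀, (ρ k).2) := Prod.ext_iff.mpr ⟨hk, rfl⟩
      set j : ℤ := (ρ k).2 with hj
      have hkk : k = ρ.symm (i₀, j) := by rw [← hρk, ρ.symm_apply_apply]
      have e1 : u k = if 0 ≤ j then w else 1 := by rw [hkk]; exact huv j
      have e2 : u (σb.symm k) = if 0 ≤ j - 1 then w else 1 := by
        rw [hσsymm k, hρk]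
        simp only [shiftAt_symm_apply, if_pos rfl]
        exact huv (j - 1)
      have e3 : (k = ρ.symm (i₀, 0)) ↔ j = 0 := by
        rw [hkk]
        constructor
        · intro h
          have := ρ.symm.injective h
          simpa using congrArg Prod.snd this
        · intro h; rw [h]
      rw [e1, e2]
      by_cases h0 : j = 0
      · rw [if_pos (e3.mpr h0), if_pos (by omega), if_neg (by omega)]
        simp
      · rw [if_neg (fun hh => h0 (e3.mp hh))]
        by_cases h1 : 0 ≤ j
        · rw [if_pos h1, if_pos (by omega)]; simp
        · rw [if_neg h1, if_neg (by omega)]; simp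
    · have hfix : σb.symm k = k := by
        rw [hσsymm k]
        rw [shiftAt_symm_apply, if_neg hk, ρ.symm_apply_apply]
      have hne : k ≠ ρ.symm (i₀, 0) := by
        intro h
        apply hk
        rw [h, ρ.apply_symm_apply]
      rw [hfix, if_neg hne]
      simp
  have hmem : dd u * (σ * dd u * σ⁻¹)⁻¹ ∈ Wn (U ∪ U⁻¹) (n₀ + (m + n₀ + m)) :=
    mul_mem_Wn hu (inv_mem_Wn (V_symm U)
      (mul_mem_Wn (mul_mem_Wn hm hu) (inv_mem_Wn (V_symm U) hm)))
  rwa [key] at hmem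

end Diag

section Sets
variable {X : Type*} {α : Type*}

open Cardinal

theorem exists_perm_of_card (s t : Set X) (h1 : #↥s = #↥t) (h2 : #↥(sᶜ) = #↥(tᶜ)) :
    ∃ τ : Perm X, (∀ x ∈ s, τ x ∈ t) ∧ (∀ x, x ∉ s → τ x ∉ t) := by
  classical
  obtain ⟨e1⟩ := Cardinal.eq.mp h1
  obtain ⟨e2⟩ := Cardinal.eq.mp h2
  refine ⟨(Equiv.Set.sumCompl s).symm.trans ((e1.sumCongr e2).trans (Equiv.Set.sumCompl t)),
    ?_, ?_⟩
  · intro x hx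
    simp only [Equiv.trans_apply, Equiv.Set.sumCompl_symm_apply_of_mem hx,
      Equiv.sumCongr_apply, Sum.map_inl, Equiv.Set.sumCompl_apply_inl]
    exact (e1 ⟨x, hx⟩).2
  · intro x hx
    simp only [Equiv.trans_apply, Equiv.Set.sumCompl_symm_apply_of_notMem hx,
      Equiv.sumCongr_apply, Sum.map_inr, Equiv.Set.sumCompl_apply_inr]
    exact (e2 ⟨x, hx⟩).2

/-- first-coordinate-defined subsets of `ℤ × α` split as products. -/
def prodFst (P : ℤ → Prop) : {p : ℤ × α // P p.1} ≃ {i : ℤ // P i} × α where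
  toFun q := (⟨q.1.1, q.2⟩, q.1.2)
  invFun q := ⟨(q.1.1, q.2), q.1.2⟩
  left_inv q := rfl
  right_inv q := rfl

theorem mk_prodFst [Infinite α] (P : ℤ → Prop) (f : ℕ → ℤ) (hf : ∀ n, P (f n))
    (hinj : Function.Injective f) : #↥{p : ℤ × α | P p.1} = #α := by
  haveI : Infinite {i : ℤ // P i} :=
    Infinite.of_injective (fun n => (⟨f n, hf n⟩ : {i : ℤ // P i}))
      (fun a b h => hinj (congrArg Subtype.val h))
  have h0 : #{i : ℤ // P i} = ℵ₀ := Cardinal.mk_eq_aleph0 _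
  have : #↥{p : ℤ × α | P p.1} = #({i : ℤ // P i} × α) :=
    Cardinal.mk_congr (prodFst P)
  rw [this, Cardinal.mk_prod, h0]
  simp only [Cardinal.lift_aleph0, Cardinal.lift_uzero]
  exact Cardinal.mul_eq_right (Cardinal.infinite_iff.mp inferInstance)
    (Cardinal.infinite_iff.mp inferInstance) Cardinal.aleph0_ne_zero

theorem fiber_supported {k₀ : ℤ} {F : Perm (ℤ × α)}
    (hF : ∀ p : ℤ × α, p.1 ≠ k₀ → F p = p) :
    ∃ w : Perm α, F = dd (fun k => if k = k₀ then w else 1) := by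
  have hpres : ∀ q : ℤ × α, (F q).1 = q.1 := by
    intro q
    by_cases hq : q.1 = k₀
    · by_contra hne
      have h2 : F (F q) = F q := hF (F q) (by rw [hq] at hne; exact hne)
      have h3 := F.injective h2
      rw [h3] at hne
      exact hne rfl
    · rw [hF q hq]
  have hFk : ∀ x : α, F (k₀, x) = (k₀, (F (k₀, x)).2) := by
    intro x
    exact Prod.ext_iff.mpr ⟨hpres (k₀, x), rfl⟩
  have hFinv : ∀ p : ℤ × α, p.1 ≠ k₀ → F⁻¹ p = p := by
    intro p hp
    have := hF p hp
    conv_lhs => rw [← this]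
    exact F.symm_apply_apply p
  have hFki : ∀ x : α, F⁻¹ (k₀, x) = (k₀, (F⁻¹ (k₀, x)).2) := by
    intro x
    refine Prod.ext_iff.mpr ⟨?_, rfl⟩
    by_cases hq : (F⁻¹ (k₀, x)).1 = k₀
    · exact hq
    · exfalso
      have h2 := hF _ hq
      have : F (F⁻¹ (k₀, x)) = (k₀, x) := F.apply_symm_apply _
      rw [h2] at this
      exact hq (by rw [this])
  refine ⟨⟨fun x => (F (k₀, x)).2, fun x => (F⁻¹ (k₀, x)).2, ?_, ?_⟩, ?_⟩
  · intro x
    show (F⁻¹ (k₀, (F (k₀, x)).2)).2 = x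
    have : ((k₀ : ℤ), (F (k₀, x)).2) = F (k₀, x) := (hFk x).symm
    rw [this, perm_inv_apply_self]
  · intro x
    show (F (k₀, (F⁻¹ (k₀, x)).2)).2 = x
    have : ((k₀ : ℤ), (F⁻¹ (k₀, x)).2) = F⁻¹ (k₀, x) := (hFki x).symm
    rw [this, perm_apply_inv_self]
  · apply Equiv.ext
    rintro ⟨k, x⟩
    by_cases hk : k = k₀
    · subst hk
      rw [dd_apply]
      simp only [if_pos rfl]
      exact hFk x
    · rw [dd_apply, hF _ hk]
      simp [hk]

end Sets

section Supported
variable {α : Type*} [Infinite α]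

open Cardinal

/-- fiber equivalence -/
def fibEquiv (k₀ : ℤ) : ↥{p : ℤ × α | p.1 = k₀} ≃ α where
  toFun q := q.1.2
  invFun x := ⟨(k₀, x), rfl⟩
  left_inv q := Subtype.ext (Prod.ext_iff.mpr ⟨q.2.symm, rfl⟩)
  right_inv x := rfl

theorem supported_cheap (U : Set (Perm (ℤ × α))) (hU : Subgroup.closure U = ⊤) :
    ∃ K₂ : ℕ, ∀ F : Perm (ℤ × α),
      ((∀ p : ℤ × α, p ∉ {q : ℤ × α | q.1 ≤ 0} → F p = p) ∨
        (∀ p : ℤ × α, p ∉ {q : ℤ × α | 0 ≤ q.1} → F p = p)) →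
      F ∈ Wn (U ∪ U⁻¹) K₂ := by
  obtain ⟨k₀, K₁, hfib⟩ := fiber_cheap U hU
  have cFib : #↥{p : ℤ × α | p.1 = k₀} = #α := Cardinal.mk_congr (fibEquiv k₀)
  have cFibc : #↥({p : ℤ × α | p.1 = k₀}ᶜ) = #α :=
    mk_prodFst (α := α) (fun i => ¬ i = k₀) (fun n => k₀ + n + 1)
      (by intro n; omega) (by intro a b h; dsimp only at h; omega)
  have cM1 : #↥{p : ℤ × α | p.1 ≤ 0} = #α :=
    mk_prodFst (α := α) (fun i => i ≤ 0) (fun n => -(n : ℤ))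
      (by intro n; omega) (by intro a b h; dsimp only at h; omega)
  have cM1c : #↥({p : ℤ × α | p.1 ≤ 0}ᶜ) = #α :=
    mk_prodFst (α := α) (fun i => ¬ i ≤ 0) (fun n => (n : ℤ) + 1)
      (by intro n; omega) (by intro a b h; dsimp only at h; omega)
  have cM2 : #↥{p : ℤ × α | 0 ≤ p.1} = #α :=
    mk_prodFst (α := α) (fun i => 0 ≤ i) (fun n => (n : ℤ))
      (by intro n; omega) (by intro a b h; dsimp only at h; omega)
  have cM2c : #↥({p : ℤ × α | 0 ≤ p.1}ᶜ) = #α :=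
    mk_prodFst (α := α) (fun i => ¬ 0 ≤ i) (fun n => -(n : ℤ) - 1)
      (by intro n; omega) (by intro a b h; dsimp only at h; omega)
  obtain ⟨τ₁, hτ₁mem, hτ₁nmem⟩ := exists_perm_of_card {p : ℤ × α | p.1 = k₀}
    {p : ℤ × α | p.1 ≤ 0} (cFib.trans cM1.symm) (cFibc.trans cM1c.symm)
  obtain ⟨τ₂, hτ₂mem, hτ₂nmem⟩ := exists_perm_of_card {p : ℤ × α | p.1 = k₀}
    {p : ℤ × α | 0 ≤ p.1} (cFib.trans cM2.symm) (cFibc.trans cM2c.symm)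
  obtain ⟨m₁, hm₁⟩ := exists_Wn hU τ₁
  obtain ⟨m₂, hm₂⟩ := exists_Wn hU τ₂
  refine ⟨max (m₁ + K₁ + m₁) (m₂ + K₁ + m₂), ?_⟩
  have main : ∀ (τ : Perm (ℤ × α)) (M : Set (ℤ × α)) (m : ℕ),
      τ ∈ Wn (U ∪ U⁻¹) m →
      (∀ x, x ∉ {p : ℤ × α | p.1 = k₀} → τ x ∉ M) →
      ∀ F : Perm (ℤ × α), (∀ p, p ∉ M → F p = p) →
      F ∈ Wn (U ∪ U⁻¹) (m + K₁ + m) := by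
    intro τ M m hτW hτn F hF
    set F' : Perm (ℤ × α) := τ⁻¹ * F * τ with hF'
    have hsupp : ∀ p : ℤ × α, p.1 ≠ k₀ → F' p = p := by
      intro p hp
      have h1 : τ p ∉ M := hτn p hp
      have : F' p = τ⁻¹ (F (τ p)) := by
        simp [hF', Equiv.Perm.mul_apply]
      rw [this, hF _ h1, perm_inv_apply_self]
    obtain ⟨w, hw⟩ := fiber_supported hsupp
    have hF'W : F' ∈ Wn (U ∪ U⁻¹) K₁ := by rw [hw]; exact hfib w
    have : F = τ * F' * τ⁻¹ := by rw [hF']; group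
    rw [this]
    exact mul_mem_Wn (mul_mem_Wn hτW hF'W) (inv_mem_Wn (V_symm U) hτW)
  intro F hcase
  rcases hcase with h | h
  · exact Wn_mono (le_max_left _ _) (main τ₁ _ m₁ hm₁ hτ₁nmem F h)
  · exact Wn_mono (le_max_right _ _) (main τ₂ _ m₂ hm₂ hτ₂nmem F h)

end Supported

section FactP
open Cardinal
variable {X : Type*} [Infinite X]

theorem factP (F : Perm X) :
    ∃ g h : Perm X, F = g * h ∧ #↥{x | g x = x} = #X ∧ #↥{x | h x = x} = #X := by
  classical
  have hXinf : ℵ₀ ≤ #X := Cardinal.infinite_iff.mp inferInstance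
  by_cases hfix : #↥{x | F x = x} = #X
  · refine ⟨F, 1, by simp, hfix, ?_⟩
    have h1 : {x : X | (1 : Perm X) x = x} = Set.univ := by
      ext x; simp
    rw [h1]; exact Cardinal.mk_univ
  -- main case
  set D : Set X := {x | F x ≠ x} with hD
  have hDbig : #↥D = #X := by
    have hle : #↥D ≤ #X := Cardinal.mk_set_le _
    rcases lt_or_eq_of_le hle with hlt | heq
    · exfalso
      have hfixlt : #↥{x | F x = x} < #X :=
        lt_of_le_of_ne (Cardinal.mk_set_le _) hfix
      have hcover : (Set.univ : Set X) ⊆ D ∪ {x | F x = x} := by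
        intro x _
        by_cases h : F x = x
        · exact Or.inr h
        · exact Or.inl h
      have : #X ≤ #↥D + #↥{x | F x = x} := by
        calc #X = #↥(Set.univ : Set X) := Cardinal.mk_univ.symm
          _ ≤ #↥(D ∪ {x | F x = x}) := Cardinal.mk_le_mk_of_subset hcover
          _ ≤ _ := Cardinal.mk_union_le _ _
      exact absurd this (not_le.mpr (Cardinal.add_lt_of_lt hXinf hlt hfixlt))
    · exact heq
  -- Zorn to get a large set B with B ∩ F '' B = ∅
  obtain ⟨B, hBmax⟩ := zorn_subset {B : Set X | B ⊆ D ∧ ∀ y ∈ B, F y ∉ B} (by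
    intro c hc hchain
    refine ⟨⋃₀ c, ⟨?_, ?_⟩, fun s hs => Set.subset_sUnion_of_mem hs⟩
    · intro x hx
      obtain ⟨s, hs, hxs⟩ := hx
      exact (hc hs).1 hxs
    · rintro y ⟨s, hs, hys⟩ ⟨t, ht, hFt⟩
      rcases hchain.total hs ht with hst | hts
      · exact (hc ht).2 y (hst hys) hFt
      · exact (hc hs).2 y hys (hts hFt))
  obtain ⟨⟨hBD, hBF⟩, hBmaxi⟩ := hBmax
  have hcov : D ⊆ B ∪ (F '' B) ∪ (F ⁻¹' B) := by
    intro x hxD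
    by_cases hxB : x ∈ B
    · exact Or.inl (Or.inl hxB)
    by_cases hxFB : x ∈ F '' B
    · exact Or.inl (Or.inr hxFB)
    by_cases hxFiB : F x ∈ B
    · exact Or.inr hxFiB
    · exfalso
      have hmem : insert x B ∈ {B : Set X | B ⊆ D ∧ ∀ y ∈ B, F y ∉ B} := by
        constructor
        · intro z hz
          rcases Set.mem_insert_iff.mp hz with rfl | hz2
          · exact hxD
          · exact hBD hz2
        · intro y hy hFy
          rcases Set.mem_insert_iff.mp hy with rfl | hyB
          · rcases Set.mem_insert_iff.mp hFy with h | h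
            · exact hxD h
            · exact hxFiB h
          · rcases Set.mem_insert_iff.mp hFy with h | h
            · exact hxFB ⟨y, hyB, h⟩
            · exact hBF y hyB h
      exact hxB ((hBmaxi hmem (Set.subset_insert x B)) (Set.mem_insert x B))
  have hBbig : #↥B = #X := by
    have hle : #↥B ≤ #X := Cardinal.mk_set_le _
    rcases lt_or_eq_of_le hle with hlt | heq
    · exfalso
      have h1 : #↥(F '' B) = #↥B := Cardinal.mk_image_eq F.injective
      have h2 : #↥(F ⁻¹' B) = #↥B := by
        have hpre : F ⁻¹' B = F.symm '' B := by
          ext z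
          constructor
          · intro hz; exact ⟨F z, hz, F.symm_apply_apply z⟩
          · rintro ⟨y, hy, rfl⟩
            show F (F.symm y) ∈ B
            rwa [F.apply_symm_apply]
        rw [hpre]; exact Cardinal.mk_image_eq F.symm.injective
      have hsum : #X ≤ #↥B + #↥B + #↥B := by
        calc #X = #↥D := hDbig.symm
          _ ≤ #↥(B ∪ (F '' B) ∪ (F ⁻¹' B)) := Cardinal.mk_le_mk_of_subset hcov
          _ ≤ #↥(B ∪ (F '' B)) + #↥(F ⁻¹' B) := Cardinal.mk_union_le _ _
          _ ≤ #↥B + #↥(F '' B) + #↥(F ⁻¹' B) :=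
              add_le_add_left (Cardinal.mk_union_le _ _) _
          _ = #↥B + #↥B + #↥B := by rw [h1, h2]
      have hlt3 : #↥B + #↥B + #↥B < #X :=
        Cardinal.add_lt_of_lt hXinf (Cardinal.add_lt_of_lt hXinf hlt hlt) hlt
      exact absurd hsum (not_le.mpr hlt3)
    · exact heq
  -- split B into two halves
  have hBB : #↥B = #(↥B ⊕ ↥B) := by
    rw [Cardinal.mk_sum, Cardinal.lift_id, hBbig, Cardinal.add_eq_self hXinf]
  obtain ⟨e⟩ := Cardinal.eq.mp hBB
  set B₁ : Set X := Subtype.val '' {b : ↥B | (e b).isLeft} with hB₁def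
  set T : Set X := Subtype.val '' {b : ↥B | (e b).isRight} with hTdef
  have hB₁B : B₁ ⊆ B := by rintro x ⟨b, _, rfl⟩; exact b.2
  have hTB : T ⊆ B := by rintro x ⟨b, _, rfl⟩; exact b.2
  have hB₁T : ∀ x ∈ B₁, x ∉ T := by
    rintro x ⟨b, hb, rfl⟩ ⟨b', hb', hval⟩
    have hbb : b' = b := Subtype.val_injective hval
    subst hbb
    rw [Set.mem_setOf_eq] at hb hb'
    rw [Sum.isRight_iff] at hb'
    obtain ⟨z, hz⟩ := hb'
    rw [hz] at hb
    simp at hb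
  have hsetL : {b : ↥B | (e b).isLeft} = e ⁻¹' (Set.range Sum.inl) := by
    ext b
    rw [Set.mem_setOf_eq, Set.mem_preimage, Sum.isLeft_iff]
    constructor
    · rintro ⟨y, hy⟩; exact ⟨y, hy.symm⟩
    · rintro ⟨y, hy⟩; exact ⟨y, hy.symm⟩
  have hsetR : {b : ↥B | (e b).isRight} = e ⁻¹' (Set.range Sum.inr) := by
    ext b
    rw [Set.mem_setOf_eq, Set.mem_preimage, Sum.isRight_iff]
    constructor
    · rintro ⟨y, hy⟩; exact ⟨y, hy.symm⟩
    · rintro ⟨y, hy⟩; exact ⟨y, hy.symm⟩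
  have hpreim : ∀ S : Set (↥B ⊕ ↥B), e ⁻¹' S = e.symm '' S := by
    intro S
    ext z
    constructor
    · intro h; exact ⟨e z, h, e.symm_apply_apply z⟩
    · rintro ⟨y, hy, rfl⟩
      show e (e.symm y) ∈ S
      rwa [e.apply_symm_apply]
  have hB₁big : #↥B₁ = #X := by
    rw [hB₁def, Cardinal.mk_image_eq Subtype.val_injective, hsetL, hpreim,
      Cardinal.mk_image_eq e.symm.injective, Cardinal.mk_range_eq _ Sum.inl_injective]
    exact hBbig
  have hTbig : #↥T = #X := by
    rw [hTdef, Cardinal.mk_image_eq Subtype.val_injective, hsetR, hpreim,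
      Cardinal.mk_image_eq e.symm.injective, Cardinal.mk_range_eq _ Sum.inr_injective]
    exact hBbig
  -- define the involution g
  have hdisj : ∀ x ∈ B₁, x ∉ F '' B₁ := by
    rintro x hx ⟨y, hy, rfl⟩
    exact hBF y (hB₁B hy) (hB₁B hx)
  set gf : X → X := fun x => if x ∈ B₁ then F x else if x ∈ F '' B₁ then F.symm x else x
    with hgf
  have hgfB₁ : ∀ x ∈ B₁, gf x = F x := by
    intro x hx; simp only [hgf, if_pos hx]
  have hgfFB₁ : ∀ x, x ∉ B₁ → x ∈ F '' B₁ → gf x = F.symm x := by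
    intro x hx1 hx2; simp only [hgf, if_neg hx1, if_pos hx2]
  have hgfelse : ∀ x, x ∉ B₁ → x ∉ F '' B₁ → gf x = x := by
    intro x hx1 hx2; simp only [hgf, if_neg hx1, if_neg hx2]
  have hginv : Function.Involutive gf := by
    intro x
    by_cases h1 : x ∈ B₁
    · have hFx : F x ∈ F '' B₁ := ⟨x, h1, rfl⟩
      have hFxn : F x ∉ B₁ := fun hc => hdisj (F x) hc hFx
      rw [hgfB₁ x h1, hgfFB₁ (F x) hFxn hFx, F.symm_apply_apply]
    by_cases h2 : x ∈ F '' B₁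
    · obtain ⟨y, hy, rfl⟩ := h2
      have hstep : gf (F y) = y := by
        rw [hgfFB₁ (F y) h1 ⟨y, hy, rfl⟩, F.symm_apply_apply]
      rw [hstep, hgfB₁ y hy]
    · rw [hgfelse x h1 h2, hgfelse x h1 h2]
  set g : Perm X := hginv.toPerm gf with hgdef
  have hgapp : ∀ x, g x = gf x := fun x => rfl
  set h : Perm X := g * F with hhdef
  refine ⟨g, h, ?_, ?_, ?_⟩
  · ext x
    have hx : (g * h) x = gf (gf (F x)) := rfl
    rw [hx, hginv (F x)]
  · have hsub : T ⊆ {x | g x = x} := by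
      intro x hx
      have h1 : x ∉ B₁ := fun hc => hB₁T x hc hx
      have h2 : x ∉ F '' B₁ := by
        rintro ⟨y, hy, rfl⟩
        exact hBF y (hB₁B hy) (hTB hx)
      show g x = x
      rw [hgapp, hgfelse x h1 h2]
    have hle := Cardinal.mk_le_mk_of_subset hsub
    exact le_antisymm (Cardinal.mk_set_le _) (hTbig ▸ hle)
  · have hsub : B₁ ⊆ {x | h x = x} := by
      intro x hx
      have hFx : F x ∈ F '' B₁ := ⟨x, hx, rfl⟩
      have hFxn : F x ∉ B₁ := fun hc => hdisj (F x) hc hFx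
      show h x = x
      have hh : h x = gf (F x) := rfl
      rw [hh, hgfFB₁ (F x) hFxn hFx, F.symm_apply_apply]
    have hle := Cardinal.mk_le_mk_of_subset hsub
    exact le_antisymm (Cardinal.mk_set_le _) (hB₁big ▸ hle)

end FactP

section Push
open Cardinal

theorem push_aux {X : Type*} (g : Perm X) (M N Z Row : Set X)
    (hMN : ∀ x, x ∉ M → x ∈ N) (hZM : Z ⊆ M) (hZN : Z ⊆ N)
    (hRowM : Row ⊆ M) (hRowZ : ∀ x ∈ Row, x ∉ Z)
    (hZbig : #↥Z = #X) (hRowbig : #↥Row = #X)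
    (hcase : #↥({x | g x = x} ∩ M) = #X) :
    ∃ G : Perm X, (∀ x, x ∉ M → G x = x) ∧ (∀ x, g x ≠ x → G x ∈ N) := by
  classical
  set A : Set X := {x | g x ≠ x} ∩ M with hA
  have hAM : A ⊆ M := Set.inter_subset_right
  have hAle : #↥A ≤ #↥Z := by
    rw [hZbig]; exact Cardinal.mk_set_le _
  obtain ⟨f⟩ := (Cardinal.le_def _ _).mp hAle
  set A' : Set X := Set.range (fun a : ↥A => ((f a : ↥Z) : X)) with hA'
  have hA'Z : A' ⊆ Z := by rintro x ⟨a, rfl⟩; exact (f a).2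
  have hA'M : A' ⊆ M := fun x hx => hZM (hA'Z hx)
  have cA' : #↥A' = #↥A :=
    Cardinal.mk_range_eq _ (Subtype.val_injective.comp f.injective)
  have cdiff : #↥(M \ A) = #X := by
    refine le_antisymm (Cardinal.mk_set_le _) ?_
    rw [← hcase]
    apply Cardinal.mk_le_mk_of_subset
    rintro x ⟨hx1, hx2⟩
    exact ⟨hx2, fun hc => hc.1 hx1⟩
  have cdiff' : #↥(M \ A') = #X := by
    refine le_antisymm (Cardinal.mk_set_le _) ?_
    rw [← hRowbig]
    apply Cardinal.mk_le_mk_of_subset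
    intro x hx
    exact ⟨hRowM hx, fun hc => hRowZ x hx (hA'Z hc)⟩
  obtain ⟨e₁⟩ := Cardinal.eq.mp cA'.symm
  obtain ⟨e₂⟩ := Cardinal.eq.mp (cdiff.trans cdiff'.symm)
  set Q : ↥M ≃ ↥M := (Equiv.Set.sumDiffSubset hAM).symm.trans
    ((e₁.sumCongr e₂).trans (Equiv.Set.sumDiffSubset hA'M)) with hQ
  refine ⟨Equiv.Perm.ofSubtype Q, ?_, ?_⟩
  · intro x hx
    exact Equiv.Perm.ofSubtype_apply_of_not_mem Q hx
  · intro x hgx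
    by_cases hxM : x ∈ M
    · have hxA : (⟨x, hxM⟩ : ↥M).1 ∈ A := ⟨hgx, hxM⟩
      rw [Equiv.Perm.ofSubtype_apply_of_mem Q hxM]
      have h1 : Q ⟨x, hxM⟩ = (Equiv.Set.sumDiffSubset hA'M)
          ((e₁.sumCongr e₂) (Sum.inl ⟨(⟨x, hxM⟩ : ↥M), hxA⟩)) := by
        rw [hQ]
        simp only [Equiv.trans_apply]
        rw [Equiv.Set.sumDiffSubset_symm_apply_of_mem hAM hxA]
      rw [h1]
      simp only [Equiv.sumCongr_apply, Sum.map_inl,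
        Equiv.Set.sumDiffSubset_apply_inl]
      exact hZN (hA'Z (e₁ ⟨(⟨x, hxM⟩ : ↥M), hxA⟩).2)
    · rw [Equiv.Perm.ofSubtype_apply_of_not_mem Q hxM]
      exact hMN x hxM

variable {α : Type*} [Infinite α]

theorem cardX : #(ℤ × α) = #α := by
  rw [Cardinal.mk_prod, Cardinal.mk_int]
  rw [Cardinal.lift_aleph0, Cardinal.lift_uzero]
  exact Cardinal.mul_eq_right (Cardinal.infinite_iff.mp inferInstance)
    (Cardinal.infinite_iff.mp inferInstance) Cardinal.aleph0_ne_zero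

theorem rowBig (k₀ : ℤ) : #↥{p : ℤ × α | p.1 = k₀} = #(ℤ × α) := by
  rw [Cardinal.mk_congr (fibEquiv k₀), cardX]

theorem bigfix_cheap (U : Set (Perm (ℤ × α))) (hU : Subgroup.closure U = ⊤) :
    ∃ K₃ : ℕ, ∀ g : Perm (ℤ × α), #↥{x | g x = x} = #(ℤ × α) →
      g ∈ Wn (U ∪ U⁻¹) K₃ := by
  classical
  obtain ⟨K₂, hK₂⟩ := supported_cheap U hU
  refine ⟨K₂ + K₂ + K₂, ?_⟩
  intro g hfix
  have hXinf : ℵ₀ ≤ #(ℤ × α) := Cardinal.infinite_iff.mp inferInstance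
  set M₁ : Set (ℤ × α) := {q | q.1 ≤ 0} with hM₁
  set M₂ : Set (ℤ × α) := {q | 0 ≤ q.1} with hM₂
  set Z : Set (ℤ × α) := {q | q.1 = 0} with hZ
  have hZbig : #↥Z = #(ℤ × α) := rowBig 0
  have hZM₁ : Z ⊆ M₁ := by intro x hx; rw [hM₁]; rw [hZ] at hx; simp_all [le_of_eq]
  have hZM₂ : Z ⊆ M₂ := by intro x hx; rw [hM₂]; rw [hZ] at hx; simp_all [le_of_eq]
  have hcases : #↥({x | g x = x} ∩ M₁) = #(ℤ × α) ∨
      #↥({x | g x = x} ∩ M₂) = #(ℤ × α) := by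
    by_contra hc
    push_neg at hc
    obtain ⟨h1, h2⟩ := hc
    have l1 : #↥({x | g x = x} ∩ M₁) < #(ℤ × α) :=
      lt_of_le_of_ne (Cardinal.mk_set_le _) h1
    have l2 : #↥({x | g x = x} ∩ M₂) < #(ℤ × α) :=
      lt_of_le_of_ne (Cardinal.mk_set_le _) h2
    have hcover : {x : ℤ × α | g x = x} ⊆
        ({x | g x = x} ∩ M₁) ∪ ({x | g x = x} ∩ M₂) := by
      intro x hx
      by_cases hm : x.1 ≤ 0
      · exact Or.inl ⟨hx, hm⟩
      · exact Or.inr ⟨hx, by rw [hM₂]; simp only [Set.mem_setOf_eq]; omega⟩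
    have : #(ℤ × α) ≤ #↥({x | g x = x} ∩ M₁) + #↥({x | g x = x} ∩ M₂) := by
      calc #(ℤ × α) = #↥{x : ℤ × α | g x = x} := hfix.symm
        _ ≤ #↥(({x | g x = x} ∩ M₁) ∪ ({x | g x = x} ∩ M₂)) :=
            Cardinal.mk_le_mk_of_subset hcover
        _ ≤ _ := Cardinal.mk_union_le _ _
    exact absurd this (not_le.mpr (Cardinal.add_lt_of_lt hXinf l1 l2))
  have conj_step : ∀ (M N : Set (ℤ × α)),
      (∀ x, x ∉ M → x ∈ N) → Z ⊆ M → Z ⊆ N →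
      (∀ F : Perm (ℤ × α), (∀ p, p ∉ M → F p = p) → F ∈ Wn (U ∪ U⁻¹) K₂) →
      (∀ F : Perm (ℤ × α), (∀ p, p ∉ N → F p = p) → F ∈ Wn (U ∪ U⁻¹) K₂) →
      (Row : Set (ℤ × α)) → Row ⊆ M → (∀ x ∈ Row, x ∉ Z) →
      #↥Row = #(ℤ × α) →
      #↥({x | g x = x} ∩ M) = #(ℤ × α) →
      g ∈ Wn (U ∪ U⁻¹) (K₂ + K₂ + K₂) := by
    intro M N hMN hZM hZN hMcheap hNcheap Row hRowM hRowZ hRowbig hcase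
    obtain ⟨G, hGsupp, hGpush⟩ :=
      push_aux g M N Z Row hMN hZM hZN hRowM hRowZ hZbig hRowbig hcase
    have hGW : G ∈ Wn (U ∪ U⁻¹) K₂ := hMcheap G hGsupp
    have hconjsupp : ∀ p, p ∉ N → (G * g * G⁻¹) p = p := by
      intro p hp
      have hq : (G * g * G⁻¹) p = G (g (G⁻¹ p)) := by
        simp [Equiv.Perm.mul_apply]
      by_cases hgq : g (G⁻¹ p) = G⁻¹ p
      · rw [hq, hgq, perm_apply_inv_self]
      · exfalso
        have := hGpush (G⁻¹ p) hgq
        rw [perm_apply_inv_self] at this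
        exact hp this
    have hconjW : G * g * G⁻¹ ∈ Wn (U ∪ U⁻¹) K₂ := hNcheap _ hconjsupp
    have hgeq : g = G⁻¹ * (G * g * G⁻¹) * G := by group
    rw [hgeq]
    exact mul_mem_Wn (mul_mem_Wn (inv_mem_Wn (V_symm U) hGW) hconjW) hGW
  rcases hcases with hcase | hcase
  · -- fixed points plentiful in M₁ : push support of g out of M₁ into M₂
    refine conj_step M₁ M₂ ?_ hZM₁ hZM₂
      (fun F hF => hK₂ F (Or.inl hF)) (fun F hF => hK₂ F (Or.inr hF))
      {p : ℤ × α | p.1 = -1} ?_ ?_ (rowBig (-1)) hcase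
    · intro x hx
      rw [hM₂]; rw [hM₁] at hx; simp only [Set.mem_setOf_eq] at hx ⊢; omega
    · intro x hx
      rw [hM₁]; rw [Set.mem_setOf_eq] at hx; simp only [Set.mem_setOf_eq]; omega
    · intro x hx hz
      rw [Set.mem_setOf_eq] at hx
      rw [hZ, Set.mem_setOf_eq] at hz
      omega
  · refine conj_step M₂ M₁ ?_ hZM₂ hZM₁
      (fun F hF => hK₂ F (Or.inr hF)) (fun F hF => hK₂ F (Or.inl hF))
      {p : ℤ × α | p.1 = 1} ?_ ?_ (rowBig 1) hcase
    · intro x hx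
      rw [hM₁]; rw [hM₂] at hx; simp only [Set.mem_setOf_eq] at hx ⊢; omega
    · intro x hx
      rw [hM₂]; rw [Set.mem_setOf_eq] at hx; simp only [Set.mem_setOf_eq]; omega
    · intro x hx hz
      rw [Set.mem_setOf_eq] at hx
      rw [hZ, Set.mem_setOf_eq] at hz
      omega

theorem aux_main (U : Set (Perm (ℤ × α))) (hU : Subgroup.closure U = ⊤) :
    ∃ n : ℕ, 0 < n ∧ ∀ f : Perm (ℤ × α), f ∈ Wn (U ∪ U⁻¹) n := by
  obtain ⟨K₃, hK₃⟩ := bigfix_cheap U hU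
  refine ⟨K₃ + K₃ + 1, by omega, ?_⟩
  intro f
  obtain ⟨g, h, rfl, hg, hh⟩ := factP f
  exact Wn_mono (by omega) (mul_mem_Wn (hK₃ g hg) (hK₃ h hh))

end Push

end Bergman6

open Bergman6 Equiv in
theorem stmt6 {Ω : Type*} [Infinite Ω] (U : Set (Equiv.Perm Ω))
    (hU : Subgroup.closure U = ⊤) :
    ∃ n : ℕ, 0 < n ∧ ∀ f : Equiv.Perm Ω, ∃ l : List (Equiv.Perm Ω),
      l.length ≤ n ∧ (∀ x ∈ l, x ∈ U ∪ U⁻¹) ∧ l.prod = f := by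
  classical
  obtain ⟨e⟩ : Nonempty (Ω ≃ ℤ × Ω) := Cardinal.eq.mp (cardX (α := Ω)).symm
  let φ : Perm Ω ≃* Perm (ℤ × Ω) :=
    { e.permCongr with
      map_mul' := by
        intro f g
        apply Equiv.ext
        intro p
        simp [Equiv.permCongr_apply, Equiv.Perm.mul_apply] }
  have hφ : ∀ p : Perm Ω, φ p = e.permCongr p := fun _ => rfl
  have hU₂ : Subgroup.closure (⇑φ '' U) = ⊤ := by
    have hcoe : ⇑φ '' U = ⇑φ.toMonoidHom '' U := rfl
    rw [hcoe, ← MonoidHom.map_closure φ.toMonoidHom U, hU]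
    exact Subgroup.map_top_of_surjective _ φ.surjective
  obtain ⟨n, hn, hall⟩ := aux_main (α := Ω) (⇑φ '' U) hU₂
  refine ⟨n, hn, ?_⟩
  intro f
  obtain ⟨l₂, hlen, hmem, hprod⟩ := hall (φ f)
  refine ⟨l₂.map φ.symm, by simpa using hlen, ?_, ?_⟩
  · intro x hx
    obtain ⟨y, hy, rfl⟩ := List.mem_map.mp hx
    rcases hmem y hy with hy2 | hy2
    · obtain ⟨u, hu, rfl⟩ := hy2
      rw [MulEquiv.symm_apply_apply]
      exact Or.inl hu
    · rw [Set.mem_inv] at hy2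
      obtain ⟨u, hu, huy⟩ := hy2
      right
      rw [Set.mem_inv, ← map_inv φ.symm y, ← huy, MulEquiv.symm_apply_apply]
      exact hu
  · rw [← map_list_prod φ.symm l₂, hprod, MulEquiv.symm_apply_apply]
end

section
/- If Ω is an infinite set and U generates Sym(Ω) as a monoid, then there exists a positive integer n such that every element of Sym(Ω) is a product of at most n elements of U. -/
open Cardinal Set
universe u
noncomputable section
variable {B : Type u}

abbrev Zc (B : Type u) := B × ℤ × ℤ

def c₀ : ℤ × ℤ := (0, -1)

/-- permutation acting as `h` on the cell `B × {c₀}` -/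
def cellPerm (h : Equiv.Perm B) : Equiv.Perm (Zc B) := by
  classical
  exact ⟨fun x => if x.2 = c₀ then (h x.1, x.2) else x,
   fun x => if x.2 = c₀ then (h.symm x.1, x.2) else x,
   fun x => by obtain ⟨a, c⟩ := x; by_cases hx : c = c₀ <;> simp [hx],
   fun x => by obtain ⟨a, c⟩ := x; by_cases hx : c = c₀ <;> simp [hx]⟩

@[simp] lemma cellPerm_apply (h : Equiv.Perm B) (x : Zc B) :
    cellPerm h x = if x.2 = c₀ then (h x.1, x.2) else x := rfl

def shiftR : Equiv.Perm (Zc B) :=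
  ⟨fun x => (x.1, (x.2.1 + 1, x.2.2)), fun x => (x.1, (x.2.1 - 1, x.2.2)),
   fun x => by simp, fun x => by simp⟩

lemma shiftR_pow_apply (n : ℕ) : ∀ x : Zc B,
    (shiftR ^ n) x = (x.1, (x.2.1 + n, x.2.2)) := by
  induction n with
  | zero => intro x; simp
  | succ k ih =>
    intro x
    rw [pow_succ, Equiv.Perm.mul_apply, ih (shiftR x)]
    show (x.1, (x.2.1 + 1 + (k:ℤ), x.2.2)) = (x.1, (x.2.1 + ((k:ℤ)+1), x.2.2))
    push_cast; ring_nf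

lemma shiftR_pow_inv_apply (n : ℕ) (x : Zc B) :
    (shiftR ^ n)⁻¹ x = (x.1, (x.2.1 - n, x.2.2)) := by
  have h1 : (shiftR ^ n) (x.1, (x.2.1 - n, x.2.2)) = x := by
    rw [shiftR_pow_apply]
    show (_, (_ - _ + _, _)) = _
    rw [sub_add_cancel]
  calc (shiftR ^ n)⁻¹ x = (shiftR ^ n)⁻¹ ((shiftR ^ n) (x.1, (x.2.1 - n, x.2.2))) := by
        rw [h1]
    _ = (x.1, (x.2.1 - n, x.2.2)) := Equiv.symm_apply_apply _ _

def colShift : Equiv.Perm (Zc B) := by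
  classical
  exact ⟨fun x => if x.2.1 = 0 then (x.1, (x.2.1, x.2.2 - 1)) else x,
   fun x => if x.2.1 = 0 then (x.1, (x.2.1, x.2.2 + 1)) else x,
   fun x => by obtain ⟨a, i, j⟩ := x; by_cases hx : i = (0:ℤ) <;> simp [hx],
   fun x => by obtain ⟨a, i, j⟩ := x; by_cases hx : i = (0:ℤ) <;> simp [hx]⟩

@[simp] lemma colShift_apply (x : Zc B) :
    colShift x = if x.2.1 = 0 then (x.1, (x.2.1, x.2.2 - 1)) else x := rfl

@[simp] lemma colShift_inv_apply (x : Zc B) :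
    colShift⁻¹ x = if x.2.1 = 0 then (x.1, (x.2.1, x.2.2 + 1)) else x := rfl

/-- big permutation encoding a whole sequence columnwise -/
def bigG (A : ℤ → Equiv.Perm B) : Equiv.Perm (Zc B) := by
  classical
  exact ⟨fun x => if 0 ≤ x.2.2 then (A x.2.1 x.1, x.2) else x,
   fun x => if 0 ≤ x.2.2 then ((A x.2.1).symm x.1, x.2) else x,
   fun x => by obtain ⟨a, i, j⟩ := x; by_cases hx : (0:ℤ) ≤ j <;> simp [hx],
   fun x => by obtain ⟨a, i, j⟩ := x; by_cases hx : (0:ℤ) ≤ j <;> simp [hx]⟩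

@[simp] lemma bigG_apply (A : ℤ → Equiv.Perm B) (x : Zc B) :
    bigG A x = if 0 ≤ x.2.2 then (A x.2.1 x.1, x.2) else x := rfl

@[simp] lemma bigG_inv_apply (A : ℤ → Equiv.Perm B) (x : Zc B) :
    (bigG A)⁻¹ x = if 0 ≤ x.2.2 then ((A x.2.1).symm x.1, x.2) else x := rfl

/-- THE KEY IDENTITY (Galvin's trick) -/
lemma key_identity (A : ℤ → Equiv.Perm B) (n : ℕ) :
    (shiftR ^ n)⁻¹ * bigG A * shiftR ^ n * colShift *
      (shiftR ^ n)⁻¹ * (bigG A)⁻¹ * shiftR ^ n * colShift⁻¹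
    = cellPerm ((A n)⁻¹) := by
  apply Equiv.ext
  rintro ⟨b, i, j⟩
  simp only [Equiv.Perm.mul_apply, colShift_inv_apply, colShift_apply, bigG_apply,
    bigG_inv_apply, cellPerm_apply, shiftR_pow_apply, shiftR_pow_inv_apply]
  by_cases hi : i = 0
  · subst hi
    by_cases hj : 0 ≤ j
    · have h1 : (0:ℤ) ≤ j + 1 := by omega
      have h2 : ¬ ((0:ℤ), j) = c₀ := by simp only [c₀, Prod.ext_iff]; push_neg; intro _; omega
      have h3 : ¬ j = -1 := by omega
      simp [hj, h1, h2, h3]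
    · by_cases hj2 : j = -1
      · subst hj2
        simp [c₀, Equiv.Perm.inv_def]
      · have h1 : ¬ (0:ℤ) ≤ j + 1 := by omega
        have h2 : ¬ ((0:ℤ), j) = c₀ := by simp only [c₀, Prod.ext_iff]; push_neg; intro _; omega
        simp [hj, h1, h2, hj2]
  · have h2 : ¬ ((i:ℤ), j) = c₀ := by
      simp only [c₀, Prod.ext_iff]; push_neg; intro h; exact absurd h hi
    by_cases hj : 0 ≤ j <;> simp [hi, hj, h2]
-- fiber-matching permutation
lemma partPerm {Y : Type u} {ι : Type*} (p q : Y → ι)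
    (h : ∀ i, #{x | p x = i} = #{x | q x = i}) :
    ∃ g : Equiv.Perm Y, ∀ x, q (g x) = p x := by
  have e : ∀ i, {x // p x = i} ≃ {x // q x = i} := fun i =>
    Classical.choice (Cardinal.eq.1 (h i))
  exact ⟨Equiv.ofFiberEquiv e, fun x => Equiv.ofFiberEquiv_map e x⟩

/-- A set of cardinality `t + u` splits into pieces of cardinality `t` and `u`. -/
lemma exists_subset_card {Y : Type u} (s : Set Y) (c d : Cardinal.{u})
    (h : #s = c + d) : ∃ v : Set Y, v ⊆ s ∧ #v = c ∧ #↥(s \ v) = d := by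
  have h2 : #s = #(c.out ⊕ d.out) := by
    rw [h]; rw [← Cardinal.add_def, Cardinal.mk_out, Cardinal.mk_out]
  obtain ⟨e⟩ := Cardinal.eq.1 h2
  set R : Set (c.out ⊕ d.out) := Set.range Sum.inl with hR
  refine ⟨Subtype.val '' (e ⁻¹' R), ?_, ?_, ?_⟩
  · rintro x ⟨y, _, rfl⟩; exact y.2
  · rw [Cardinal.mk_image_eq Subtype.val_injective]
    have : #(e ⁻¹' R) = #R := by
      apply Cardinal.mk_preimage_of_injective_of_subset_range _ _ e.injective
      rw [Equiv.range_eq_univ]; exact subset_univ _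
    rw [this, hR]
    rw [Cardinal.mk_range_eq _ Sum.inl_injective, Cardinal.mk_out]
  · have hset : s \ (Subtype.val '' (e ⁻¹' R)) = Subtype.val '' (e ⁻¹' R)ᶜ := by
      ext x
      constructor
      · rintro ⟨hxs, hx⟩
        exact ⟨⟨x, hxs⟩, fun hc => hx ⟨⟨x, hxs⟩, hc, rfl⟩, rfl⟩
      · rintro ⟨y, hy, rfl⟩
        exact ⟨y.2, fun ⟨z, hz, hzy⟩ => hy (by rwa [Subtype.val_injective hzy] at hz)⟩
    rw [hset, Cardinal.mk_image_eq Subtype.val_injective]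
    have : (e ⁻¹' R)ᶜ = e ⁻¹' Rᶜ := by simp [preimage_compl]
    rw [this]
    have : #(e ⁻¹' Rᶜ) = #(Rᶜ : Set _) := by
      apply Cardinal.mk_preimage_of_injective_of_subset_range _ _ e.injective
      rw [Equiv.range_eq_univ]; exact subset_univ _
    rw [this, hR, Set.compl_range_inl, Cardinal.mk_range_eq _ Sum.inr_injective,
      Cardinal.mk_out]

/-- decompose a set-preserving permutation into (fixes s pointwise) * (supported on s) -/
lemma decomp_of_preserves (s : Set Y) (g : Equiv.Perm Y)
    (hg : ∀ x, g x ∈ s ↔ x ∈ s) :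
    ∃ uu vv : Equiv.Perm Y, (∀ x ∈ s, uu x = x) ∧ (∀ x ∉ s, vv x = x) ∧ g = uu * vv := by
  classical
  have hg' : ∀ x, g.symm x ∈ s ↔ x ∈ s := by
    intro x
    conv_rhs => rw [show x = g (g.symm x) from (g.apply_symm_apply x).symm]
    rw [hg]
  let vv : Equiv.Perm Y :=
    ⟨fun x => if x ∈ s then g x else x, fun x => if x ∈ s then g.symm x else x,
      fun x => by
        by_cases hx : x ∈ s
        · simp only [hx, if_pos, (hg x).2 hx, Equiv.symm_apply_apply]
        · simp [hx],
      fun x => by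
        by_cases hx : x ∈ s
        · simp only [hx, if_pos, (hg' x).2 hx, Equiv.apply_symm_apply]
        · simp [hx]⟩
  refine ⟨g * vv⁻¹, vv, fun x hx => ?_, fun x hx => ?_, by group⟩
  · have hvx : vv⁻¹ x = g.symm x := by
      have : vv (g.symm x) = x := by
        simp only [vv, Equiv.coe_fn_mk, (hg' x).2 hx, if_pos, Equiv.apply_symm_apply]
      conv_lhs => rw [← this]
      rw [Equiv.Perm.inv_def, Equiv.symm_apply_apply]
    rw [Equiv.Perm.mul_apply, hvx, Equiv.apply_symm_apply]
  · simp only [vv, Equiv.coe_fn_mk, hx, if_neg, if_false]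
-- appended to t4 content for testing
section GalvinStep
variable {B : Type u}

lemma pow_mem_W (W : ℕ → Set (Equiv.Perm (Zc B)))
    (hone : (1 : Equiv.Perm (Zc B)) ∈ W 0)
    (hmul : ∀ {a b : ℕ} {f g : Equiv.Perm (Zc B)}, f ∈ W a → g ∈ W b → f * g ∈ W (a + b))
    {f : Equiv.Perm (Zc B)} {m : ℕ} (hf : f ∈ W m) (k : ℕ) : f ^ k ∈ W (k * m) := by
  induction k with
  | zero => simpa using hone
  | succ i ih =>
    have := hmul ih hf
    rw [← pow_succ] at this
    have he : i * m + m = (i+1) * m := by ring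
    rwa [he] at this

lemma galvin_step (W : ℕ → Set (Equiv.Perm (Zc B)))
    (hmono : ∀ {a b : ℕ}, a ≤ b → W a ⊆ W b)
    (hone : (1 : Equiv.Perm (Zc B)) ∈ W 0)
    (hmul : ∀ {a b : ℕ} {f g : Equiv.Perm (Zc B)}, f ∈ W a → g ∈ W b → f * g ∈ W (a + b))
    (hinv : ∀ {a : ℕ} {f : Equiv.Perm (Zc B)}, f ∈ W a → f⁻¹ ∈ W a)
    (hcov : ∀ f : Equiv.Perm (Zc B), ∃ n, f ∈ W n) :
    ∃ N : ℕ, ∀ h : Equiv.Perm B, cellPerm h ∈ W N := by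
  classical
  by_contra hc
  push_neg at hc
  choose H hH using hc
  set φ : ℕ → ℕ := fun m => (4*m+4)*m with hφ
  set A : ℤ → Equiv.Perm B := fun i => if 1 ≤ i then (H (φ i.toNat))⁻¹ else 1 with hA
  obtain ⟨mG, hmG⟩ := hcov (bigG A)
  obtain ⟨mr, hmr⟩ := hcov (shiftR)
  obtain ⟨mc, hmc⟩ := hcov (colShift)
  set M : ℕ := max (max mG mr) (max mc 1) with hM
  have hM1 : 1 ≤ M := le_trans (le_max_right mc 1) (le_max_right _ _)
  -- each generator is in W M
  have hG' : bigG A ∈ W M := hmono (le_trans (le_max_left mG mr) (le_max_left _ _)) hmG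
  have hr' : shiftR ∈ W M := hmono (le_trans (le_max_right mG mr) (le_max_left _ _)) hmr
  have hc' : colShift ∈ W M := hmono (le_trans (le_max_left mc 1) (le_max_right _ _)) hmc
  have hrp : (shiftR : Equiv.Perm (Zc B)) ^ M ∈ W (M * M) := pow_mem_W W hone @hmul hr' M
  have hrpi : ((shiftR : Equiv.Perm (Zc B)) ^ M)⁻¹ ∈ W (M * M) := hinv hrp
  -- the word
  have hword : (shiftR ^ M)⁻¹ * bigG A * shiftR ^ M * colShift *
      (shiftR ^ M)⁻¹ * (bigG A)⁻¹ * shiftR ^ M * colShift⁻¹ ∈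
      W (M*M + M + M*M + M + M*M + M + M*M + M) := by
    exact hmul (hmul (hmul (hmul (hmul (hmul (hmul hrpi hG') hrp) hc') hrpi) (hinv hG')) hrp)
      (hinv hc')
  have hbound : M*M + M + M*M + M + M*M + M + M*M + M ≤ φ M := by
    simp only [hφ]; nlinarith
  have hword' := hmono hbound hword
  rw [key_identity A M] at hword'
  have hAM : (A (M : ℤ))⁻¹ = H (φ M) := by
    rw [hA]
    simp only []
    rw [if_pos (by exact_mod_cast hM1)]
    simp [Int.toNat_natCast]
  rw [hAM] at hword'
  exact hH (φ M) hword'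

end GalvinStep
section Sides
open scoped Classical
variable {B : Type u}

def sideIdx (B₁ : Set B) (x : Zc B) : Fin 4 :=
  if x.2 = c₀ then (if x.1 ∈ B₁ then 0 else 1) else (if 0 ≤ x.2.1 then 2 else 3)

def sideSet (B₁ : Set B) (i : Fin 4) : Set (Zc B) := {x | sideIdx B₁ x = i}

variable (B₁ : Set B)

lemma sideIdx_eq_zero_iff (x : Zc B) :
    sideIdx B₁ x = 0 ↔ x.2 = c₀ ∧ x.1 ∈ B₁ := by
  unfold sideIdx; split_ifs with h1 h2 h3 <;> simp_all <;> decide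

lemma sideIdx_eq_one_iff (x : Zc B) :
    sideIdx B₁ x = 1 ↔ x.2 = c₀ ∧ x.1 ∉ B₁ := by
  unfold sideIdx; split_ifs with h1 h2 h3 <;> simp_all <;> decide

lemma sideIdx_eq_two_iff (x : Zc B) :
    sideIdx B₁ x = 2 ↔ x.2 ≠ c₀ ∧ 0 ≤ x.2.1 := by
  unfold sideIdx; split_ifs with h1 h2 h3 <;> simp_all <;> decide

lemma sideIdx_eq_three_iff (x : Zc B) :
    sideIdx B₁ x = 3 ↔ x.2 ≠ c₀ ∧ ¬ (0 ≤ x.2.1) := by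
  unfold sideIdx; split_ifs with h1 h2 h3 <;> simp_all <;> decide

lemma mem_sigma_iff (x : Zc B) :
    x.2 = c₀ ↔ (sideIdx B₁ x = 0 ∨ sideIdx B₁ x = 1) := by
  rw [sideIdx_eq_zero_iff, sideIdx_eq_one_iff]
  by_cases h : x.1 ∈ B₁ <;> by_cases h2 : x.2 = c₀ <;> simp [h, h2]

lemma sideSet_disjoint {i j : Fin 4} (hij : i ≠ j) :
    Disjoint (sideSet B₁ i) (sideSet B₁ j) := by
  rw [Set.disjoint_left]
  intro x hx hy
  exact hij (hx.symm.trans hy)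

-- cardinalities
variable [Infinite B]

lemma mk_side0 (h1 : #B₁ = #B) : #(sideSet B₁ 0) = #B := by
  rw [← h1]
  apply Cardinal.mk_congr
  refine ⟨fun x => ⟨x.1.1, ((sideIdx_eq_zero_iff B₁ x.1).1 x.2).2⟩,
    fun b => ⟨(b.1, c₀), (sideIdx_eq_zero_iff B₁ _).2 ⟨rfl, b.2⟩⟩, fun x => ?_, fun b => rfl⟩
  obtain ⟨⟨a, cc⟩, hx⟩ := x
  obtain ⟨hc, _⟩ := (sideIdx_eq_zero_iff B₁ _).1 hx
  simp only at hc
  subst hc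
  rfl

lemma mk_side1 (h2 : #(↥B₁ᶜ) = #B) : #(sideSet B₁ 1) = #B := by
  rw [← h2]
  apply Cardinal.mk_congr
  refine ⟨fun x => ⟨x.1.1, ((sideIdx_eq_one_iff B₁ x.1).1 x.2).2⟩,
    fun b => ⟨(b.1, c₀), (sideIdx_eq_one_iff B₁ _).2 ⟨rfl, b.2⟩⟩, fun x => ?_, fun b => rfl⟩
  obtain ⟨⟨a, cc⟩, hx⟩ := x
  obtain ⟨hc, _⟩ := (sideIdx_eq_one_iff B₁ _).1 hx
  simp only at hc
  subst hc
  rfl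

end Sides
section Sides2
open scoped Classical
variable {B : Type u} [Infinite B] (B₁ : Set B)

def CS2 : Set (ℤ × ℤ) := {cc | cc ≠ c₀ ∧ 0 ≤ cc.1}
def CS3 : Set (ℤ × ℤ) := {cc | cc ≠ c₀ ∧ ¬ (0 ≤ cc.1)}

instance : Infinite ↥CS2 := by
  apply Infinite.of_injective (fun n : ℕ => (⟨((n:ℤ), 0), by
    constructor
    · simp only [c₀, ne_eq, Prod.ext_iff]; push_neg; intro _; omega
    · simp⟩ : ↥CS2))
  intro m n hmn
  simp only [Subtype.mk.injEq, Subtype.ext_iff, Prod.ext_iff] at hmn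
  exact_mod_cast hmn.1

instance : Infinite ↥CS3 := by
  apply Infinite.of_injective (fun n : ℕ => (⟨(-(n:ℤ)-1, 0), by
    constructor
    · simp only [c₀, ne_eq, Prod.ext_iff]; push_neg; intro _; omega
    · simp; omega⟩ : ↥CS3))
  intro m n hmn
  simp only [Subtype.mk.injEq, Subtype.ext_iff, Prod.ext_iff] at hmn
  omega

lemma mk_prod_aleph0 (S : Set (ℤ × ℤ)) [Infinite ↥S] : #(B × ↥S) = #B := by
  rw [Cardinal.mk_prod]
  have hS : #(↥S) = ℵ₀ := Cardinal.mk_eq_aleph0 _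
  rw [hS]
  simp only [Cardinal.lift_aleph0, Cardinal.lift_id']
  rw [Cardinal.mul_eq_max (Cardinal.aleph0_le_mk B) le_rfl]
  exact max_eq_left (Cardinal.aleph0_le_mk B)

lemma mk_side2 : #(sideSet B₁ 2) = #B := by
  rw [← mk_prod_aleph0 (B := B) CS2]
  apply Cardinal.mk_congr
  refine ⟨fun x => (x.1.1, ⟨x.1.2, (sideIdx_eq_two_iff B₁ x.1).1 x.2⟩),
    fun p => ⟨(p.1, p.2.1), (sideIdx_eq_two_iff B₁ _).2 p.2.2⟩, fun x => rfl, fun p => rfl⟩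

lemma mk_side3 : #(sideSet B₁ 3) = #B := by
  rw [← mk_prod_aleph0 (B := B) CS3]
  apply Cardinal.mk_congr
  refine ⟨fun x => (x.1.1, ⟨x.1.2, (sideIdx_eq_three_iff B₁ x.1).1 x.2⟩),
    fun p => ⟨(p.1, p.2.1), (sideIdx_eq_three_iff B₁ _).2 p.2.2⟩, fun x => rfl, fun p => rfl⟩

end Sides2
section CellExtract
open scoped Classical
variable {B : Type u}

lemma apply_mem_of_fixes_compl {Y : Type u} (s : Set Y) (p : Equiv.Perm Y)
    (hp : ∀ x ∉ s, p x = x) : ∀ x, p x ∈ s ↔ x ∈ s := by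
  intro x
  constructor
  · intro hpx
    by_contra hx
    rw [hp x hx] at hpx
    exact hx hpx
  · intro hx
    by_contra hpx
    have := hp (p x) hpx
    have hxx := p.injective this
    rw [← hxx] at hx
    exact hpx hx

lemma cell_of_fixes (p : Equiv.Perm (Zc B)) (hp : ∀ x : Zc B, x.2 ≠ c₀ → p x = x) :
    ∃ h : Equiv.Perm B, p = cellPerm h := by
  have hmem : ∀ x : Zc B, p x ∈ {y : Zc B | y.2 = c₀} ↔ x ∈ {y : Zc B | y.2 = c₀} :=
    apply_mem_of_fixes_compl _ p (fun x hx => hp x hx)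
  have hb : ∀ b : B, (p (b, c₀)).2 = c₀ := fun b => (hmem (b, c₀)).2 rfl
  have hb' : ∀ b : B, (p.symm (b, c₀)).2 = c₀ := by
    intro b
    have := hmem (p.symm (b, c₀))
    rw [Equiv.apply_symm_apply] at this
    exact this.1 rfl
  refine ⟨⟨fun b => (p (b, c₀)).1, fun b => (p.symm (b, c₀)).1, fun b => ?_, fun b => ?_⟩, ?_⟩
  · show (p.symm ((p (b, c₀)).1, c₀)).1 = b
    have : ((p (b, c₀)).1, c₀) = p (b, c₀) := by
      rw [Prod.ext_iff]; exact ⟨rfl, (hb b).symm⟩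
    rw [this, Equiv.symm_apply_apply]
  · show (p ((p.symm (b, c₀)).1, c₀)).1 = b
    have : ((p.symm (b, c₀)).1, c₀) = p.symm (b, c₀) := by
      rw [Prod.ext_iff]; exact ⟨rfl, (hb' b).symm⟩
    rw [this, Equiv.apply_symm_apply]
  · apply Equiv.ext
    rintro ⟨b, cc⟩
    by_cases hc : cc = c₀
    · subst hc
      have hcc : ((b, c₀) : Zc B).2 = c₀ := rfl
      rw [cellPerm_apply, if_pos hcc]
      dsimp only
      rw [Prod.ext_iff]
      exact ⟨rfl, hb b⟩
    · rw [hp (b, cc) hc]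
      simp [hc]

variable (B₁ : Set B) [Infinite B]

lemma sigma_eq_union : {x : Zc B | x.2 = c₀} = sideSet B₁ 0 ∪ sideSet B₁ 1 := by
  ext x
  exact (mem_sigma_iff B₁ x)

lemma sigma_compl_eq_union : {x : Zc B | x.2 = c₀}ᶜ = sideSet B₁ 2 ∪ sideSet B₁ 3 := by
  ext x
  simp only [Set.mem_compl_iff, Set.mem_setOf_eq, Set.mem_union]
  rw [mem_sigma_iff B₁ x]
  have h4 : ∀ i : Fin 4, i = 0 ∨ i = 1 ∨ i = 2 ∨ i = 3 := by decide
  rcases h4 (sideIdx B₁ x) with h | h | h | h <;>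
    simp [sideSet, Set.mem_setOf_eq, h]

lemma mk_sigma (h1 : #B₁ = #B) (h2 : #(↥B₁ᶜ) = #B) : #({x : Zc B | x.2 = c₀}) = #B := by
  rw [sigma_eq_union B₁, Cardinal.mk_union_of_disjoint (sideSet_disjoint B₁ (by decide)),
    mk_side0 B₁ h1, mk_side1 B₁ h2, Cardinal.add_eq_self (Cardinal.aleph0_le_mk B)]

include B₁ in
lemma mk_sigma_compl : #(↥{x : Zc B | x.2 = c₀}ᶜ) = #B := by
  rw [sigma_compl_eq_union B₁, Cardinal.mk_union_of_disjoint (sideSet_disjoint B₁ (by decide)),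
    mk_side2 B₁, mk_side3 B₁, Cardinal.add_eq_self (Cardinal.aleph0_le_mk B)]

end CellExtract
section ClaimG
open scoped Classical
open Equiv

lemma disj_inter_diff {Y : Type u} (s t : Set Y) : Disjoint (s ∩ t) (s \ t) := by
  rw [Set.disjoint_left]
  rintro x ⟨_, hx⟩ ⟨_, hx'⟩
  exact hx' hx

lemma claimG {B : Type u} [Infinite B] (W : ℕ → Set (Equiv.Perm (Zc B)))
    (hmono : ∀ {a b : ℕ}, a ≤ b → W a ⊆ W b)
    (hmul : ∀ {a b : ℕ} {f g : Equiv.Perm (Zc B)}, f ∈ W a → g ∈ W b → f * g ∈ W (a + b))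
    (hinv : ∀ {a : ℕ} {f : Equiv.Perm (Zc B)}, f ∈ W a → f⁻¹ ∈ W a)
    (hcov : ∀ f : Equiv.Perm (Zc B), ∃ n, f ∈ W n)
    (nstar : ℕ) (hcell : ∀ h : Equiv.Perm B, cellPerm h ∈ W nstar) :
    ∃ N : ℕ, ∀ f : Equiv.Perm (Zc B), f ∈ W N := by
  classical
  set κ := #B with hκdef
  have hκ : ℵ₀ ≤ κ := Cardinal.aleph0_le_mk B
  obtain ⟨B₁, -, hB₁, hB₁c0⟩ := exists_subset_card (Set.univ : Set B) κ κ
    (by rw [Cardinal.mk_univ, Cardinal.add_eq_self hκ])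
  have hB₁c : #(↥B₁ᶜ) = κ := by rw [Set.compl_eq_univ_diff]; exact hB₁c0
  set Sg : Set (Zc B) := {x | x.2 = c₀} with hSgdef
  have hSig : #Sg = κ := mk_sigma B₁ hB₁ hB₁c
  have hSigc : #(↥Sgᶜ) = κ := mk_sigma_compl B₁
  have hks : ∀ i, #(sideSet B₁ i) = κ := by
    intro i
    fin_cases i
    · exact mk_side0 B₁ hB₁
    · exact mk_side1 B₁ hB₁c
    · exact mk_side2 B₁
    · exact mk_side3 B₁
  have hmemS : ∀ x : Zc B, x ∈ Sg ↔ (sideIdx B₁ x = 0 ∨ sideIdx B₁ x = 1) :=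
    fun x => mem_sigma_iff B₁ x
  -- the swap τ of Sg with its complement
  obtain ⟨τ, hτ0⟩ := partPerm (fun x => decide (x ∈ Sg)) (fun x => !decide (x ∈ Sg)) (by
    intro i
    have e1 : {x | decide (x ∈ Sg) = i} = (if i then Sg else Sgᶜ) := by
      cases i <;> ext x <;> simp
    have e2 : {x | (fun x => !decide (x ∈ Sg)) x = i} = (if i then Sgᶜ else Sg) := by
      cases i <;> ext x <;> simp
    rw [e1, e2]
    cases i <;> simp [hSig, hSigc])
  have hτ : ∀ x, τ x ∈ Sg ↔ x ∉ Sg := by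
    intro x
    have h := hτ0 x
    by_cases hx : x ∈ Sg <;> by_cases hy : τ x ∈ Sg <;> simp [hx, hy] at h ⊢
  obtain ⟨mτ, hmτ⟩ := hcov τ
  -- conjugation lemmas
  have supS_mem : ∀ vv : Equiv.Perm (Zc B), (∀ x ∉ Sg, vv x = x) → vv ∈ W nstar := by
    intro vv hvv
    obtain ⟨h, hh⟩ := cell_of_fixes vv (fun x hx => hvv x hx)
    rw [hh]; exact hcell h
  have fixS_mem : ∀ uu : Equiv.Perm (Zc B), (∀ x ∈ Sg, uu x = x) →
      uu ∈ W (mτ + nstar + mτ) := by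
    intro uu huu
    have hr : ∀ x ∉ Sg, (τ⁻¹ * uu * τ) x = x := by
      intro x hx
      simp only [Equiv.Perm.mul_apply]
      rw [huu (τ x) ((hτ x).2 hx), Equiv.Perm.inv_def, Equiv.symm_apply_apply]
    obtain ⟨h, hh⟩ := cell_of_fixes (τ⁻¹ * uu * τ) (fun x hx => hr x hx)
    have huueq : uu = τ * (τ⁻¹ * uu * τ) * τ⁻¹ := by group
    rw [huueq, hh]
    exact hmul (hmul hmτ (hcell h)) (hinv hmτ)
  -- the swap ρ' of side1 with side3
  set sw : Fin 4 → Fin 4 := fun i => if i = 1 then 3 else if i = 3 then 1 else i with hswdef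
  have hsw : ∀ a i : Fin 4, (sw a = i ↔ a = sw i) := by decide
  obtain ⟨ρ', hρ0⟩ := partPerm (sideIdx B₁) (fun x => sw (sideIdx B₁ x)) (by
    intro i
    have e2 : {x : Zc B | sw (sideIdx B₁ x) = i} = sideSet B₁ (sw i) := by
      ext x; exact hsw _ _
    have e1 : {x : Zc B | sideIdx B₁ x = i} = sideSet B₁ i := rfl
    rw [e1, e2, hks, hks])
  have hρ : ∀ x, sideIdx B₁ (ρ' x) = sw (sideIdx B₁ x) :=
    fun x => (hsw _ _).1 (hρ0 x)
  obtain ⟨mρ, hmρ⟩ := hcov ρ'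
  refine ⟨(mτ + nstar + mτ + nstar) + (mρ + ((mτ + nstar + mτ + nstar) +
    (mρ + (mτ + nstar + mτ + nstar)))), fun f => ?_⟩
  have h4 : ∀ i : Fin 4, i = 0 ∨ i = 1 ∨ i = 2 ∨ i = 3 := by decide
  have hmemSc : ∀ x : Zc B, x ∉ Sg ↔ (sideIdx B₁ x = 2 ∨ sideIdx B₁ x = 3) := by
    intro x
    rw [hmemS]
    rcases h4 (sideIdx B₁ x) with h | h | h | h <;> rw [h] <;> simp <;> decide
  have hsidemem : ∀ (i : Fin 4) (x : Zc B), x ∈ sideSet B₁ i ↔ sideIdx B₁ x = i :=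
    fun i x => Iff.rfl
  -- begin per-f work
  set X := f '' Sg with hXdef
  have hfX : ∀ x, f x ∈ X ↔ x ∈ Sg := fun x => f.injective.mem_set_image
  have hX : #X = κ := by rw [hXdef, Cardinal.mk_image_eq f.injective]; exact hSig
  have hXc : #(↥Xᶜ) = κ := by
    have hxc : Xᶜ = f '' Sgᶜ := by rw [hXdef, Set.image_compl_eq f.bijective]
    rw [hxc, Cardinal.mk_image_eq f.injective]; exact hSigc
  set a := #(Sg ∩ X : Set (Zc B)) with hadef
  set b := #(Sg \ X : Set (Zc B)) with hbdef
  set c := #(Sgᶜ ∩ X : Set (Zc B)) with hcdef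
  set d := #(Sgᶜ \ X : Set (Zc B)) with hddef
  have hab : a + b = κ := by
    rw [hadef, hbdef, ← Cardinal.mk_union_of_disjoint (disj_inter_diff Sg X),
      Set.inter_union_diff]
    exact hSig
  have hcd : c + d = κ := by
    rw [hcdef, hddef, ← Cardinal.mk_union_of_disjoint (disj_inter_diff Sgᶜ X),
      Set.inter_union_diff]
    exact hSigc
  have hac : a + c = κ := by
    have hdisj : Disjoint (Sg ∩ X) (Sgᶜ ∩ X) := by
      rw [Set.disjoint_left]; rintro x ⟨h1, -⟩ ⟨h2, -⟩; exact h2 h1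
    have hun : (Sg ∩ X) ∪ (Sgᶜ ∩ X) = X := by
      ext x; by_cases hx : x ∈ Sg <;> simp [hx]
    rw [hadef, hcdef, ← Cardinal.mk_union_of_disjoint hdisj, hun]
    exact hX
  have hbd : b + d = κ := by
    have hdisj : Disjoint (Sg \ X) (Sgᶜ \ X) := by
      rw [Set.disjoint_left]; rintro x ⟨h1, -⟩ ⟨h2, -⟩; exact h2 h1
    have hun : (Sg \ X) ∪ (Sgᶜ \ X) = Xᶜ := by
      ext x; by_cases hx : x ∈ Sg <;> simp [hx, Set.mem_diff]
    rw [hbdef, hddef, ← Cardinal.mk_union_of_disjoint hdisj, hun]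
    exact hXc
  have haκ : a ≤ κ := by rw [← hab]; exact self_le_add_right _ _
  have hbκ : b ≤ κ := by rw [← hab]; exact self_le_add_left _ _
  have hcκ : c ≤ κ := by rw [← hcd]; exact self_le_add_right _ _
  have hdκ : d ≤ κ := by rw [← hcd]; exact self_le_add_left _ _
  have dich : ∀ u v : Cardinal.{u}, u + v = κ → u ≠ κ → v = κ := by
    intro u v huv hu
    have huκ : u ≤ κ := by rw [← huv]; exact self_le_add_right _ _
    have hvκ : v ≤ κ := by rw [← huv]; exact self_le_add_left _ _
    rcases lt_or_eq_of_le hvκ with hv | hv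
    · exfalso
      have := Cardinal.add_lt_of_lt hκ (lt_of_le_of_ne huκ hu) hv
      rw [huv] at this; exact lt_irrefl _ this
    · exact hv
  set t0 : Cardinal.{u} := if a = κ then κ else a with ht0
  set t1 : Cardinal.{u} := if a = κ then κ else 0 with ht1
  set s0 : Cardinal.{u} := if b = κ then κ else b with hs0
  set s1 : Cardinal.{u} := if b = κ then κ else 0 with hs1
  set t2 : Cardinal.{u} := if c = κ then κ else c with ht2
  set t3 : Cardinal.{u} := if c = κ then κ else 0 with ht3
  set s2 : Cardinal.{u} := if d = κ then κ else d with hs2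
  set s3 : Cardinal.{u} := if d = κ then κ else 0 with hs3
  have ht0κ : t0 ≤ κ := by rw [ht0]; split_ifs; exacts [le_rfl, haκ]
  have ht1κ : t1 ≤ κ := by rw [ht1]; split_ifs; exacts [le_rfl, zero_le]
  have hs0κ : s0 ≤ κ := by rw [hs0]; split_ifs; exacts [le_rfl, hbκ]
  have hs1κ : s1 ≤ κ := by rw [hs1]; split_ifs; exacts [le_rfl, zero_le]
  have ht2κ : t2 ≤ κ := by rw [ht2]; split_ifs; exacts [le_rfl, hcκ]
  have ht3κ : t3 ≤ κ := by rw [ht3]; split_ifs; exacts [le_rfl, zero_le]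
  have hs2κ : s2 ≤ κ := by rw [hs2]; split_ifs; exacts [le_rfl, hdκ]
  have hs3κ : s3 ≤ κ := by rw [hs3]; split_ifs; exacts [le_rfl, zero_le]
  have hF1 : t0 + t1 = a := by
    rw [ht0, ht1]; by_cases ha : a = κ
    · rw [if_pos ha, if_pos ha, ha, Cardinal.add_eq_self hκ]
    · rw [if_neg ha, if_neg ha, add_zero]
  have hF2 : s0 + s1 = b := by
    rw [hs0, hs1]; by_cases hb : b = κ
    · rw [if_pos hb, if_pos hb, hb, Cardinal.add_eq_self hκ]
    · rw [if_neg hb, if_neg hb, add_zero]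
  have hF3 : t2 + t3 = c := by
    rw [ht2, ht3]; by_cases hc : c = κ
    · rw [if_pos hc, if_pos hc, hc, Cardinal.add_eq_self hκ]
    · rw [if_neg hc, if_neg hc, add_zero]
  have hF4 : s2 + s3 = d := by
    rw [hs2, hs3]; by_cases hd : d = κ
    · rw [if_pos hd, if_pos hd, hd, Cardinal.add_eq_self hκ]
    · rw [if_neg hd, if_neg hd, add_zero]
  have hG0 : t0 + s0 = κ := by
    by_cases ha : a = κ
    · rw [ht0, if_pos ha]; exact Cardinal.add_eq_left hκ hs0κ
    · rw [hs0, if_pos (dich a b hab ha), add_comm]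
      exact Cardinal.add_eq_left hκ ht0κ
  have hG1 : t1 + s1 = κ := by
    by_cases ha : a = κ
    · rw [ht1, if_pos ha]; exact Cardinal.add_eq_left hκ hs1κ
    · rw [hs1, if_pos (dich a b hab ha), add_comm]
      exact Cardinal.add_eq_left hκ ht1κ
  have hG2 : t2 + s2 = κ := by
    by_cases hc : c = κ
    · rw [ht2, if_pos hc]; exact Cardinal.add_eq_left hκ hs2κ
    · rw [hs2, if_pos (dich c d hcd hc), add_comm]
      exact Cardinal.add_eq_left hκ ht2κ
  have hG3 : t3 + s3 = κ := by
    by_cases hc : c = κ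
    · rw [ht3, if_pos hc]; exact Cardinal.add_eq_left hκ hs3κ
    · rw [hs3, if_pos (dich c d hcd hc), add_comm]
      exact Cardinal.add_eq_left hκ ht3κ
  have hA' : t0 + t3 = κ := by
    by_cases ha : a = κ
    · rw [ht0, if_pos ha]; exact Cardinal.add_eq_left hκ ht3κ
    · rw [ht3, if_pos (dich a c hac ha), add_comm]
      exact Cardinal.add_eq_left hκ ht0κ
  have hB' : s0 + s3 = κ := by
    by_cases hb : b = κ
    · rw [hs0, if_pos hb]; exact Cardinal.add_eq_left hκ hs3κ
    · rw [hs3, if_pos (dich b d hbd hb), add_comm]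
      exact Cardinal.add_eq_left hκ hs0κ
  have hC' : t1 + t2 = κ := by
    by_cases ha : a = κ
    · rw [ht1, if_pos ha]; exact Cardinal.add_eq_left hκ ht2κ
    · rw [ht2, if_pos (dich a c hac ha), add_comm]
      exact Cardinal.add_eq_left hκ ht1κ
  have hD' : s1 + s2 = κ := by
    by_cases hb : b = κ
    · rw [hs1, if_pos hb]; exact Cardinal.add_eq_left hκ hs2κ
    · rw [hs2, if_pos (dich b d hbd hb), add_comm]
      exact Cardinal.add_eq_left hκ hs1κ
  -- choose the subsets U_i of the four sides
  obtain ⟨U0, hU0sub, hU0card, hU0ccard⟩ := exists_subset_card (sideSet B₁ 0) t0 s0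
    (by rw [hks]; exact hG0.symm)
  obtain ⟨U1, hU1sub, hU1card, hU1ccard⟩ := exists_subset_card (sideSet B₁ 1) t1 s1
    (by rw [hks]; exact hG1.symm)
  obtain ⟨U2, hU2sub, hU2card, hU2ccard⟩ := exists_subset_card (sideSet B₁ 2) t2 s2
    (by rw [hks]; exact hG2.symm)
  obtain ⟨U3, hU3sub, hU3card, hU3ccard⟩ := exists_subset_card (sideSet B₁ 3) t3 s3
    (by rw [hks]; exact hG3.symm)
  set Uf : Fin 4 → Set (Zc B) :=
    fun k => if k = 0 then U0 else if k = 1 then U1 else if k = 2 then U2 else U3 with hUfdef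
  have hUf0 : Uf 0 = U0 := by simp [hUfdef]
  have hUf1 : Uf 1 = U1 := by simp [hUfdef]
  have hUf2 : Uf 2 = U2 := by simp [hUfdef]
  have hUf3 : Uf 3 = U3 := by simp [hUfdef]
  have hUsub : ∀ k, Uf k ⊆ sideSet B₁ k := by
    intro k
    rcases h4 k with h | h | h | h <;> subst h
    · rw [hUf0]; exact hU0sub
    · rw [hUf1]; exact hU1sub
    · rw [hUf2]; exact hU2sub
    · rw [hUf3]; exact hU3sub
  set T0 : Set (Zc B) := ⋃ k, Uf k with hT0def
  have hUside : ∀ (k : Fin 4) {x : Zc B}, x ∈ Uf k → sideIdx B₁ x = k :=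
    fun k {x} hx => hUsub k hx
  -- generic intersection/difference identities
  have hcap : ∀ i j : Fin 4, (sideSet B₁ i ∪ sideSet B₁ j) ∩ T0 = Uf i ∪ Uf j := by
    intro i j
    ext x
    simp only [Set.mem_inter_iff, Set.mem_union, hT0def, Set.mem_iUnion]
    constructor
    · rintro ⟨hs, k, hk⟩
      have hik := hUside k hk
      rcases hs with h | h
      · have : k = i := hik.symm.trans h
        subst this; exact Or.inl hk
      · have : k = j := hik.symm.trans h
        subst this; exact Or.inr hk
    · rintro (h | h)
      · exact ⟨Or.inl (hUsub i h), ⟨i, h⟩⟩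
      · exact ⟨Or.inr (hUsub j h), ⟨j, h⟩⟩
  have hdiff : ∀ i j : Fin 4, (sideSet B₁ i ∪ sideSet B₁ j) \ T0 =
      (sideSet B₁ i \ Uf i) ∪ (sideSet B₁ j \ Uf j) := by
    intro i j
    ext x
    simp only [Set.mem_diff, Set.mem_union, hT0def, Set.mem_iUnion, not_exists]
    constructor
    · rintro ⟨hs, ht⟩
      rcases hs with h | h
      · exact Or.inl ⟨h, ht i⟩
      · exact Or.inr ⟨h, ht j⟩
    · rintro (⟨hs, hn⟩ | ⟨hs, hn⟩)
      · refine ⟨Or.inl hs, fun k hk => ?_⟩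
        have : k = i := (hUside k hk).symm.trans hs
        subst this; exact hn hk
      · refine ⟨Or.inr hs, fun k hk => ?_⟩
        have : k = j := (hUside k hk).symm.trans hs
        subst this; exact hn hk
  have hSgu : Sg = sideSet B₁ 0 ∪ sideSet B₁ 1 := sigma_eq_union B₁
  have hSgcu : (Sgᶜ : Set (Zc B)) = sideSet B₁ 2 ∪ sideSet B₁ 3 := sigma_compl_eq_union B₁
  set T : Set (Zc B) := sideSet B₁ 0 ∪ sideSet B₁ 3 with hTdef
  have hTc : (Tᶜ : Set (Zc B)) = sideSet B₁ 1 ∪ sideSet B₁ 2 := by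
    ext x
    simp only [Set.mem_compl_iff, hTdef, Set.mem_union, hsidemem]
    rcases h4 (sideIdx B₁ x) with h | h | h | h <;> rw [h] <;> simp <;> decide
  -- disjointness of pieces
  have hdisjU : ∀ i j : Fin 4, i ≠ j → Disjoint (Uf i) (Uf j) := by
    intro i j hij
    exact Set.disjoint_of_subset (hUsub i) (hUsub j) (sideSet_disjoint B₁ hij)
  have hdisjD : ∀ i j : Fin 4, i ≠ j →
      Disjoint (sideSet B₁ i \ Uf i) (sideSet B₁ j \ Uf j) := by
    intro i j hij
    exact Set.disjoint_of_subset Set.diff_subset Set.diff_subset (sideSet_disjoint B₁ hij)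
  have hUfcards : #(Uf 0) = t0 ∧ #(Uf 1) = t1 ∧ #(Uf 2) = t2 ∧ #(Uf 3) = t3 := by
    rw [hUf0, hUf1, hUf2, hUf3]; exact ⟨hU0card, hU1card, hU2card, hU3card⟩
  have hUfccards : #(↥(sideSet B₁ 0 \ Uf 0)) = s0 ∧ #(↥(sideSet B₁ 1 \ Uf 1)) = s1 ∧
      #(↥(sideSet B₁ 2 \ Uf 2)) = s2 ∧ #(↥(sideSet B₁ 3 \ Uf 3)) = s3 := by
    rw [hUf0, hUf1, hUf2, hUf3]; exact ⟨hU0ccard, hU1ccard, hU2ccard, hU3ccard⟩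
  -- the first move g₀
  obtain ⟨g₀, hg₀⟩ := partPerm (fun x => (decide (x ∈ Sg), decide (x ∈ X)))
    (fun x => (decide (x ∈ Sg), decide (x ∈ T0))) (by
    rintro ⟨i, j⟩
    cases i <;> cases j
    · have e1 : {x : Zc B | (fun x => (decide (x ∈ Sg), decide (x ∈ X))) x = (false, false)}
          = Sgᶜ \ X := by ext x; simp [Set.mem_diff]
      have e2 : {x : Zc B | (fun x => (decide (x ∈ Sg), decide (x ∈ T0))) x = (false, false)}
          = Sgᶜ \ T0 := by ext x; simp [Set.mem_diff]
      have hR : #(↥(Sgᶜ \ T0)) = d := by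
        rw [hSgcu, hdiff 2 3, Cardinal.mk_union_of_disjoint (hdisjD 2 3 (by decide)),
          hUfccards.2.2.1, hUfccards.2.2.2, hF4]
      rw [e1, e2, hR]
    · have e1 : {x : Zc B | (fun x => (decide (x ∈ Sg), decide (x ∈ X))) x = (false, true)}
          = Sgᶜ ∩ X := by ext x; simp [Set.mem_inter_iff]
      have e2 : {x : Zc B | (fun x => (decide (x ∈ Sg), decide (x ∈ T0))) x = (false, true)}
          = Sgᶜ ∩ T0 := by ext x; simp [Set.mem_inter_iff]
      have hR : #(↥(Sgᶜ ∩ T0)) = c := by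
        rw [hSgcu, hcap 2 3, Cardinal.mk_union_of_disjoint (hdisjU 2 3 (by decide)),
          hUfcards.2.2.1, hUfcards.2.2.2, hF3]
      rw [e1, e2, hR]
    · have e1 : {x : Zc B | (fun x => (decide (x ∈ Sg), decide (x ∈ X))) x = (true, false)}
          = Sg \ X := by ext x; simp [Set.mem_diff]
      have e2 : {x : Zc B | (fun x => (decide (x ∈ Sg), decide (x ∈ T0))) x = (true, false)}
          = Sg \ T0 := by ext x; simp [Set.mem_diff]
      have hR : #(↥(Sg \ T0)) = b := by
        rw [hSgu, hdiff 0 1, Cardinal.mk_union_of_disjoint (hdisjD 0 1 (by decide)),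
          hUfccards.1, hUfccards.2.1, hF2]
      rw [e1, e2, hR]
    · have e1 : {x : Zc B | (fun x => (decide (x ∈ Sg), decide (x ∈ X))) x = (true, true)}
          = Sg ∩ X := by ext x; simp [Set.mem_inter_iff]
      have e2 : {x : Zc B | (fun x => (decide (x ∈ Sg), decide (x ∈ T0))) x = (true, true)}
          = Sg ∩ T0 := by ext x; simp [Set.mem_inter_iff]
      have hR : #(↥(Sg ∩ T0)) = a := by
        rw [hSgu, hcap 0 1, Cardinal.mk_union_of_disjoint (hdisjU 0 1 (by decide)),
          hUfcards.1, hUfcards.2.1, hF1]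
      rw [e1, e2, hR])
  have hg₀S : ∀ x, g₀ x ∈ Sg ↔ x ∈ Sg := by
    intro x
    have h := hg₀ x
    rw [Prod.ext_iff] at h
    simpa using h.1
  have hg₀T : ∀ x, g₀ x ∈ T0 ↔ x ∈ X := by
    intro x
    have h := hg₀ x
    rw [Prod.ext_iff] at h
    simpa using h.2
  -- X1 and the transported fibers
  set X1 := ρ' '' T0 with hX1def
  have hX1mem : ∀ y, ρ' y ∈ X1 ↔ y ∈ T0 := fun y => ρ'.injective.mem_set_image
  have hρS : ∀ z, ρ' z ∈ Sg ↔ z ∈ T := by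
    intro z
    rw [hmemS, hρ, hTdef]
    simp only [Set.mem_union, hsidemem]
    rcases h4 (sideIdx B₁ z) with h | h | h | h <;> rw [h] <;> simp [hswdef] <;> decide
  -- the second move g₁
  obtain ⟨g₁, hg₁⟩ := partPerm (fun x => (decide (x ∈ Sg), decide (x ∈ X1)))
    (fun x => (decide (x ∈ Sg), decide (x ∈ T))) (by
    rintro ⟨i, j⟩
    -- transport fibers through ρ'
    have etrans : ∀ ij : Bool × Bool,
        #{x : Zc B | (fun x => (decide (x ∈ Sg), decide (x ∈ X1))) x = ij} =
        #{y : Zc B | (fun y => (decide (y ∈ T), decide (y ∈ T0))) y = ij} := by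
      intro ij
      apply Cardinal.mk_congr
      apply Equiv.symm
      apply Equiv.subtypeEquiv ρ'
      intro y
      rw [Set.mem_setOf_eq, Set.mem_setOf_eq]
      simp only []
      rw [decide_eq_decide.2 (hρS y), decide_eq_decide.2 (hX1mem y)]
    rw [etrans ⟨i, j⟩]
    cases i <;> cases j
    · have e1 : {y : Zc B | (fun y => (decide (y ∈ T), decide (y ∈ T0))) y = (false, false)}
          = Tᶜ \ T0 := by ext x; simp [Set.mem_diff]
      have e2 : {x : Zc B | (fun x => (decide (x ∈ Sg), decide (x ∈ T))) x = (false, false)}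
          = Sgᶜ \ T := by ext x; simp [Set.mem_diff]
      have k4 : (Sgᶜ : Set (Zc B)) \ T = sideSet B₁ 2 := by
        ext x
        simp only [Set.mem_diff, Set.mem_compl_iff, hmemS x, hTdef, Set.mem_union, hsidemem]
        rcases h4 (sideIdx B₁ x) with h | h | h | h <;> rw [h] <;> simp <;> decide
      have hL : #(↥(Tᶜ \ T0)) = κ := by
        rw [hTc, hdiff 1 2, Cardinal.mk_union_of_disjoint (hdisjD 1 2 (by decide)),
          hUfccards.2.1, hUfccards.2.2.1, hD']
      rw [e1, e2, k4, hL, hks]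
    · have e1 : {y : Zc B | (fun y => (decide (y ∈ T), decide (y ∈ T0))) y = (false, true)}
          = Tᶜ ∩ T0 := by ext x; simp [Set.mem_inter_iff]
      have e2 : {x : Zc B | (fun x => (decide (x ∈ Sg), decide (x ∈ T))) x = (false, true)}
          = Sgᶜ ∩ T := by ext x; simp [Set.mem_inter_iff]
      have k3 : (Sgᶜ : Set (Zc B)) ∩ T = sideSet B₁ 3 := by
        ext x
        simp only [Set.mem_inter_iff, Set.mem_compl_iff, hmemS x, hTdef, Set.mem_union, hsidemem]
        rcases h4 (sideIdx B₁ x) with h | h | h | h <;> rw [h] <;> simp <;> decide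
      have hL : #(↥(Tᶜ ∩ T0)) = κ := by
        rw [hTc, hcap 1 2, Cardinal.mk_union_of_disjoint (hdisjU 1 2 (by decide)),
          hUfcards.2.1, hUfcards.2.2.1, hC']
      rw [e1, e2, k3, hL, hks]
    · have e1 : {y : Zc B | (fun y => (decide (y ∈ T), decide (y ∈ T0))) y = (true, false)}
          = T \ T0 := by ext x; simp [Set.mem_diff]
      have e2 : {x : Zc B | (fun x => (decide (x ∈ Sg), decide (x ∈ T))) x = (true, false)}
          = Sg \ T := by ext x; simp [Set.mem_diff]
      have k2 : Sg \ T = sideSet B₁ 1 := by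
        ext x
        simp only [Set.mem_diff, hmemS x, hTdef, Set.mem_union, hsidemem]
        rcases h4 (sideIdx B₁ x) with h | h | h | h <;> rw [h] <;> simp <;> decide
      have hL : #(↥(T \ T0)) = κ := by
        rw [hTdef, hdiff 0 3, Cardinal.mk_union_of_disjoint (hdisjD 0 3 (by decide)),
          hUfccards.1, hUfccards.2.2.2, hB']
      rw [e1, e2, k2, hL, hks]
    · have e1 : {y : Zc B | (fun y => (decide (y ∈ T), decide (y ∈ T0))) y = (true, true)}
          = T ∩ T0 := by ext x; simp [Set.mem_inter_iff]
      have e2 : {x : Zc B | (fun x => (decide (x ∈ Sg), decide (x ∈ T))) x = (true, true)}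
          = Sg ∩ T := by ext x; simp [Set.mem_inter_iff]
      have k1 : Sg ∩ T = sideSet B₁ 0 := by
        ext x
        simp only [Set.mem_inter_iff, hmemS x, hTdef, Set.mem_union, hsidemem]
        rcases h4 (sideIdx B₁ x) with h | h | h | h <;> rw [h] <;> simp <;> decide
      have hL : #(↥(T ∩ T0)) = κ := by
        rw [hTdef, hcap 0 3, Cardinal.mk_union_of_disjoint (hdisjU 0 3 (by decide)),
          hUfcards.1, hUfcards.2.2.2, hA']
      rw [e1, e2, k1, hL, hks])
  have hg₁S : ∀ x, g₁ x ∈ Sg ↔ x ∈ Sg := by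
    intro x
    have h := hg₁ x
    rw [Prod.ext_iff] at h
    simpa using h.1
  have hg₁T : ∀ x, g₁ x ∈ T ↔ x ∈ X1 := by
    intro x
    have h := hg₁ x
    rw [Prod.ext_iff] at h
    simpa using h.2
  -- the chase: w * f preserves Sg
  have hpres : ∀ x, (ρ' * g₁ * ρ' * g₀ * f) x ∈ Sg ↔ x ∈ Sg := by
    intro x
    simp only [Equiv.Perm.mul_apply]
    rw [hρS, hg₁T, hX1mem, hg₀T, hfX]
  obtain ⟨uu, vv, huu, hvv, hwf⟩ := decomp_of_preserves Sg _ hpres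
  obtain ⟨u0, v0, hu0, hv0, hg0d⟩ := decomp_of_preserves Sg g₀ hg₀S
  obtain ⟨u1, v1, hu1, hv1, hg1d⟩ := decomp_of_preserves Sg g₁ hg₁S
  have mem_g0 : g₀ ∈ W (mτ + nstar + mτ + nstar) := by
    rw [hg0d]; exact hmul (fixS_mem u0 hu0) (supS_mem v0 hv0)
  have mem_g1 : g₁ ∈ W (mτ + nstar + mτ + nstar) := by
    rw [hg1d]; exact hmul (fixS_mem u1 hu1) (supS_mem v1 hv1)
  have mem_wf : uu * vv ∈ W (mτ + nstar + mτ + nstar) :=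
    hmul (fixS_mem uu huu) (supS_mem vv hvv)
  have hfeq : f = g₀⁻¹ * (ρ'⁻¹ * (g₁⁻¹ * (ρ'⁻¹ * (uu * vv)))) := by
    rw [← hwf]; group
  rw [hfeq]
  exact hmul (hinv mem_g0) (hmul (hinv hmρ) (hmul (hinv mem_g1) (hmul (hinv hmρ) mem_wf)))



end ClaimG
section Main2
open Equiv

lemma main2 {B : Type u} [Infinite B] (W : ℕ → Set (Equiv.Perm (Zc B)))
    (hmono : ∀ {a b : ℕ}, a ≤ b → W a ⊆ W b)
    (hone : (1 : Equiv.Perm (Zc B)) ∈ W 0)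
    (hmul : ∀ {a b : ℕ} {f g : Equiv.Perm (Zc B)}, f ∈ W a → g ∈ W b → f * g ∈ W (a + b))
    (hinv : ∀ {a : ℕ} {f : Equiv.Perm (Zc B)}, f ∈ W a → f⁻¹ ∈ W a)
    (hcov : ∀ f : Equiv.Perm (Zc B), ∃ n, f ∈ W n) :
    ∃ N : ℕ, ∀ f : Equiv.Perm (Zc B), f ∈ W N := by
  obtain ⟨nstar, hcell⟩ := galvin_step W @hmono hone @hmul @hinv hcov
  exact claimG W @hmono @hmul @hinv hcov nstar hcell

end Main2

section Final

/-- transport along an equivalence -/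
lemma permCongr_mul {α β : Type u} (e : α ≃ β) (p q : Equiv.Perm β) :
    (e.permCongr.symm) (p * q) = (e.permCongr.symm p) * (e.permCongr.symm q) := by
  apply Equiv.ext
  intro x
  simp [Equiv.permCongr_apply, Equiv.Perm.mul_apply]

lemma permCongr_inv {α β : Type u} (e : α ≃ β) (p : Equiv.Perm β) :
    (e.permCongr.symm) p⁻¹ = (e.permCongr.symm p)⁻¹ := by
  apply Equiv.ext
  intro x
  simp [Equiv.permCongr_apply]
  rfl

lemma permCongr_one {α β : Type u} (e : α ≃ β) :
    (e.permCongr.symm) 1 = 1 := by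
  apply Equiv.ext
  intro x
  simp [Equiv.permCongr_apply]

end Final
theorem stmt7 {Ω : Type*} [Infinite Ω] (U : Set (Equiv.Perm Ω))
    (hU : Submonoid.closure U = ⊤) :
    ∃ n : ℕ, 0 < n ∧ ∀ f : Equiv.Perm Ω, ∃ l : List (Equiv.Perm Ω),
      l.length ≤ n ∧ (∀ x ∈ l, x ∈ U) ∧ l.prod = f := by
  classical
  set V : ℕ → Set (Equiv.Perm Ω) := fun n =>
    {f | ∃ l : List (Equiv.Perm Ω), l.length ≤ n ∧ (∀ x ∈ l, x ∈ U) ∧ l.prod = f} with hVdef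
  set W : ℕ → Set (Equiv.Perm Ω) := fun n => V n ∩ {f | f⁻¹ ∈ V n} with hWdef
  have hVmono : ∀ {a b : ℕ}, a ≤ b → V a ⊆ V b := by
    intro a b hab f ⟨l, h1, h2, h3⟩
    exact ⟨l, h1.trans hab, h2, h3⟩
  have hVmul : ∀ {a b : ℕ} {f g : Equiv.Perm Ω}, f ∈ V a → g ∈ V b → f * g ∈ V (a + b) := by
    rintro a b f g ⟨l1, h1, h2, h3⟩ ⟨l4, h4, h5, h6⟩
    refine ⟨l1 ++ l4, ?_, ?_, ?_⟩
    · rw [List.length_append]; omega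
    · intro x hx; rcases List.mem_append.1 hx with h | h
      exacts [h2 x h, h5 x h]
    · rw [List.prod_append, h3, h6]
  have hVcov : ∀ f : Equiv.Perm Ω, ∃ n, f ∈ V n := by
    intro f
    have hf : f ∈ Submonoid.closure U := by rw [hU]; trivial
    obtain ⟨l, hl, hp⟩ := Submonoid.exists_list_of_mem_closure hf
    exact ⟨l.length, l, le_rfl, hl, hp⟩
  have hWmono : ∀ {a b : ℕ}, a ≤ b → W a ⊆ W b := by
    intro a b hab f ⟨h1, h2⟩
    exact ⟨hVmono hab h1, hVmono hab h2⟩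
  have hWone : (1 : Equiv.Perm Ω) ∈ W 0 := by
    constructor
    · exact ⟨[], by simp, by simp, by simp⟩
    · show (1 : Equiv.Perm Ω)⁻¹ ∈ V 0
      rw [inv_one]
      exact ⟨[], by simp, by simp, by simp⟩
  have hWmul : ∀ {a b : ℕ} {f g : Equiv.Perm Ω}, f ∈ W a → g ∈ W b → f * g ∈ W (a + b) := by
    rintro a b f g ⟨h1, h2⟩ ⟨h3, h4⟩
    constructor
    · exact hVmul h1 h3
    · show (f * g)⁻¹ ∈ V (a + b)
      rw [mul_inv_rev, add_comm]
      exact hVmul h4 h2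
  have hWinv : ∀ {a : ℕ} {f : Equiv.Perm Ω}, f ∈ W a → f⁻¹ ∈ W a := by
    rintro a f ⟨h1, h2⟩
    refine ⟨h2, ?_⟩
    show f⁻¹⁻¹ ∈ V a
    rwa [inv_inv]
  have hWcov : ∀ f : Equiv.Perm Ω, ∃ n, f ∈ W n := by
    intro f
    obtain ⟨n1, h1⟩ := hVcov f
    obtain ⟨n2, h2⟩ := hVcov f⁻¹
    exact ⟨max n1 n2, hVmono (le_max_left _ _) h1, hVmono (le_max_right _ _) h2⟩
  -- transport to Ω × ℤ × ℤ
  have hcard : #(Zc Ω) = #Ω := by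
    show #(Ω × ℤ × ℤ) = #Ω
    rw [Cardinal.mk_prod]
    have hzz : #(ℤ × ℤ) = ℵ₀ := Cardinal.mk_eq_aleph0 _
    rw [hzz]
    simp only [Cardinal.lift_aleph0, Cardinal.lift_id']
    rw [Cardinal.mul_eq_max (Cardinal.aleph0_le_mk Ω) le_rfl]
    exact max_eq_left (Cardinal.aleph0_le_mk Ω)
  obtain ⟨e⟩ := Cardinal.eq.1 hcard.symm
  set W' : ℕ → Set (Equiv.Perm (Zc Ω)) := fun n => {g | e.permCongr.symm g ∈ W n} with hW'def
  have hW'mono : ∀ {a b : ℕ}, a ≤ b → W' a ⊆ W' b := fun hab g hg => hWmono hab hg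
  have hW'one : (1 : Equiv.Perm (Zc Ω)) ∈ W' 0 := by
    show e.permCongr.symm 1 ∈ W 0
    rw [permCongr_one]; exact hWone
  have hW'mul : ∀ {a b : ℕ} {f g : Equiv.Perm (Zc Ω)},
      f ∈ W' a → g ∈ W' b → f * g ∈ W' (a + b) := by
    intro a b f g hf hg
    show e.permCongr.symm (f * g) ∈ W (a + b)
    rw [permCongr_mul]
    exact hWmul hf hg
  have hW'inv : ∀ {a : ℕ} {f : Equiv.Perm (Zc Ω)}, f ∈ W' a → f⁻¹ ∈ W' a := by
    intro a f hf
    show e.permCongr.symm f⁻¹ ∈ W a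
    rw [permCongr_inv]
    exact hWinv hf
  have hW'cov : ∀ f : Equiv.Perm (Zc Ω), ∃ n, f ∈ W' n := fun f => hWcov _
  obtain ⟨N, hN⟩ := main2 W' @hW'mono hW'one @hW'mul @hW'inv hW'cov
  refine ⟨max N 1, by omega, fun f => ?_⟩
  have hf : f ∈ W N := by
    have h := hN (e.permCongr f)
    simp only [hW'def, Set.mem_setOf_eq, Equiv.symm_apply_apply] at h
    exact h
  obtain ⟨l, h1, h2, h3⟩ := hf.1
  exact ⟨l, h1.trans (le_max_left _ _), h2, h3⟩
end
end
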